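/- arXiv:0707.4596 — 4 statements merged into one kernel-verified Lean document; each statement's English description precedes it below -/
import Mathlib

section
/- Under the assumptions of the lattice-case uniform exact LDP (in particular Y is lattice-valued with span d, the law of X has a subcomponent with a density, Pr{sup_n Σ_{i=1}^n X_i = ∞} = 1, and condition (1.24) holds), for all sufficiently large x the random variable W(x) is lattice-valued with span d. -/
open MeasureTheory ProbabilityTheory Real Set Filter Asymptotics
open scoped ENNReal Topology

noncomputable section

/-- `N(x)`: the largest `n` such that all partial sums `X_1 + ⋯ + X_k`, `k ≤ n`, are `≤ x`
(interpreted via `sSup`; it equals `0` if `X_1 > x`). -/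
def NN {Ω : Type} (Xn : ℕ → Ω → ℝ) (x : ℝ) (ω : Ω) : ℕ :=
  sSup {n : ℕ | ∀ k ≤ n, ∑ i ∈ Finset.range k, Xn i ω ≤ x}

/-- `W(x) = Y_1 + ⋯ + Y_{N(x)}`, the renewal reward process. -/
def WW {Ω : Type} (Xn Yn : ℕ → Ω → ℝ) (x : ℝ) (ω : Ω) : ℝ :=
  ∑ i ∈ Finset.range (NN Xn x ω), Yn i ω

/-- `M_x(t) = E[e^{t W(x)}]`, as an extended-real valued integral. -/
def MgfW {Ω : Type} [MeasurableSpace Ω] (P : Measure Ω) (Xn Yn : ℕ → Ω → ℝ) (x t : ℝ) : ℝ≥0∞ :=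
  ∫⁻ ω, ENNReal.ofReal (Real.exp (t * WW Xn Yn x ω)) ∂P

/-- `𝓓_t = {s : E[e^{tY - sX}] ≤ 1}`. -/
def Dset {Ω : Type} [MeasurableSpace Ω] (P : Measure Ω) (X Y : Ω → ℝ) (t : ℝ) : Set ℝ :=
  {s : ℝ | ∫⁻ ω, ENNReal.ofReal (Real.exp (t * Y ω - s * X ω)) ∂P ≤ 1}

/-- `h(t) = inf 𝓓_t`. -/
def hfun {Ω : Type} [MeasurableSpace Ω] (P : Measure Ω) (X Y : Ω → ℝ) (t : ℝ) : ℝ :=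
  sInf (Dset P X Y t)

/-- `h*(ν) = sup_t (νt - h(t))`, the convex conjugate of `h`. -/
def hstar {Ω : Type} [MeasurableSpace Ω] (P : Measure Ω) (X Y : Ω → ℝ) (ν : ℝ) : ℝ :=
  ⨆ t : ℝ, (ν * t - hfun P X Y t)

/-- `β_X = limsup_{x → ∞} (1/x) log Pr{X > x}`, as an extended real number. -/
def betaX {Ω : Type} [MeasurableSpace Ω] (P : Measure Ω) (X : Ω → ℝ) : EReal :=
  Filter.limsup (fun x : ℝ => ((Real.log (P {ω | x < X ω}).toReal / x : ℝ) : EReal)) Filter.atTop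

/-- The (topological) support of a measure on `ℝ`. -/
def msupport (μ : Measure ℝ) : Set ℝ := {x | ∀ U ∈ nhds x, 0 < μ U}

/-- `B(X,t)` of the paper. -/
def Bfun {Ω : Type} [MeasurableSpace Ω] (P : Measure Ω) (X Y : Ω → ℝ)
    (Xn Yn : ℕ → Ω → ℝ) (g : ℝ → ℝ → ℝ) (t : ℝ) : ℝ :=
  (∫ x in Set.Ioi (0:ℝ), Real.exp (-(hfun P X Y t) * x) * (P {ω | x < X ω}).toReal) -
  (∫ x in Set.Iio (0:ℝ),
      (∫ u in Set.Ioo (0:ℝ) |x|,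
        g t x * (MgfW P Xn Yn u t).toReal * Real.exp (-(hfun P X Y t) * (x + u)))
    ∂(Measure.map X P))

/-- `φ(t) = B(X,t) / E[X e^{tY - h(t)X}]` of the paper. -/
def phifun {Ω : Type} [MeasurableSpace Ω] (P : Measure Ω) (X Y : Ω → ℝ)
    (Xn Yn : ℕ → Ω → ℝ) (g : ℝ → ℝ → ℝ) (t : ℝ) : ℝ :=
  Bfun P X Y Xn Yn g t / ∫ ω, X ω * Real.exp (t * Y ω - hfun P X Y t * X ω) ∂P

/-- A real random variable `ξ` is lattice valued with span `d`:
`d = max{t > 0 : Pr{ξ ∈ tℤ} = 1}`. -/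
def HasSpan {Ω : Type} [MeasurableSpace Ω] (P : Measure Ω) (ξ : Ω → ℝ) (d : ℝ) : Prop :=
  0 < d ∧ P {ω | ∃ m : ℤ, ξ ω = d * m} = 1 ∧
    ∀ t > (0:ℝ), P {ω | ∃ m : ℤ, ξ ω = t * m} = 1 → t ≤ d

namespace Lem43Aux


/-! ### Pure facts about the renewal functional -/

/-- partial sums of first coordinates -/
def ps (v : ℕ → ℝ × ℝ) (j : ℕ) : ℝ := ∑ i ∈ Finset.range j, (v i).1

/-- the set of admissible times -/
def SS (y : ℝ) (v : ℕ → ℝ × ℝ) : Set ℕ := {n : ℕ | ∀ j ≤ n, ps v j ≤ y}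

def nu (y : ℝ) (v : ℕ → ℝ × ℝ) : ℕ := sSup (SS y v)

def ww (y : ℝ) (v : ℕ → ℝ × ℝ) : ℝ := ∑ i ∈ Finset.range (nu y v), (v i).2

lemma SS_mono {y : ℝ} {v : ℕ → ℝ × ℝ} {m n : ℕ} (hmn : m ≤ n) (hn : n ∈ SS y v) :
    m ∈ SS y v := fun j hj => hn j (hj.trans hmn)

lemma nu_eq_of {y : ℝ} {v : ℕ → ℝ × ℝ} {n : ℕ} (hn : n ∈ SS y v) (hn1 : n + 1 ∉ SS y v) :
    nu y v = n := by
  have hub : ∀ m ∈ SS y v, m ≤ n := by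
    intro m hm
    by_contra h
    push_neg at h
    exact hn1 (SS_mono h hm)
  exact le_antisymm (csSup_le ⟨n, hn⟩ hub) (le_csSup ⟨n, hub⟩ hn)

lemma nu_eq_zero_iff {y : ℝ} {v : ℕ → ℝ × ℝ} :
    nu y v = 0 ↔ (1 ∉ SS y v) ∨ (∀ m, m ∈ SS y v) := by
  constructor
  · intro h
    by_cases h1 : 1 ∈ SS y v
    · right
      by_contra hall
      push_neg at hall
      obtain ⟨m0, hm0⟩ := hall
      have hbdd : BddAbove (SS y v) := by
        refine ⟨m0, fun m hm => ?_⟩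
        by_contra hmm
        push_neg at hmm
        exact hm0 (SS_mono hmm.le hm)
      have := le_csSup hbdd h1
      rw [nu] at h
      omega
    · exact Or.inl h1
  · rintro (h1 | hall)
    · by_cases h0 : 0 ∈ SS y v
      · exact nu_eq_of h0 (by simpa using h1)
      · have : SS y v = ∅ := by
          ext n
          simp only [Set.mem_empty_iff_false, iff_false]
          exact fun hn => h0 (SS_mono (Nat.zero_le n) hn)
        rw [nu, this, csSup_empty]
        rfl
    · have : ¬ BddAbove (SS y v) := by
        rintro ⟨b, hb⟩
        have := hb (hall (b + 1))
        omega
      rw [nu, csSup_of_not_bddAbove this, csSup_empty]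
      rfl

lemma nu_eq_succ_iff {y : ℝ} {v : ℕ → ℝ × ℝ} {n : ℕ} :
    nu y v = n + 1 ↔ (n + 1 ∈ SS y v ∧ n + 2 ∉ SS y v) := by
  constructor
  · intro h
    rcases Set.eq_empty_or_nonempty (SS y v) with he | hne
    · rw [nu, he, csSup_empty] at h
      exact absurd h (by simp)
    by_cases hbdd : BddAbove (SS y v)
    · have hmem := Nat.sSup_mem hne hbdd
      rw [nu] at h
      rw [h] at hmem
      refine ⟨hmem, fun hc => ?_⟩
      have := le_csSup hbdd hc
      omega
    · rw [nu, csSup_of_not_bddAbove hbdd, csSup_empty] at h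
      exact absurd h (by simp)
  · rintro ⟨h1, h2⟩
    exact nu_eq_of h1 (by simpa [Nat.add_assoc] using h2)

lemma ps_add (v : ℕ → ℝ × ℝ) (k m : ℕ) :
    ps v (k + m) = ps v k + ps (fun i => v (k + i)) m := by
  simpa [ps] using Finset.sum_range_add (fun i => (v i).1) k m

/-- Decomposition of the renewal functional at time `k`. -/
lemma nu_ww_shift {y : ℝ} {v : ℕ → ℝ × ℝ} {k : ℕ}
    (h1 : ∀ j ≤ k, ps v j ≤ y) (h2 : ∃ n, y < ps v n) :
    nu y v = k + nu (y - ps v k) (fun i => v (k + i)) ∧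
    ww y v = (∑ i ∈ Finset.range k, (v i).2) + ww (y - ps v k) (fun i => v (k + i)) ∧
    (∃ n, y - ps v k < ps (fun i => v (k + i)) n) := by
  set v' : ℕ → ℝ × ℝ := fun i => v (k + i) with hv'
  have hmem : ∀ m, (k + m ∈ SS y v) ↔ (m ∈ SS (y - ps v k) v') := by
    intro m
    constructor
    · intro h j hj
      have := h (k + j) (by omega)
      rw [ps_add] at this
      linarith
    · intro h j hj
      by_cases hjk : j ≤ k
      · exact h1 j hjk
      · push_neg at hjk
        obtain ⟨j', rfl⟩ : ∃ j', j = k + j' := ⟨j - k, by omega⟩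
        rw [ps_add]
        have := h j' (by omega)
        linarith
  obtain ⟨n0, hn0⟩ := h2
  have hn0' : n0 ∉ SS y v := fun h => absurd (h n0 le_rfl) (not_le.mpr hn0)
  have hkS : k ∈ SS y v := fun j hj => h1 j hj
  have hbdd : BddAbove (SS y v) := by
    refine ⟨n0, fun m hm => ?_⟩
    by_contra hmm
    push_neg at hmm
    exact hn0' (SS_mono hmm.le hm)
  have hM : nu y v ∈ SS y v := Nat.sSup_mem ⟨k, hkS⟩ hbdd
  have hM1 : nu y v + 1 ∉ SS y v := by
    intro h
    have := le_csSup hbdd h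
    rw [nu] at this
    omega
  have hkM : k ≤ nu y v := le_csSup hbdd hkS
  obtain ⟨m0, hm0⟩ : ∃ m0, nu y v = k + m0 := ⟨nu y v - k, by omega⟩
  have hm0' : m0 ∈ SS (y - ps v k) v' := (hmem m0).mp (hm0 ▸ hM)
  have hm01 : m0 + 1 ∉ SS (y - ps v k) v' := by
    intro h
    exact hM1 (by rw [hm0]; exact SS_mono (by omega) ((hmem (m0 + 1)).mpr h))
  have hnu' : nu (y - ps v k) v' = m0 := nu_eq_of hm0' hm01
  have hshift2 : ∃ n, y - ps v k < ps v' n := by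
    by_contra hcon
    push_neg at hcon
    apply hn0'
    have : ∀ m, m ∈ SS (y - ps v k) v' := fun m j hj => hcon j
    exact SS_mono (Nat.le_add_left n0 k) ((hmem n0).mpr (this n0))
  refine ⟨by rw [hm0, hnu'], ?_, hshift2⟩
  rw [ww, ww, hnu', hm0, Finset.sum_range_add]

/-! ### Measurability -/

lemma measurable_psj (j : ℕ) : Measurable (fun p : ℝ × (ℕ → ℝ × ℝ) => ps p.2 j) := by
  apply Finset.measurable_sum
  intro i _
  exact ((measurable_pi_apply i).comp measurable_snd).fst

lemma measurableSet_memSS (n : ℕ) :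
    MeasurableSet {p : ℝ × (ℕ → ℝ × ℝ) | n ∈ SS p.1 p.2} := by
  have : {p : ℝ × (ℕ → ℝ × ℝ) | n ∈ SS p.1 p.2} =
      ⋂ j ∈ Finset.range (n + 1), {p : ℝ × (ℕ → ℝ × ℝ) | ps p.2 j ≤ p.1} := by
    ext p
    simp only [Set.mem_setOf_eq, Set.mem_iInter, Finset.mem_range]
    constructor
    · intro h j hj
      exact h j (by omega)
    · intro h j hj
      exact h j (by omega)
  rw [this]
  exact MeasurableSet.biInter (Finset.range (n + 1)).countable_toSet
    (fun j _ => measurableSet_le (measurable_psj j) measurable_fst)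

lemma measurable_nu : Measurable (fun p : ℝ × (ℕ → ℝ × ℝ) => nu p.1 p.2) := by
  apply measurable_to_countable'
  intro n
  match n with
  | 0 =>
    have : (fun p : ℝ × (ℕ → ℝ × ℝ) => nu p.1 p.2) ⁻¹' {0} =
        {p : ℝ × (ℕ → ℝ × ℝ) | 1 ∈ SS p.1 p.2}ᶜ ∪ ⋂ m, {p | m ∈ SS p.1 p.2} := by
      ext p
      simp only [Set.mem_preimage, Set.mem_singleton_iff, Set.mem_union, Set.mem_compl_iff,
        Set.mem_setOf_eq, Set.mem_iInter]
      exact nu_eq_zero_iff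
    rw [this]
    exact ((measurableSet_memSS 1).compl).union (MeasurableSet.iInter fun m => measurableSet_memSS m)
  | (n + 1) =>
    have : (fun p : ℝ × (ℕ → ℝ × ℝ) => nu p.1 p.2) ⁻¹' {n + 1} =
        {p : ℝ × (ℕ → ℝ × ℝ) | n + 1 ∈ SS p.1 p.2} ∩ {p | n + 2 ∈ SS p.1 p.2}ᶜ := by
      ext p
      simp only [Set.mem_preimage, Set.mem_singleton_iff, Set.mem_inter_iff, Set.mem_compl_iff,
        Set.mem_setOf_eq]
      exact nu_eq_succ_iff
    rw [this]
    exact (measurableSet_memSS (n + 1)).inter (measurableSet_memSS (n + 2)).compl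

lemma measurable_ww : Measurable (fun p : ℝ × (ℕ → ℝ × ℝ) => ww p.1 p.2) := by
  have hF : ∀ n : ℕ, Measurable (fun p : ℝ × (ℕ → ℝ × ℝ) => ∑ i ∈ Finset.range n, (p.2 i).2) := by
    intro n
    apply Finset.measurable_sum
    intro i _
    exact ((measurable_pi_apply i).comp measurable_snd).snd
  have hG : Measurable (fun q : (ℝ × (ℕ → ℝ × ℝ)) × ℕ => ∑ i ∈ Finset.range q.2, ((q.1).2 i).2) :=
    measurable_from_prod_countable_left fun n => hF n
  have : (fun p : ℝ × (ℕ → ℝ × ℝ) => ww p.1 p.2) =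
      fun p => (fun q : (ℝ × (ℕ → ℝ × ℝ)) × ℕ => ∑ i ∈ Finset.range q.2, ((q.1).2 i).2) (p, nu p.1 p.2) := rfl
  rw [this]
  exact hG.comp (measurable_id.prodMk measurable_nu)



/-! ### Conditional expectation helpers -/

lemma condexp_clm_comm' {Ω : Type} {m m0 : MeasurableSpace Ω} (hm : m ≤ m0) {P : Measure Ω}
    [IsFiniteMeasure P] (L : ℂ →L[ℝ] ℝ) {f : Ω → ℂ} (hf : Integrable f P) :
    (fun ω => L ((P[f|m]) ω)) =ᵐ[P] P[fun ω => L (f ω)|m] := by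
  refine ae_eq_condExp_of_forall_setIntegral_eq hm (L.integrable_comp hf) ?_ ?_ ?_
  · intro s _ _
    exact (L.integrable_comp integrable_condExp).integrableOn
  · intro s hs _
    rw [L.integral_comp_comm integrable_condExp.integrableOn,
      L.integral_comp_comm hf.integrableOn, setIntegral_condExp hm hf hs]
  · exact (L.continuous.comp_stronglyMeasurable stronglyMeasurable_condExp).aestronglyMeasurable

lemma integral_mul_condexp {Ω : Type} {m m0 : MeasurableSpace Ω} (hm : m ≤ m0) {P : Measure Ω}
    [IsProbabilityMeasure P] {g f : Ω → ℝ} (hg : StronglyMeasurable[m] g)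
    (hgb : ∀ ω, ‖g ω‖ ≤ 1) (hf : Integrable f P) :
    ∫ ω, g ω * (P[f|m]) ω ∂P = ∫ ω, g ω * f ω ∂P := by
  have h := condExp_stronglyMeasurable_mul_of_bound hm hg hf 1 (ae_of_all _ hgb)
  have h1 : ∫ ω, g ω * (P[f|m]) ω ∂P = ∫ ω, (P[g * f|m]) ω ∂P := by
    refine (integral_congr_ae ?_).symm
    exact h
  rw [h1, integral_condExp hm]
  rfl

/-! ### Complex helpers -/

lemma re_dot_le_norm' (w z : ℂ) (hw : ‖w‖ ≤ 1) : w.re * z.re + w.im * z.im ≤ ‖z‖ := by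
  have hnw : w.re * w.re + w.im * w.im ≤ 1 := by
    have h2 : ‖w‖ ^ 2 ≤ 1 := by nlinarith [norm_nonneg w]
    rw [Complex.sq_norm, Complex.normSq_apply] at h2
    exact h2
  have hnz : z.re * z.re + z.im * z.im = ‖z‖ ^ 2 := by
    rw [Complex.sq_norm, Complex.normSq_apply]
  nlinarith [sq_nonneg (w.re * z.im - w.im * z.re), norm_nonneg z,
    sq_nonneg (w.re * z.re + w.im * z.im - ‖z‖), sq_nonneg (w.re * z.re + w.im * z.im + ‖z‖)]

lemma norm_exp_I_mul_mul (s w : ℝ) : ‖Complex.exp (Complex.I * s * w)‖ = 1 := by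
  rw [Complex.norm_exp]
  simp



lemma neg_norm_le_re_dot (w z : ℂ) (hw : ‖w‖ ≤ 1) : -‖z‖ ≤ w.re * z.re + w.im * z.im := by
  have h := re_dot_le_norm' (-w) z (by simpa using hw)
  simp only [Complex.neg_re, Complex.neg_im, neg_mul] at h
  linarith

lemma integral_norm_condexp_le_two {Ω : Type} {m m0 : MeasurableSpace Ω} (hm : m ≤ m0)
    {P : Measure Ω} [IsProbabilityMeasure P] {h : Ω → ℂ} (hh : Integrable h P) :
    ∫ ω, ‖(P[h|m]) ω‖ ∂P ≤ 2 * ∫ ω, ‖h ω‖ ∂P := by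
  have hre := condexp_clm_comm' hm Complex.reCLM hh
  have him := condexp_clm_comm' hm Complex.imCLM hh
  simp only [Complex.reCLM_apply] at hre
  simp only [Complex.imCLM_apply] at him
  have hint_re : Integrable (fun ω => ((P[h|m]) ω).re) P :=
    Complex.reCLM.integrable_comp integrable_condExp
  have hint_im : Integrable (fun ω => ((P[h|m]) ω).im) P :=
    Complex.imCLM.integrable_comp integrable_condExp
  have step1 : ∫ ω, ‖(P[h|m]) ω‖ ∂P ≤
      ∫ ω, (|((P[h|m]) ω).re| + |((P[h|m]) ω).im|) ∂P := by
    refine integral_mono integrable_condExp.norm (hint_re.abs.add hint_im.abs) ?_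
    intro ω
    simpa using Complex.norm_le_abs_re_add_abs_im ((P[h|m]) ω)
  have step2 : ∫ ω, (|((P[h|m]) ω).re| + |((P[h|m]) ω).im|) ∂P =
      (∫ ω, |((P[h|m]) ω).re| ∂P) + ∫ ω, |((P[h|m]) ω).im| ∂P :=
    integral_add hint_re.abs hint_im.abs
  have hre' : ∫ ω, |((P[h|m]) ω).re| ∂P = ∫ ω, |(P[fun ω => (h ω).re|m]) ω| ∂P := by
    refine integral_congr_ae ?_
    filter_upwards [hre] with ω hω
    rw [hω]
  have him' : ∫ ω, |((P[h|m]) ω).im| ∂P = ∫ ω, |(P[fun ω => (h ω).im|m]) ω| ∂P := by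
    refine integral_congr_ae ?_
    filter_upwards [him] with ω hω
    rw [hω]
  have hre2 : ∫ ω, |(P[fun ω => (h ω).re|m]) ω| ∂P ≤ ∫ ω, |(h ω).re| ∂P :=
    integral_abs_condExp_le _
  have him2 : ∫ ω, |(P[fun ω => (h ω).im|m]) ω| ∂P ≤ ∫ ω, |(h ω).im| ∂P :=
    integral_abs_condExp_le _
  have hre3 : ∫ ω, |(h ω).re| ∂P ≤ ∫ ω, ‖h ω‖ ∂P := by
    refine integral_mono ?_ hh.norm (fun ω => ?_)
    · exact (Complex.reCLM.integrable_comp hh).abs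
    · simpa using Complex.abs_re_le_norm (h ω)
  have him3 : ∫ ω, |(h ω).im| ∂P ≤ ∫ ω, ‖h ω‖ ∂P := by
    refine integral_mono ?_ hh.norm (fun ω => ?_)
    · exact (Complex.imCLM.integrable_comp hh).abs
    · simpa using Complex.abs_im_le_norm (h ω)
  linarith

/-- The integral appearing in condition (1.24). -/
def Fdef {Ω : Type} [MeasurableSpace Ω] (P : Measure Ω) (Xn Yn : ℕ → Ω → ℝ) (k : ℕ) (s : ℝ) :
    ℝ :=
  ∫ ω, ‖(P[fun ω => Complex.exp (Complex.I * s * (∑ i ∈ Finset.range k, Yn i ω)) |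
      MeasurableSpace.comap (fun ω => ∑ i ∈ Finset.range k, Xn i ω) Real.measurableSpace]) ω‖ ∂P

/-- the random phase `e^{isY}` -/
def Zfun {Ω : Type} (SY : Ω → ℝ) (s : ℝ) : Ω → ℂ :=
  fun ω => Complex.exp (Complex.I * s * SY ω)

lemma norm_Zfun {Ω : Type} (SY : Ω → ℝ) (s : ℝ) (ω : Ω) : ‖Zfun SY s ω‖ = 1 := by
  have : Complex.I * s * SY ω = Complex.I * ((s * SY ω : ℝ) : ℂ) := by push_cast; ring
  rw [Zfun, this, Complex.norm_exp]
  simp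

lemma measurable_Zfun {Ω : Type} [MeasurableSpace Ω] {SY : Ω → ℝ} (hSY : Measurable SY)
    (s : ℝ) : Measurable (Zfun SY s) := by
  apply Complex.measurable_exp.comp
  exact Measurable.const_mul (Complex.measurable_ofReal.comp hSY) _

lemma integrable_Zfun {Ω : Type} [MeasurableSpace Ω] {P : Measure Ω} [IsProbabilityMeasure P]
    {SY : Ω → ℝ} (hSY : Measurable SY) (s : ℝ) : Integrable (Zfun SY s) P := by
  refine (integrable_const (1 : ℝ)).mono' ((measurable_Zfun hSY s).aestronglyMeasurable)
    (ae_of_all _ fun ω => ?_)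
  rw [norm_Zfun]

lemma cont_aux {Ω : Type} {m inst : MeasurableSpace Ω} (hm : m ≤ inst)
    (P : Measure Ω) [IsProbabilityMeasure P] {SY : Ω → ℝ} (hSY : Measurable SY) :
    Continuous (fun s : ℝ => ∫ ω, ‖(P[Zfun SY s|m]) ω‖ ∂P) := by
  set F : ℝ → ℝ := fun s => ∫ ω, ‖(P[Zfun SY s|m]) ω‖ ∂P with hFdef
  refine continuous_iff_continuousAt.mpr fun s₀ => ?_
  set H : ℝ → ℝ := fun s => ∫ ω, ‖Zfun SY s ω - Zfun SY s₀ ω‖ ∂P with hHdef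
  have hZint : ∀ s, Integrable (Zfun SY s) P := fun s => integrable_Zfun hSY s
  have hH : ContinuousAt H s₀ := by
    apply continuousAt_of_dominated (bound := fun _ => (2 : ℝ))
    · exact Eventually.of_forall fun s =>
        (((measurable_Zfun hSY s).sub (measurable_Zfun hSY s₀)).norm).aestronglyMeasurable
    · refine Eventually.of_forall fun s => ae_of_all _ fun ω => ?_
      rw [Real.norm_eq_abs, abs_of_nonneg (norm_nonneg _)]
      calc ‖Zfun SY s ω - Zfun SY s₀ ω‖ ≤ ‖Zfun SY s ω‖ + ‖Zfun SY s₀ ω‖ := norm_sub_le _ _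
      _ = 2 := by rw [norm_Zfun, norm_Zfun]; norm_num
    · exact integrable_const 2
    · refine ae_of_all _ fun ω => ?_
      have : Continuous (fun s : ℝ => ‖Zfun SY s ω - Zfun SY s₀ ω‖) := by
        apply Continuous.norm
        apply Continuous.sub _ continuous_const
        exact Complex.continuous_exp.comp
          ((continuous_const.mul Complex.continuous_ofReal).mul continuous_const)
      exact this.continuousAt
  have hH0 : H s₀ = 0 := by simp [hHdef]
  have hFb : ∀ s, ‖F s - F s₀‖ ≤ 2 * H s := by
    intro s
    have hdiff : (fun ω => (P[Zfun SY s|m]) ω - (P[Zfun SY s₀|m]) ω) =ᵐ[P]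
        P[fun ω => Zfun SY s ω - Zfun SY s₀ ω|m] := (condExp_sub (hZint s) (hZint s₀) m).symm
    have e1 : F s - F s₀ = ∫ ω, (‖(P[Zfun SY s|m]) ω‖ - ‖(P[Zfun SY s₀|m]) ω‖) ∂P := by
      rw [integral_sub integrable_condExp.norm integrable_condExp.norm]
    have e2 : |∫ ω, (‖(P[Zfun SY s|m]) ω‖ - ‖(P[Zfun SY s₀|m]) ω‖) ∂P| ≤
        ∫ ω, |‖(P[Zfun SY s|m]) ω‖ - ‖(P[Zfun SY s₀|m]) ω‖| ∂P :=
      by simpa [Real.norm_eq_abs] using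
        norm_integral_le_integral_norm (fun ω => ‖(P[Zfun SY s|m]) ω‖ - ‖(P[Zfun SY s₀|m]) ω‖) (μ := P)
    have e3 : ∫ ω, |‖(P[Zfun SY s|m]) ω‖ - ‖(P[Zfun SY s₀|m]) ω‖| ∂P ≤
        ∫ ω, ‖(P[Zfun SY s|m]) ω - (P[Zfun SY s₀|m]) ω‖ ∂P := by
      refine integral_mono ?_ (integrable_condExp.sub integrable_condExp).norm fun ω => ?_
      · exact (integrable_condExp.norm.sub integrable_condExp.norm).abs
      · exact abs_norm_sub_norm_le _ _
    have e4 : ∫ ω, ‖(P[Zfun SY s|m]) ω - (P[Zfun SY s₀|m]) ω‖ ∂P =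
        ∫ ω, ‖(P[fun ω => Zfun SY s ω - Zfun SY s₀ ω|m]) ω‖ ∂P := by
      refine integral_congr_ae ?_
      filter_upwards [hdiff] with ω hω
      rw [hω]
    have e5 : ∫ ω, ‖(P[fun ω => Zfun SY s ω - Zfun SY s₀ ω|m]) ω‖ ∂P ≤
        2 * ∫ ω, ‖Zfun SY s ω - Zfun SY s₀ ω‖ ∂P :=
      integral_norm_condexp_le_two hm (h := fun ω => Zfun SY s ω - Zfun SY s₀ ω)
        ((hZint s).sub (hZint s₀))
    rw [Real.norm_eq_abs, e1]
    calc |∫ ω, (‖(P[Zfun SY s|m]) ω‖ - ‖(P[Zfun SY s₀|m]) ω‖) ∂P| ≤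
        ∫ ω, |‖(P[Zfun SY s|m]) ω‖ - ‖(P[Zfun SY s₀|m]) ω‖| ∂P := e2
    _ ≤ ∫ ω, ‖(P[Zfun SY s|m]) ω - (P[Zfun SY s₀|m]) ω‖ ∂P := e3
    _ = ∫ ω, ‖(P[fun ω => Zfun SY s ω - Zfun SY s₀ ω|m]) ω‖ ∂P := e4
    _ ≤ 2 * H s := e5
  have hHt : Tendsto (fun s => 2 * H s) (𝓝 s₀) (𝓝 0) := by
    have := hH.tendsto
    rw [hH0] at this
    simpa using this.const_mul 2
  have ht : Tendsto (fun s => F s - F s₀) (𝓝 s₀) (𝓝 0) := squeeze_zero_norm hFb hHt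
  have : Tendsto F (𝓝 s₀) (𝓝 (F s₀)) := by
    have h2 := ht.add (tendsto_const_nhds (x := F s₀))
    simpa using h2
  exact this

lemma Fdef_continuous {Ω : Type} [MeasurableSpace Ω] (P : Measure Ω) [IsProbabilityMeasure P]
    (Xn Yn : ℕ → Ω → ℝ) (hXn : ∀ n, Measurable (Xn n)) (hYn : ∀ n, Measurable (Yn n)) (k : ℕ) :
    Continuous (Fdef P Xn Yn k) := by
  have hTm : Measurable (fun ω => ∑ i ∈ Finset.range k, Xn i ω) :=
    Finset.measurable_sum _ (fun i _ => hXn i)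
  have hSYm : Measurable (fun ω => ∑ i ∈ Finset.range k, Yn i ω) :=
    Finset.measurable_sum _ (fun i _ => hYn i)
  exact cont_aux hTm.comap_le P hSYm



/-! ### Named ingredients -/

def sumXf {Ω : Type} (Xn : ℕ → Ω → ℝ) (k : ℕ) : Ω → ℝ := fun ω => ∑ i ∈ Finset.range k, Xn i ω

def tailT {Ω : Type} (Xn Yn : ℕ → Ω → ℝ) (k : ℕ) : Ω → ℕ → ℝ × ℝ :=
  fun ω i => (Xn (k + i) ω, Yn (k + i) ω)

def blockT {Ω : Type} (Xn Yn : ℕ → Ω → ℝ) (k : ℕ) : Ω → Fin k → ℝ × ℝ :=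
  fun ω i => (Xn i ω, Yn i ω)

def Aset {Ω : Type} (Xn : ℕ → Ω → ℝ) (k : ℕ) (x : ℝ) : Set Ω :=
  {ω | ∀ j ≤ k, ∑ i ∈ Finset.range j, Xn i ω ≤ x}

/-- first components of a block, as a `ℕ`-indexed family -/
def pcX {k : ℕ} (b : Fin k → ℝ × ℝ) (i : ℕ) : ℝ := if h : i < k then (b ⟨i, h⟩).1 else 0

def pcY {k : ℕ} (b : Fin k → ℝ × ℝ) (i : ℕ) : ℝ := if h : i < k then (b ⟨i, h⟩).2 else 0

def tB {k : ℕ} (b : Fin k → ℝ × ℝ) : ℝ := ∑ i ∈ Finset.range k, pcX b i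

def zB (s : ℝ) {k : ℕ} (b : Fin k → ℝ × ℝ) : ℂ :=
  Complex.exp (Complex.I * s * (∑ i ∈ Finset.range k, pcY b i))

def ABset (k : ℕ) (x : ℝ) : Set (Fin k → ℝ × ℝ) :=
  {b | ∀ j ≤ k, ∑ i ∈ Finset.range j, pcX b i ≤ x}

def efun (s x : ℝ) : ℝ × (ℕ → ℝ × ℝ) → ℂ :=
  fun p => Complex.exp (-(Complex.I * s * (ww p.1 p.2)))

theorem key_lower_bound {Ω : Type} [MeasurableSpace Ω] (P : Measure Ω) [IsProbabilityMeasure P]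
    (Xn Yn : ℕ → Ω → ℝ) (hXn : ∀ n, Measurable (Xn n)) (hYn : ∀ n, Measurable (Yn n))
    (hindep : iIndepFun (fun n ω => (Xn n ω, Yn n ω)) P)
    (k : ℕ) (x s : ℝ)
    (hsupx : ∀ᵐ ω ∂P, ∃ n, x < ∑ i ∈ Finset.range n, Xn i ω)
    (hws : ∀ᵐ ω ∂P, ∃ z : ℤ, s * WW Xn Yn x ω = 2 * π * z) :
    1 - 2 * (P (Aset Xn k x)ᶜ).toReal ≤ Fdef P Xn Yn k s := by
  classical
  -- basic measurability
  have hTm : Measurable (sumXf Xn k) := Finset.measurable_sum _ (fun i _ => hXn i)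
  have hSYm : Measurable (sumXf Yn k) := Finset.measurable_sum _ (fun i _ => hYn i)
  have hUm : Measurable (blockT Xn Yn k) :=
    measurable_pi_lambda _ fun i => ((hXn i).prodMk (hYn i))
  have hVm : Measurable (tailT Xn Yn k) :=
    measurable_pi_lambda _ fun i => ((hXn (k + i)).prodMk (hYn (k + i)))
  have hAmeas : MeasurableSet (Aset Xn k x) := by
    have : Aset Xn k x = ⋂ j ∈ Finset.range (k+1), {ω | ∑ i ∈ Finset.range j, Xn i ω ≤ x} := by
      ext ω
      simp only [Aset, Set.mem_setOf_eq, Set.mem_iInter, Finset.mem_range]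
      exact ⟨fun h j hj => h j (by omega), fun h j hj => h j (by omega)⟩
    rw [this]
    exact MeasurableSet.biInter (Finset.range (k+1)).countable_toSet
      (fun j _ => measurableSet_le (Finset.measurable_sum _ (fun i _ => hXn i)) measurable_const)
  -- independence of block and tail
  have hIndep : IndepFun (blockT Xn Yn k) (tailT Xn Yn k) P := by
    have h_le : ∀ n : ℕ, MeasurableSpace.comap (fun ω => (Xn n ω, Yn n ω))
        inferInstance ≤ ‹MeasurableSpace Ω› := fun n => ((hXn n).prodMk (hYn n)).comap_le
    have h2 := indep_biSup_compl h_le hindep {i : ℕ | i < k}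
    have hUle : MeasurableSpace.comap (blockT Xn Yn k) MeasurableSpace.pi ≤
        ⨆ n ∈ {i : ℕ | i < k}, MeasurableSpace.comap (fun ω => (Xn n ω, Yn n ω))
          inferInstance := by
      simp_rw [MeasurableSpace.pi, MeasurableSpace.comap_iSup, MeasurableSpace.comap_comp,
        Function.comp_def, blockT, iSup_le_iff]
      intro a
      exact le_biSup (f := fun n => MeasurableSpace.comap (fun ω => (Xn n ω, Yn n ω))
        inferInstance) a.isLt
    have hVle : MeasurableSpace.comap (tailT Xn Yn k) MeasurableSpace.pi ≤
        ⨆ n ∈ {i : ℕ | i < k}ᶜ, MeasurableSpace.comap (fun ω => (Xn n ω, Yn n ω))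
          inferInstance := by
      simp_rw [MeasurableSpace.pi, MeasurableSpace.comap_iSup, MeasurableSpace.comap_comp,
        Function.comp_def, tailT, iSup_le_iff]
      intro a
      exact le_biSup (f := fun n => MeasurableSpace.comap (fun ω => (Xn n ω, Yn n ω))
        inferInstance) (show k + a ∈ {j : ℕ | j < k}ᶜ by simp)
    exact indep_of_indep_of_le_right (indep_of_indep_of_le_left h2 hUle) hVle
  have hmapUV : Measure.map (fun ω => (blockT Xn Yn k ω, tailT Xn Yn k ω)) P =
      (Measure.map (blockT Xn Yn k) P).prod (Measure.map (tailT Xn Yn k) P) :=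
    (indepFun_iff_map_prod_eq_prod_map_map hUm.aemeasurable hVm.aemeasurable).mp hIndep
  set μ2 : Measure (ℕ → ℝ × ℝ) := Measure.map (tailT Xn Yn k) P with hμ2def
  haveI : IsProbabilityMeasure μ2 := Measure.isProbabilityMeasure_map hVm.aemeasurable
  set μ1 : Measure (Fin k → ℝ × ℝ) := Measure.map (blockT Xn Yn k) P with hμ1def
  -- the function e and its properties
  have hem : Measurable (efun s x) := by
    apply Complex.measurable_exp.comp
    apply Measurable.neg
    exact Measurable.const_mul (Complex.measurable_ofReal.comp measurable_ww) _
  have hnorme : ∀ p, ‖efun s x p‖ = 1 := by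
    intro p
    have : -(Complex.I * s * (ww p.1 p.2)) = Complex.I * ((-(s * ww p.1 p.2) : ℝ) : ℂ) := by
      push_cast; ring
    rw [efun, this, Complex.norm_exp]
    simp
  -- ζ
  set ζ : ℝ → ℂ := fun a => ∫ v, efun s x (x - a, v) ∂μ2 with hζdef
  have hζm : Measurable ζ := by
    have h1 : StronglyMeasurable (fun q : ℝ × (ℕ → ℝ × ℝ) => efun s x (x - q.1, q.2)) :=
      (hem.comp ((measurable_const.sub measurable_fst).prodMk measurable_snd)).stronglyMeasurable
    exact h1.integral_prod_right'.measurable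
  have hζle : ∀ a, ‖ζ a‖ ≤ 1 := by
    intro a
    refine le_trans (norm_integral_le_integral_norm _) ?_
    simp [hnorme]
  -- block functions measurability and identification
  have hpcXm : ∀ i, Measurable (fun b : Fin k → ℝ × ℝ => pcX b i) := by
    intro i
    by_cases h : i < k
    · simp only [pcX, dif_pos h]
      exact (measurable_pi_apply _).fst
    · simp only [pcX, dif_neg h]
      exact measurable_const
  have hpcYm : ∀ i, Measurable (fun b : Fin k → ℝ × ℝ => pcY b i) := by
    intro i
    by_cases h : i < k
    · simp only [pcY, dif_pos h]
      exact (measurable_pi_apply _).snd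
    · simp only [pcY, dif_neg h]
      exact measurable_const
  have htBm : Measurable (fun b : Fin k → ℝ × ℝ => tB b) :=
    Finset.measurable_sum _ (fun i _ => hpcXm i)
  have hzBm : Measurable (fun b : Fin k → ℝ × ℝ => zB s b) := by
    apply Complex.measurable_exp.comp
    exact Measurable.const_mul
      (Complex.measurable_ofReal.comp (Finset.measurable_sum _ (fun i _ => hpcYm i))) _
  have hABm : MeasurableSet (ABset k x) := by
    have : ABset k x = ⋂ j ∈ Finset.range (k+1), {b : Fin k → ℝ × ℝ |
        ∑ i ∈ Finset.range j, pcX b i ≤ x} := by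
      ext b
      simp only [ABset, Set.mem_setOf_eq, Set.mem_iInter, Finset.mem_range]
      exact ⟨fun h j hj => h j (by omega), fun h j hj => h j (by omega)⟩
    rw [this]
    exact MeasurableSet.biInter (Finset.range (k+1)).countable_toSet
      (fun j _ => measurableSet_le (Finset.measurable_sum _ (fun i _ => hpcXm i)) measurable_const)
  -- identification on Ω
  have hsum_eq : ∀ ω, ∀ j ≤ k, ∑ i ∈ Finset.range j, pcX (blockT Xn Yn k ω) i =
      ∑ i ∈ Finset.range j, Xn i ω := by
    intro ω j hj
    refine Finset.sum_congr rfl fun i hi => ?_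
    rw [Finset.mem_range] at hi
    have hik : i < k := by omega
    simp [pcX, hik, blockT]
  have hU_tB : ∀ ω, tB (blockT Xn Yn k ω) = sumXf Xn k ω := by
    intro ω
    exact hsum_eq ω k le_rfl
  have hU_zB : ∀ ω, zB s (blockT Xn Yn k ω) = Zfun (sumXf Yn k) s ω := by
    intro ω
    have : ∑ i ∈ Finset.range k, pcY (blockT Xn Yn k ω) i = ∑ i ∈ Finset.range k, Yn i ω := by
      refine Finset.sum_congr rfl fun i hi => ?_
      rw [Finset.mem_range] at hi
      simp [pcY, hi, blockT]
    rw [zB, this]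
    rfl
  have hU_AB : ∀ ω, blockT Xn Yn k ω ∈ ABset k x ↔ ω ∈ Aset Xn k x := by
    intro ω
    simp only [ABset, Aset, Set.mem_setOf_eq]
    constructor
    · intro h j hj
      rw [← hsum_eq ω j hj]
      exact h j hj
    · intro h j hj
      rw [hsum_eq ω j hj]
      exact h j hj
  -- Step 1 : pointwise identity a.e. on A
  have hstep1 : ∀ᵐ ω ∂P, ω ∈ Aset Xn k x →
      Zfun (sumXf Yn k) s ω = efun s x (x - sumXf Xn k ω, tailT Xn Yn k ω) := by
    filter_upwards [hsupx, hws] with ω hsupω hwsω hA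
    have h1 : ∀ j ≤ k, ps (fun i => (Xn i ω, Yn i ω)) j ≤ x := fun j hj => hA j hj
    have h2 : ∃ n, x < ps (fun i => (Xn i ω, Yn i ω)) n := hsupω
    obtain ⟨-, hww2, -⟩ := nu_ww_shift h1 h2
    have hWsum : WW Xn Yn x ω = sumXf Yn k ω +
        ww (x - sumXf Xn k ω) (tailT Xn Yn k ω) := hww2
    obtain ⟨z, hz⟩ := hwsω
    have hzC : (s : ℂ) * ((WW Xn Yn x ω : ℝ) : ℂ) = 2 * (π : ℝ) * (z : ℂ) := by
      exact_mod_cast congrArg (fun r : ℝ => (r : ℂ)) hz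
    have hexp : Complex.exp (Complex.I * s * (WW Xn Yn x ω)) = 1 := by
      have h3 : Complex.I * (s : ℂ) * ((WW Xn Yn x ω : ℝ) : ℂ) =
          (z : ℂ) * (2 * (π : ℝ) * Complex.I) := by
        rw [mul_assoc, hzC]; ring
      rw [h3]
      exact Complex.exp_int_mul_two_pi_mul_I z
    have hsplit : Complex.exp (Complex.I * s * (WW Xn Yn x ω)) =
        Zfun (sumXf Yn k) s ω *
          Complex.exp (Complex.I * s * (ww (x - sumXf Xn k ω) (tailT Xn Yn k ω))) := by
      rw [hWsum]
      have h4 : Complex.I * (s : ℂ) *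
          ((sumXf Yn k ω + ww (x - sumXf Xn k ω) (tailT Xn Yn k ω) : ℝ) : ℂ)
          = Complex.I * (s : ℂ) * ((sumXf Yn k ω : ℝ) : ℂ) +
            Complex.I * (s : ℂ) * ((ww (x - sumXf Xn k ω) (tailT Xn Yn k ω) : ℝ) : ℂ) := by
        push_cast; ring
      rw [h4, Complex.exp_add]
      rfl
    have hone : Zfun (sumXf Yn k) s ω *
        Complex.exp (Complex.I * s * (ww (x - sumXf Xn k ω) (tailT Xn Yn k ω))) = 1 := by
      rw [← hsplit]; exact hexp
    have h5 : efun s x (x - sumXf Xn k ω, tailT Xn Yn k ω) =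
        (Complex.exp (Complex.I * s * (ww (x - sumXf Xn k ω) (tailT Xn Yn k ω))))⁻¹ := by
      rw [show efun s x (x - sumXf Xn k ω, tailT Xn Yn k ω) =
        Complex.exp (-(Complex.I * s * (ww (x - sumXf Xn k ω) (tailT Xn Yn k ω)))) from rfl,
        Complex.exp_neg]
    rw [h5]
    exact eq_inv_of_mul_eq_one_left hone
  -- Step 2 : push to the product space and back, obtaining ζ ∘ T = Z a.e. on A
  have hstep2 : ∀ᵐ ω ∂P, ω ∈ Aset Xn k x → ζ (sumXf Xn k ω) = Zfun (sumXf Yn k) s ω := by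
    set g : (Fin k → ℝ × ℝ) × (ℕ → ℝ × ℝ) → ℝ≥0∞ := fun q =>
      (ABset k x).indicator (fun _ => (1 : ℝ≥0∞)) q.1 *
        ENNReal.ofReal ‖zB s q.1 - efun s x (x - tB q.1, q.2)‖ with hgdef
    have hgm : Measurable g := by
      apply Measurable.mul
      · exact (measurable_one.indicator hABm).comp measurable_fst
      · apply ENNReal.measurable_ofReal.comp
        apply Measurable.norm
        apply Measurable.sub
        · exact hzBm.comp measurable_fst
        · exact hem.comp
            (((measurable_const.sub (htBm.comp measurable_fst))).prodMk measurable_snd)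
    have h0 : ∫⁻ q, g q ∂(μ1.prod μ2) = 0 := by
      have hcomp : Measurable fun ω => g (blockT Xn Yn k ω, tailT Xn Yn k ω) :=
        hgm.comp (hUm.prodMk hVm)
      rw [← hmapUV, lintegral_map hgm (hUm.prodMk hVm), lintegral_eq_zero_iff hcomp]
      filter_upwards [hstep1] with ω hω
      show g (blockT Xn Yn k ω, tailT Xn Yn k ω) = 0
      by_cases hA : ω ∈ Aset Xn k x
      · have h1 := hω hA
        simp only [hgdef]
        rw [hU_zB, hU_tB, ← h1]
        simp
      · have h2 : blockT Xn Yn k ω ∉ ABset k x := fun hc => hA ((hU_AB ω).mp hc)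
        simp [hgdef, Set.indicator_of_notMem h2]
    rw [lintegral_prod _ hgm.aemeasurable] at h0
    have h1 : ∀ᵐ b ∂μ1, ∫⁻ v, g (b, v) ∂μ2 = 0 := by
      have h1' := (lintegral_eq_zero_iff
        (hgm.lintegral_prod_right' : Measurable fun b => ∫⁻ v, g (b, v) ∂μ2)).mp h0
      filter_upwards [h1'] with b hb using hb
    have hae1 : ∀ᵐ b ∂μ1, b ∈ ABset k x → ζ (tB b) = zB s b := by
      filter_upwards [h1] with b hb hbA
      have hb' : ∫⁻ v, ENNReal.ofReal ‖zB s b - efun s x (x - tB b, v)‖ ∂μ2 = 0 := by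
        simpa [hgdef, Set.indicator_of_mem hbA] using hb
      have hmeas_v : Measurable (fun v => ENNReal.ofReal ‖zB s b - efun s x (x - tB b, v)‖) := by
        apply ENNReal.measurable_ofReal.comp
        apply Measurable.norm
        exact (measurable_const.sub (hem.comp (measurable_const.prodMk measurable_id)))
      have hae_v : ∀ᵐ v ∂μ2, efun s x (x - tB b, v) = zB s b := by
        have h3 := (lintegral_eq_zero_iff hmeas_v).mp hb'
        filter_upwards [h3] with v hv
        have h4 : ‖zB s b - efun s x (x - tB b, v)‖ ≤ 0 :=
          ENNReal.ofReal_eq_zero.mp hv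
        have h5 : ‖zB s b - efun s x (x - tB b, v)‖ = 0 :=
          le_antisymm h4 (norm_nonneg _)
        exact (sub_eq_zero.mp (norm_eq_zero.mp h5)).symm
      calc ζ (tB b) = ∫ v, zB s b ∂μ2 := integral_congr_ae hae_v
      _ = zB s b := by simp
    have hsetm : MeasurableSet {b : Fin k → ℝ × ℝ | b ∈ ABset k x → ζ (tB b) = zB s b} := by
      have hseteq : {b : Fin k → ℝ × ℝ | b ∈ ABset k x → ζ (tB b) = zB s b} =
          (ABset k x)ᶜ ∪ {b | ζ (tB b) = zB s b} := by
        ext b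
        by_cases hb : b ∈ ABset k x <;> simp [hb]
      rw [hseteq]
      exact hABm.compl.union (measurableSet_eq_fun (hζm.comp htBm) hzBm)
    rw [hμ1def] at hae1
    have h6 := (ae_map_iff hUm.aemeasurable hsetm).mp hae1
    filter_upwards [h6] with ω hω hA
    have h3 := hω ((hU_AB ω).mpr hA)
    rwa [hU_tB, hU_zB] at h3
  -- Step 3 : conclude via conditional expectations
  have hm' : MeasurableSpace.comap (sumXf Xn k) Real.measurableSpace ≤ ‹MeasurableSpace Ω› :=
    hTm.comap_le
  have hTmT : Measurable[MeasurableSpace.comap (sumXf Xn k) Real.measurableSpace]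
      (sumXf Xn k) := measurable_iff_comap_le.mpr le_rfl
  have hZint : Integrable (Zfun (sumXf Yn k) s) P := integrable_Zfun hSYm s
  have hζTm : Measurable fun ω => ζ (sumXf Xn k ω) := hζm.comp hTm
  have hgr_sm : StronglyMeasurable[MeasurableSpace.comap (sumXf Xn k) Real.measurableSpace] (fun ω => (ζ (sumXf Xn k ω)).re) :=
    ((Complex.measurable_re.comp hζm).comp hTmT).stronglyMeasurable
  have hgi_sm : StronglyMeasurable[MeasurableSpace.comap (sumXf Xn k) Real.measurableSpace] (fun ω => (ζ (sumXf Xn k ω)).im) :=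
    ((Complex.measurable_im.comp hζm).comp hTmT).stronglyMeasurable
  have hgr_b : ∀ ω, ‖(ζ (sumXf Xn k ω)).re‖ ≤ 1 := by
    intro ω
    refine le_trans ?_ (hζle (sumXf Xn k ω))
    rw [Real.norm_eq_abs]
    exact Complex.abs_re_le_norm _
  have hgi_b : ∀ ω, ‖(ζ (sumXf Xn k ω)).im‖ ≤ 1 := by
    intro ω
    refine le_trans ?_ (hζle (sumXf Xn k ω))
    rw [Real.norm_eq_abs]
    exact Complex.abs_im_le_norm _
  have hZre_int : Integrable (fun ω => (Zfun (sumXf Yn k) s ω).re) P := by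
    simpa using Complex.reCLM.integrable_comp hZint
  have hZim_int : Integrable (fun ω => (Zfun (sumXf Yn k) s ω).im) P := by
    simpa using Complex.imCLM.integrable_comp hZint
  have hre := condexp_clm_comm' hm' Complex.reCLM hZint
  have him := condexp_clm_comm' hm' Complex.imCLM hZint
  simp only [Complex.reCLM_apply] at hre
  simp only [Complex.imCLM_apply] at him
  have hcz_re_int : Integrable (fun ω => ((P[Zfun (sumXf Yn k) s|MeasurableSpace.comap (sumXf Xn k) Real.measurableSpace]) ω).re) P := by
    simpa using Complex.reCLM.integrable_comp
      (integrable_condExp (m := MeasurableSpace.comap (sumXf Xn k) Real.measurableSpace) (f := Zfun (sumXf Yn k) s) (μ := P))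
  have hcz_im_int : Integrable (fun ω => ((P[Zfun (sumXf Yn k) s|MeasurableSpace.comap (sumXf Xn k) Real.measurableSpace]) ω).im) P := by
    simpa using Complex.imCLM.integrable_comp
      (integrable_condExp (m := MeasurableSpace.comap (sumXf Xn k) Real.measurableSpace) (f := Zfun (sumXf Yn k) s) (μ := P))
  have hprod1 : Integrable
      (fun ω => (ζ (sumXf Xn k ω)).re * ((P[Zfun (sumXf Yn k) s|MeasurableSpace.comap (sumXf Xn k) Real.measurableSpace]) ω).re) P :=
    hcz_re_int.bdd_mul ((Complex.measurable_re.comp hζTm).aestronglyMeasurable)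
      (ae_of_all _ hgr_b)
  have hprod2 : Integrable
      (fun ω => (ζ (sumXf Xn k ω)).im * ((P[Zfun (sumXf Yn k) s|MeasurableSpace.comap (sumXf Xn k) Real.measurableSpace]) ω).im) P :=
    hcz_im_int.bdd_mul ((Complex.measurable_im.comp hζTm).aestronglyMeasurable)
      (ae_of_all _ hgi_b)
  have hprodZ1 : Integrable
      (fun ω => (ζ (sumXf Xn k ω)).re * (Zfun (sumXf Yn k) s ω).re) P :=
    hZre_int.bdd_mul ((Complex.measurable_re.comp hζTm).aestronglyMeasurable)
      (ae_of_all _ hgr_b)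
  have hprodZ2 : Integrable
      (fun ω => (ζ (sumXf Xn k ω)).im * (Zfun (sumXf Yn k) s ω).im) P :=
    hZim_int.bdd_mul ((Complex.measurable_im.comp hζTm).aestronglyMeasurable)
      (ae_of_all _ hgi_b)
  have hineq1 : ∫ ω, ((ζ (sumXf Xn k ω)).re * ((P[Zfun (sumXf Yn k) s|MeasurableSpace.comap (sumXf Xn k) Real.measurableSpace]) ω).re
      + (ζ (sumXf Xn k ω)).im * ((P[Zfun (sumXf Yn k) s|MeasurableSpace.comap (sumXf Xn k) Real.measurableSpace]) ω).im) ∂P ≤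
      ∫ ω, ‖(P[Zfun (sumXf Yn k) s|MeasurableSpace.comap (sumXf Xn k) Real.measurableSpace]) ω‖ ∂P := by
    refine integral_mono (hprod1.add hprod2) integrable_condExp.norm fun ω => ?_
    exact re_dot_le_norm' _ _ (hζle _)
  have hswap_re : ∫ ω, (ζ (sumXf Xn k ω)).re * ((P[Zfun (sumXf Yn k) s|MeasurableSpace.comap (sumXf Xn k) Real.measurableSpace]) ω).re ∂P =
      ∫ ω, (ζ (sumXf Xn k ω)).re * (Zfun (sumXf Yn k) s ω).re ∂P := by
    have e1 : ∫ ω, (ζ (sumXf Xn k ω)).re * ((P[Zfun (sumXf Yn k) s|MeasurableSpace.comap (sumXf Xn k) Real.measurableSpace]) ω).re ∂P =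
        ∫ ω, (ζ (sumXf Xn k ω)).re * (P[fun ω => (Zfun (sumXf Yn k) s ω).re|MeasurableSpace.comap (sumXf Xn k) Real.measurableSpace]) ω ∂P :=
      integral_congr_ae (by filter_upwards [hre] with ω hω; rw [hω])
    rw [e1]
    exact integral_mul_condexp hm' hgr_sm hgr_b hZre_int
  have hswap_im : ∫ ω, (ζ (sumXf Xn k ω)).im * ((P[Zfun (sumXf Yn k) s|MeasurableSpace.comap (sumXf Xn k) Real.measurableSpace]) ω).im ∂P =
      ∫ ω, (ζ (sumXf Xn k ω)).im * (Zfun (sumXf Yn k) s ω).im ∂P := by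
    have e1 : ∫ ω, (ζ (sumXf Xn k ω)).im * ((P[Zfun (sumXf Yn k) s|MeasurableSpace.comap (sumXf Xn k) Real.measurableSpace]) ω).im ∂P =
        ∫ ω, (ζ (sumXf Xn k ω)).im * (P[fun ω => (Zfun (sumXf Yn k) s ω).im|MeasurableSpace.comap (sumXf Xn k) Real.measurableSpace]) ω ∂P :=
      integral_congr_ae (by filter_upwards [him] with ω hω; rw [hω])
    rw [e1]
    exact integral_mul_condexp hm' hgi_sm hgi_b hZim_int
  have hlow : ∀ᵐ ω ∂P, 1 - 2 * (Aset Xn k x)ᶜ.indicator (fun _ => (1 : ℝ)) ω ≤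
      (ζ (sumXf Xn k ω)).re * (Zfun (sumXf Yn k) s ω).re
        + (ζ (sumXf Xn k ω)).im * (Zfun (sumXf Yn k) s ω).im := by
    filter_upwards [hstep2] with ω hω
    by_cases hA : ω ∈ Aset Xn k x
    · rw [Set.indicator_of_notMem (Set.notMem_compl_iff.mpr hA), hω hA]
      have h8 : Complex.normSq (Zfun (sumXf Yn k) s ω) = 1 := by
        rw [← Complex.sq_norm, norm_Zfun]
        norm_num
      have h7 : (Zfun (sumXf Yn k) s ω).re * (Zfun (sumXf Yn k) s ω).re
          + (Zfun (sumXf Yn k) s ω).im * (Zfun (sumXf Yn k) s ω).im = 1 := by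
        rw [← Complex.normSq_apply]
        exact h8
      linarith
    · rw [Set.indicator_of_mem (Set.mem_compl hA)]
      have h9 := neg_norm_le_re_dot (ζ (sumXf Xn k ω)) (Zfun (sumXf Yn k) s ω) (hζle _)
      rw [norm_Zfun] at h9
      linarith
  have hind_int : Integrable ((Aset Xn k x)ᶜ.indicator (fun _ => (1 : ℝ))) P :=
    (integrable_const 1).indicator hAmeas.compl
  have hlhs_int : Integrable
      (fun ω => 1 - 2 * (Aset Xn k x)ᶜ.indicator (fun _ => (1 : ℝ)) ω) P := by
    exact (integrable_const 1).sub (hind_int.const_mul 2)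
  have hlow_int := integral_mono_ae hlhs_int (hprodZ1.add hprodZ2) hlow
  have hval : ∫ ω, (1 - 2 * (Aset Xn k x)ᶜ.indicator (fun _ => (1 : ℝ)) ω) ∂P =
      1 - 2 * (P (Aset Xn k x)ᶜ).toReal := by
    rw [integral_sub (integrable_const 1) (hind_int.const_mul 2), integral_const_mul,
      integral_indicator_const (1 : ℝ) hAmeas.compl]
    simp [measure_univ, Measure.real]
  have hFdef : Fdef P Xn Yn k s =
      ∫ ω, ‖(P[Zfun (sumXf Yn k) s|MeasurableSpace.comap (sumXf Xn k)
        Real.measurableSpace]) ω‖ ∂P := rfl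
  rw [hFdef]
  calc 1 - 2 * (P (Aset Xn k x)ᶜ).toReal
      = ∫ ω, (1 - 2 * (Aset Xn k x)ᶜ.indicator (fun _ => (1 : ℝ)) ω) ∂P := hval.symm
    _ ≤ ∫ ω, ((ζ (sumXf Xn k ω)).re * (Zfun (sumXf Yn k) s ω).re
        + (ζ (sumXf Xn k ω)).im * (Zfun (sumXf Yn k) s ω).im) ∂P := hlow_int
    _ = (∫ ω, (ζ (sumXf Xn k ω)).re * (Zfun (sumXf Yn k) s ω).re ∂P)
        + ∫ ω, (ζ (sumXf Xn k ω)).im * (Zfun (sumXf Yn k) s ω).im ∂P :=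
      integral_add hprodZ1 hprodZ2
    _ = (∫ ω, (ζ (sumXf Xn k ω)).re * ((P[Zfun (sumXf Yn k) s|MeasurableSpace.comap (sumXf Xn k) Real.measurableSpace]) ω).re ∂P)
        + ∫ ω, (ζ (sumXf Xn k ω)).im * ((P[Zfun (sumXf Yn k) s|MeasurableSpace.comap (sumXf Xn k) Real.measurableSpace]) ω).im ∂P := by
      rw [hswap_re, hswap_im]
    _ = ∫ ω, ((ζ (sumXf Xn k ω)).re * ((P[Zfun (sumXf Yn k) s|MeasurableSpace.comap (sumXf Xn k) Real.measurableSpace]) ω).re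
        + (ζ (sumXf Xn k ω)).im * ((P[Zfun (sumXf Yn k) s|MeasurableSpace.comap (sumXf Xn k) Real.measurableSpace]) ω).im) ∂P :=
      (integral_add hprod1 hprod2).symm
    _ ≤ ∫ ω, ‖(P[Zfun (sumXf Yn k) s|MeasurableSpace.comap (sumXf Xn k) Real.measurableSpace]) ω‖ ∂P := hineq1

/-- a.e. membership characterisation of probability-one events -/
lemma prob_eq_one_iff_ae {Ω : Type} [MeasurableSpace Ω] (P : Measure Ω) [IsProbabilityMeasure P]
    {sset : Set Ω} (hs : MeasurableSet sset) : P sset = 1 ↔ ∀ᵐ ω ∂P, ω ∈ sset := by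
  rw [ae_iff]
  have hc : {ω | ¬ ω ∈ sset} = ssetᶜ := rfl
  rw [hc]
  constructor
  · intro h
    rw [measure_compl hs (measure_ne_top P _), h, measure_univ]
    simp
  · intro h
    have := measure_compl hs (measure_ne_top P _)
    rw [h, measure_univ] at this
    have h2 : P sset ≤ 1 := prob_le_one
    -- 0 = 1 - P sset in ℝ≥0∞
    rcases eq_or_lt_of_le h2 with heq | hlt
    · exact heq
    · exfalso
      rw [eq_comm, tsub_eq_zero_iff_le] at this
      exact absurd this (not_le.mpr hlt)

lemma measurableSet_latt (c : ℝ) : MeasurableSet {y : ℝ | ∃ m : ℤ, y = c * m} := by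
  have : {y : ℝ | ∃ m : ℤ, y = c * m} = Set.range (fun m : ℤ => c * m) := by
    ext y
    simp [Set.mem_range, eq_comm]
  rw [this]
  exact (Set.countable_range _).measurableSet

lemma measurable_WW {Ω : Type} [MeasurableSpace Ω] {Xn Yn : ℕ → Ω → ℝ}
    (hXn : ∀ n, Measurable (Xn n)) (hYn : ∀ n, Measurable (Yn n)) (x : ℝ) :
    Measurable (WW Xn Yn x) := by
  have htraj : Measurable (fun ω (i : ℕ) => (Xn i ω, Yn i ω)) :=
    measurable_pi_lambda _ fun i => (hXn i).prodMk (hYn i)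
  have h2 : Measurable fun ω => (fun p : ℝ × (ℕ → ℝ × ℝ) => ww p.1 p.2)
      (x, fun i => (Xn i ω, Yn i ω)) := measurable_ww.comp (measurable_const.prodMk htraj)
  exact h2

lemma WW_mem_span {Ω : Type} [MeasurableSpace Ω] (P : Measure Ω) [IsProbabilityMeasure P]
    (X Y : Ω → ℝ) (hX : Measurable X) (hY : Measurable Y) (Xn Yn : ℕ → Ω → ℝ)
    (hXn : ∀ n, Measurable (Xn n)) (hYn : ∀ n, Measurable (Yn n))
    (hiid : ∀ n, Measure.map (fun ω => (Xn n ω, Yn n ω)) P = Measure.map (fun ω => (X ω, Y ω)) P)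
    (d : ℝ) (hYd : P {ω | ∃ m : ℤ, Y ω = d * m} = 1) (x : ℝ) :
    P {ω | ∃ m : ℤ, WW Xn Yn x ω = d * m} = 1 := by
  classical
  have hYn_d : ∀ n, P {ω | ∃ m : ℤ, Yn n ω = d * m} = 1 := by
    intro n
    have h1 : P ((fun ω => (Xn n ω, Yn n ω)) ⁻¹' (Set.univ ×ˢ {y | ∃ m : ℤ, y = d * m})) =
        P ((fun ω => (X ω, Y ω)) ⁻¹' (Set.univ ×ˢ {y | ∃ m : ℤ, y = d * m})) := by
      rw [← Measure.map_apply ((hXn n).prodMk (hYn n))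
          (MeasurableSet.univ.prod (measurableSet_latt d)),
        ← Measure.map_apply (hX.prodMk hY) (MeasurableSet.univ.prod (measurableSet_latt d)),
        hiid n]
    have h2 : ((fun ω => (Xn n ω, Yn n ω)) ⁻¹' (Set.univ ×ˢ {y | ∃ m : ℤ, y = d * m})) =
        {ω | ∃ m : ℤ, Yn n ω = d * m} := by
      ext ω; simp
    have h3 : ((fun ω => (X ω, Y ω)) ⁻¹' (Set.univ ×ˢ {y | ∃ m : ℤ, y = d * m})) =
        {ω | ∃ m : ℤ, Y ω = d * m} := by
      ext ω; simp
    rw [h2, h3] at h1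
    rw [h1, hYd]
  have hall : ∀ᵐ ω ∂P, ∀ n, ∃ m : ℤ, Yn n ω = d * m := by
    rw [ae_all_iff]
    intro n
    exact (prob_eq_one_iff_ae P ((hYn n) (measurableSet_latt d))).mp (hYn_d n)
  refine (prob_eq_one_iff_ae P ((measurable_WW hXn hYn x) (measurableSet_latt d))).mpr ?_
  filter_upwards [hall] with ω hω
  choose mfun hmfun using hω
  refine ⟨∑ i ∈ Finset.range (NN Xn x ω), mfun i, ?_⟩
  rw [WW]
  push_cast
  rw [Finset.mul_sum]
  exact Finset.sum_congr rfl fun i _ => hmfun i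

lemma exists_two_le_multiple {Ω : Type} [MeasurableSpace Ω] (P : Measure Ω)
    [IsProbabilityMeasure P] {W : Ω → ℝ} (hWm : Measurable W) {t d : ℝ}
    (hd : 0 < d) (ht : 0 < t) (htd : d < t)
    (hWt : P {ω | ∃ m : ℤ, W ω = t * m} = 1) (hWd : P {ω | ∃ m : ℤ, W ω = d * m} = 1) :
    ∃ m : ℕ, 2 ≤ m ∧ P {ω | ∃ z : ℤ, W ω = ((m : ℝ) * d) * z} = 1 := by
  classical
  have hae_t := (prob_eq_one_iff_ae P (hWm (measurableSet_latt t))).mp hWt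
  have hae_d := (prob_eq_one_iff_ae P (hWm (measurableSet_latt d))).mp hWd
  by_cases hG : ∀ z : ℤ, (∃ zt : ℤ, (d * z : ℝ) = t * zt) → z = 0
  · refine ⟨2, le_rfl, ?_⟩
    refine (prob_eq_one_iff_ae P (hWm (measurableSet_latt (((2:ℕ) : ℝ) * d)))).mpr ?_
    filter_upwards [hae_t, hae_d] with ω hht hhd
    obtain ⟨mt, hmt⟩ := hht
    obtain ⟨md, hmd⟩ := hhd
    have hmd0 : md = 0 := hG md ⟨mt, by rw [← hmd, hmt]⟩
    refine ⟨0, ?_⟩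
    rw [hmd, hmd0]
    push_cast
    ring
  · push_neg at hG
    obtain ⟨z0, hz0t, hz0ne⟩ := hG
    have hQex : ∃ m : ℕ, 0 < m ∧ ∃ zt : ℤ, (d * m : ℝ) = t * zt := by
      refine ⟨z0.natAbs, Int.natAbs_pos.mpr hz0ne, ?_⟩
      obtain ⟨zt, hzt⟩ := hz0t
      have habs : ((z0.natAbs : ℕ) : ℝ) = |(z0 : ℝ)| := by
        rw [Nat.cast_natAbs]
        exact_mod_cast rfl
      rcases le_or_gt 0 z0 with h | h
      · refine ⟨zt, ?_⟩
        rw [habs, abs_of_nonneg (by exact_mod_cast h : (0:ℝ) ≤ (z0 : ℝ))]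
        exact hzt
      · refine ⟨-zt, ?_⟩
        rw [habs, abs_of_neg (by exact_mod_cast h : (z0 : ℝ) < 0)]
        push_cast
        linarith [hzt]
    have hspec := Nat.find_spec hQex
    set m0 := Nat.find hQex with hm0def
    obtain ⟨hm0pos, zt0, hzt0⟩ := hspec
    have hm0_2 : 2 ≤ m0 := by
      rcases Nat.lt_or_ge m0 2 with h | h
      · exfalso
        have hm1 : m0 = 1 := by omega
        rw [hm1] at hzt0
        push_cast at hzt0
        -- hzt0 : d * 1 = t * zt0
        have hzpos : 0 < zt0 := by
          by_contra hz
          push_neg at hz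
          have hz' : (zt0 : ℝ) ≤ 0 := by exact_mod_cast hz
          nlinarith
        have h1z : (1 : ℝ) ≤ (zt0 : ℝ) := by exact_mod_cast hzpos
        nlinarith
      · exact h
    refine ⟨m0, hm0_2, ?_⟩
    refine (prob_eq_one_iff_ae P (hWm (measurableSet_latt ((m0 : ℝ) * d)))).mpr ?_
    filter_upwards [hae_t, hae_d] with ω hht hhd
    obtain ⟨mt, hmt⟩ := hht
    obtain ⟨md, hmd⟩ := hhd
    have hm0ne : (m0 : ℤ) ≠ 0 := by exact_mod_cast (by omega : m0 ≠ 0)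
    set q := md / (m0 : ℤ) with hqdef
    set r := md % (m0 : ℤ) with hrdef
    have hr0 : 0 ≤ r := Int.emod_nonneg md hm0ne
    have hrlt : r < m0 := Int.emod_lt_of_pos md (by exact_mod_cast (by omega : 0 < m0))
    have hediv : (m0 : ℤ) * q + r = md := Int.mul_ediv_add_emod md (m0 : ℤ)
    have hrR : (r : ℝ) = (md : ℝ) - (m0 : ℝ) * (q : ℝ) := by
      have := congrArg (fun z : ℤ => (z : ℝ)) hediv
      push_cast at this
      linarith
    have h1 : d * (md : ℝ) = t * mt := by rw [← hmd, hmt]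
    have hdr : (d * (r : ℝ) : ℝ) = t * ((mt - zt0 * q : ℤ) : ℝ) := by
      rw [hrR]
      push_cast
      calc d * ((md : ℝ) - (m0 : ℝ) * q) = d * (md : ℝ) - (d * (m0 : ℝ)) * q := by ring
      _ = t * mt - (t * (zt0 : ℝ)) * q := by rw [h1, hzt0]
      _ = t * ((mt : ℝ) - (zt0 : ℝ) * q) := by ring
    have hr_eq0 : r = 0 := by
      by_contra hrne
      have hrpos : 0 < r := lt_of_le_of_ne hr0 (Ne.symm hrne)
      have hlt' : r.toNat < m0 := by omega
      have hkey := Nat.find_min hQex (hm0def ▸ hlt')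
      apply hkey
      constructor
      · omega
      · refine ⟨mt - zt0 * q, ?_⟩
        rw [show ((r.toNat : ℕ) : ℝ) = (r : ℝ) by
          rw [show ((r.toNat : ℕ) : ℝ) = ((r.toNat : ℤ) : ℝ) by push_cast; ring,
            Int.toNat_of_nonneg hr0]]
        exact hdr
    refine ⟨q, ?_⟩
    rw [hmd, show md = (m0 : ℤ) * q by omega]
    push_cast
    ring


end Lem43Aux

/-- Lemma 4.3: for all `x ≫ 1`, `W(x)` is lattice valued with span `d`. -/
theorem W_has_span_d
    {Ω : Type} [MeasurableSpace Ω] (P : Measure Ω) [IsProbabilityMeasure P]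
    (X Y : Ω → ℝ) (Xn Yn : ℕ → Ω → ℝ)
    (hX : Measurable X) (hY : Measurable Y)
    (hXn : ∀ n, Measurable (Xn n)) (hYn : ∀ n, Measurable (Yn n))
    (hiid : ∀ n, Measure.map (fun ω => (Xn n ω, Yn n ω)) P = Measure.map (fun ω => (X ω, Y ω)) P)
    (hindep : iIndepFun (fun n ω => (Xn n ω, Yn n ω)) P)
    (hXnondeg : ¬ ∃ c : ℝ, P {ω | X ω = c} = 1)
    (hYnondeg : ¬ ∃ c : ℝ, P {ω | Y ω = c} = 1)
    (hsup : P {ω | ∀ M : ℝ, ∃ n, M < ∑ i ∈ Finset.range n, Xn i ω} = 1)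
    -- condition (1): the law of `X` has a subcomponent with a `C²` density
    (Φ Ψ : Measure ℝ) (ρ : ℝ → ℝ)
    (hXlaw : Measure.map X P = Φ + Ψ) (hΦpos : 0 < Φ Set.univ)
    (hΦdens : Φ = volume.withDensity (fun x => ENNReal.ofReal (ρ x)))
    (hρC2 : ContDiff ℝ 2 ρ)
    -- `Y` is lattice valued with span `d`
    (d : ℝ) (hYspan : HasSpan P Y d)
    -- condition (1.24)
    (k : ℕ) (hk : 0 < k)
    (h124 : ∀ s ∈ Set.Ioc (0:ℝ) (π / d),
      ∫ ω, ‖(P[fun ω => Complex.exp (Complex.I * s * (∑ i ∈ Finset.range k, Yn i ω)) |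
        MeasurableSpace.comap (fun ω => ∑ i ∈ Finset.range k, Xn i ω) Real.measurableSpace]) ω‖ ∂P
        < 1) :
    ∃ x₀ : ℝ, ∀ x ≥ x₀, HasSpan P (WW Xn Yn x) d := by
  classical
  obtain ⟨hd, hYd, hYmax⟩ := hYspan
  have hF124 : ∀ s' ∈ Set.Ioc (0:ℝ) (π / d), Lem43Aux.Fdef P Xn Yn k s' < 1 := h124
  have hcont := Lem43Aux.Fdef_continuous P Xn Yn hXn hYn k
  have hlbpos : 0 < 2 * π / (3 * d) := by positivity
  have hlble : 2 * π / (3 * d) ≤ π / d := by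
    rw [div_le_div_iff₀ (by positivity) hd]
    nlinarith [pi_pos]
  have hne : (Set.Icc (2*π/(3*d)) (π/d)).Nonempty := ⟨2*π/(3*d), le_refl _, hlble⟩
  obtain ⟨smax, hsmem, hsmax⟩ := isCompact_Icc.exists_isMaxOn hne hcont.continuousOn
  set δ : ℝ := 1 - Lem43Aux.Fdef P Xn Yn k smax with hδdef
  have hδpos : 0 < δ := by
    have h1 := hF124 smax ⟨lt_of_lt_of_le hlbpos hsmem.1, hsmem.2⟩
    simp only [hδdef]
    linarith
  have hδbound : ∀ s' ∈ Set.Icc (2*π/(3*d)) (π/d), Lem43Aux.Fdef P Xn Yn k s' ≤ 1 - δ := by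
    intro s' hs'
    have h2 : Lem43Aux.Fdef P Xn Yn k s' ≤ Lem43Aux.Fdef P Xn Yn k smax := hsmax hs'
    simp only [hδdef]
    linarith
  have htail : ∀ j : ℕ, Tendsto (fun n : ℕ => P {ω | (n:ℝ) < ∑ i ∈ Finset.range j, Xn i ω})
      atTop (nhds 0) := by
    intro j
    have hSm : Measurable fun ω => ∑ i ∈ Finset.range j, Xn i ω :=
      Finset.measurable_sum _ fun i _ => hXn i
    have hmono : Antitone (fun n : ℕ => {ω | (n:ℝ) < ∑ i ∈ Finset.range j, Xn i ω}) := by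
      intro a b hab ω hω
      simp only [Set.mem_setOf_eq] at *
      have hab' : (a:ℝ) ≤ b := by exact_mod_cast hab
      linarith
    have hinter : ⋂ n : ℕ, {ω | (n:ℝ) < ∑ i ∈ Finset.range j, Xn i ω} = ∅ := by
      ext ω
      simp only [Set.mem_iInter, Set.mem_setOf_eq, Set.mem_empty_iff_false, iff_false,
        not_forall, not_lt]
      obtain ⟨n, hn⟩ := exists_nat_gt (∑ i ∈ Finset.range j, Xn i ω)
      exact ⟨n, hn.le⟩
    have h1 := tendsto_measure_iInter_atTop (μ := P)
      (fun n => (measurableSet_lt measurable_const hSm).nullMeasurableSet)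
      hmono ⟨0, measure_ne_top P _⟩
    rw [hinter] at h1
    simpa [Function.comp_def] using h1
  have hev : ∀ᶠ n : ℕ in atTop, ∀ j ∈ Finset.range (k+1),
      P {ω | (n:ℝ) < ∑ i ∈ Finset.range j, Xn i ω} < ENNReal.ofReal (δ/(4*(k+1))) := by
    rw [eventually_all_finset]
    intro j _
    exact (htail j).eventually_lt_const (ENNReal.ofReal_pos.mpr (by positivity))
  obtain ⟨N, hN⟩ := hev.exists
  have hsupmeas : MeasurableSet {ω | ∀ M : ℝ, ∃ n, M < ∑ i ∈ Finset.range n, Xn i ω} := by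
    have hseteq : {ω | ∀ M : ℝ, ∃ n, M < ∑ i ∈ Finset.range n, Xn i ω} =
        ⋂ M : ℕ, ⋃ n : ℕ, {ω | (M:ℝ) < ∑ i ∈ Finset.range n, Xn i ω} := by
      ext ω
      simp only [Set.mem_setOf_eq, Set.mem_iInter, Set.mem_iUnion]
      constructor
      · intro h M
        exact h M
      · intro h M
        obtain ⟨M', hM'⟩ := exists_nat_gt M
        obtain ⟨n, hn⟩ := h M'
        exact ⟨n, lt_trans hM' hn⟩
    rw [hseteq]
    exact MeasurableSet.iInter fun M => MeasurableSet.iUnion fun n =>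
      measurableSet_lt measurable_const (Finset.measurable_sum _ fun i _ => hXn i)
  have hsup_ae := (Lem43Aux.prob_eq_one_iff_ae P hsupmeas).mp hsup
  refine ⟨(N:ℝ), fun x hx => ?_⟩
  have hεbound : (P (Lem43Aux.Aset Xn k x)ᶜ).toReal < δ/2 := by
    have hsubset : (Lem43Aux.Aset Xn k x)ᶜ ⊆
        ⋃ j ∈ Finset.range (k+1), {ω | (N:ℝ) < ∑ i ∈ Finset.range j, Xn i ω} := by
      intro ω hω
      simp only [Lem43Aux.Aset, Set.mem_compl_iff, Set.mem_setOf_eq, not_forall, not_le] at hω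
      obtain ⟨j, hj, hjx⟩ := hω
      refine Set.mem_biUnion (show j ∈ Finset.range (k+1) by simp [Finset.mem_range]; omega) ?_
      simp only [Set.mem_setOf_eq]
      linarith
    have h1 : P (Lem43Aux.Aset Xn k x)ᶜ ≤
        ∑ j ∈ Finset.range (k+1), P {ω | (N:ℝ) < ∑ i ∈ Finset.range j, Xn i ω} :=
      le_trans (measure_mono hsubset) (measure_biUnion_finset_le _ _)
    have h2 : ∑ j ∈ Finset.range (k+1), P {ω | (N:ℝ) < ∑ i ∈ Finset.range j, Xn i ω} ≤
        ∑ _j ∈ Finset.range (k+1), ENNReal.ofReal (δ/(4*(k+1))) :=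
      Finset.sum_le_sum fun j hj => (hN j hj).le
    have h3 : (∑ _j ∈ Finset.range (k+1), ENNReal.ofReal (δ/(4*(k+1)))) =
        ENNReal.ofReal (((k:ℝ)+1) * (δ/(4*(k+1)))) := by
      rw [Finset.sum_const, Finset.card_range, nsmul_eq_mul,
        ← ENNReal.ofReal_natCast (k+1), ← ENNReal.ofReal_mul (by positivity)]
      push_cast
      ring_nf
    have h4 : ((k:ℝ)+1) * (δ/(4*(k+1))) = δ/4 := by
      field_simp
    have h5 : P (Lem43Aux.Aset Xn k x)ᶜ ≤ ENNReal.ofReal (δ/4) := by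
      rw [← h4, ← h3]
      exact le_trans h1 h2
    have h6 := ENNReal.toReal_le_of_le_ofReal (by positivity) h5
    linarith
  refine ⟨hd, Lem43Aux.WW_mem_span P X Y hX hY Xn Yn hXn hYn hiid d hYd x, ?_⟩
  intro t ht hWt
  by_contra hnot
  push_neg at hnot
  obtain ⟨m, hm2, hWu⟩ := Lem43Aux.exists_two_le_multiple P (Lem43Aux.measurable_WW hXn hYn x)
    hd ht hnot hWt (Lem43Aux.WW_mem_span P X Y hX hY Xn Yn hXn hYn hiid d hYd x)
  set j := m / 2 with hjdef
  have hmpos : (0:ℝ) < m := by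
    have : 0 < m := by omega
    exact_mod_cast this
  have hjpos : (0:ℝ) < j := by
    have : 0 < j := by omega
    exact_mod_cast this
  set sv := 2 * π * j / (m * d) with hsvdef
  have hsmem2 : sv ∈ Set.Icc (2*π/(3*d)) (π/d) := by
    constructor
    · rw [hsvdef, div_le_div_iff₀ (by positivity) (by positivity)]
      have h3j : (m:ℝ) ≤ 3 * j := by
        have : m ≤ 3 * j := by omega
        exact_mod_cast this
      nlinarith [mul_le_mul_of_nonneg_left h3j (show (0:ℝ) ≤ 2*π*d by positivity)]
    · rw [hsvdef, div_le_div_iff₀ (by positivity) hd]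
      have h2j : 2 * (j:ℝ) ≤ m := by
        have : 2 * j ≤ m := by omega
        exact_mod_cast this
      nlinarith [mul_le_mul_of_nonneg_left h2j (show (0:ℝ) ≤ π*d by positivity)]
  have hws : ∀ᵐ ω ∂P, ∃ z : ℤ, sv * WW Xn Yn x ω = 2 * π * z := by
    have hae := (Lem43Aux.prob_eq_one_iff_ae P ((Lem43Aux.measurable_WW hXn hYn x)
      (Lem43Aux.measurableSet_latt ((m:ℝ) * d)))).mp hWu
    filter_upwards [hae] with ω hz
    obtain ⟨z, hzz⟩ := hz
    refine ⟨(j:ℤ) * z, ?_⟩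
    rw [hzz, hsvdef]
    have hmdne : (m:ℝ) * d ≠ 0 := by positivity
    push_cast
    field_simp
  have hsupx : ∀ᵐ ω ∂P, ∃ n, x < ∑ i ∈ Finset.range n, Xn i ω := by
    filter_upwards [hsup_ae] with ω h using h x
  have hkey := Lem43Aux.key_lower_bound P Xn Yn hXn hYn hindep k x sv hsupx hws
  have hub := hδbound sv hsmem2
  linarith [hkey, hub, hεbound]
end
end

section
/- Let (X, Y) ∈ ℝ² be a random vector with X and Y nondegenerate and Pr{sup_{n≥1} Σ_{i=1}^n X_i = ∞} = 1 for i.i.d. copies X_i of X. Then: (1) for any t with 𝓓_t ≠ ∅, the map s ↦ E[e^{tY − sX}] is strictly convex on 𝓓_t, and for any t₁, t₂ and λ ∈ (0,1), (1−λ)𝓓_{t₁} + λ𝓓_{t₂} ⊂ 𝓓_{(1−λ)t₁ + λt₂}; (2) for any t ∈ ℝ, 𝓓_t is a closed interval and h(t) > −∞; in particular, if h(t) < ∞, then h(t) ∈ 𝓓_t. -/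
open MeasureTheory ProbabilityTheory Real Set Filter Asymptotics
open scoped ENNReal

noncomputable section

section AuxLemmas

variable {Ω : Type} [MeasurableSpace Ω]

private lemma expMeas' {X Y : Ω → ℝ} (hX : Measurable X) (hY : Measurable Y) (t s : ℝ) :
    Measurable fun ω => ENNReal.ofReal (Real.exp (t * Y ω - s * X ω)) :=
  (((measurable_const.mul hY).sub (measurable_const.mul hX)).exp).ennreal_ofReal

private lemma ofReal_exp_rpow' (a r : ℝ) :
    ENNReal.ofReal (Real.exp a) ^ r = ENNReal.ofReal (Real.exp (r * a)) := by
  rw [ENNReal.ofReal_rpow_of_pos (Real.exp_pos a), Real.rpow_def_of_pos (Real.exp_pos a),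
    Real.log_exp, mul_comm]

private lemma holder_key' (P : Measure Ω) {X Y : Ω → ℝ} (hX : Measurable X) (hY : Measurable Y)
    {lam : ℝ} (h0 : 0 < lam) (h1 : lam < 1) (t₁ t₂ s₁ s₂ : ℝ) :
    (∫⁻ ω, ENNReal.ofReal
        (Real.exp (((1-lam)*t₁+lam*t₂) * Y ω - ((1-lam)*s₁+lam*s₂) * X ω)) ∂P)
      ≤ (∫⁻ ω, ENNReal.ofReal (Real.exp (t₁ * Y ω - s₁ * X ω)) ∂P) ^ (1-lam)
        * (∫⁻ ω, ENNReal.ofReal (Real.exp (t₂ * Y ω - s₂ * X ω)) ∂P) ^ lam := by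
  have hl1 : (0:ℝ) < 1 - lam := by linarith
  have hpq : (1/(1-lam)).HolderConjugate (1/lam) :=
    ⟨by rw [one_div, inv_inv, one_div, inv_inv, inv_one]; ring,
      div_pos one_pos hl1, div_pos one_pos h0⟩
  have key := ENNReal.lintegral_mul_le_Lp_mul_Lq P hpq
      (f := fun ω => ENNReal.ofReal (Real.exp (t₁ * Y ω - s₁ * X ω)) ^ (1-lam))
      (g := fun ω => ENNReal.ofReal (Real.exp (t₂ * Y ω - s₂ * X ω)) ^ lam)
      ((expMeas' hX hY t₁ s₁).pow_const _).aemeasurable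
      ((expMeas' hX hY t₂ s₂).pow_const _).aemeasurable
  have e1 : ∀ ω, (ENNReal.ofReal (Real.exp (t₁ * Y ω - s₁ * X ω)) ^ (1-lam)) ^ (1/(1-lam))
      = ENNReal.ofReal (Real.exp (t₁ * Y ω - s₁ * X ω)) := fun ω => by
    rw [← ENNReal.rpow_mul, mul_one_div_cancel hl1.ne', ENNReal.rpow_one]
  have e2 : ∀ ω, (ENNReal.ofReal (Real.exp (t₂ * Y ω - s₂ * X ω)) ^ lam) ^ (1/lam)
      = ENNReal.ofReal (Real.exp (t₂ * Y ω - s₂ * X ω)) := fun ω => by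
    rw [← ENNReal.rpow_mul, mul_one_div_cancel h0.ne', ENNReal.rpow_one]
  have elhs : ∀ ω, ENNReal.ofReal (Real.exp (t₁ * Y ω - s₁ * X ω)) ^ (1-lam)
        * ENNReal.ofReal (Real.exp (t₂ * Y ω - s₂ * X ω)) ^ lam
      = ENNReal.ofReal
        (Real.exp (((1-lam)*t₁+lam*t₂) * Y ω - ((1-lam)*s₁+lam*s₂) * X ω)) := fun ω => by
    rw [ofReal_exp_rpow', ofReal_exp_rpow', ← ENNReal.ofReal_mul (Real.exp_pos _).le,
      ← Real.exp_add]
    ring_nf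
  simp only [Pi.mul_apply] at key
  simp only [e1, e2, one_div_one_div] at key
  calc (∫⁻ ω, ENNReal.ofReal
        (Real.exp (((1-lam)*t₁+lam*t₂) * Y ω - ((1-lam)*s₁+lam*s₂) * X ω)) ∂P)
      = ∫⁻ ω, ENNReal.ofReal (Real.exp (t₁ * Y ω - s₁ * X ω)) ^ (1-lam)
          * ENNReal.ofReal (Real.exp (t₂ * Y ω - s₂ * X ω)) ^ lam ∂P :=
        lintegral_congr fun ω => (elhs ω).symm
    _ ≤ _ := key

private lemma Dset_comb' (P : Measure Ω) {X Y : Ω → ℝ} (hX : Measurable X) (hY : Measurable Y)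
    {lam : ℝ} (h0 : 0 < lam) (h1 : lam < 1) {t₁ t₂ s₁ s₂ : ℝ}
    (hs₁ : s₁ ∈ Dset P X Y t₁) (hs₂ : s₂ ∈ Dset P X Y t₂) :
    (1-lam)*s₁ + lam*s₂ ∈ Dset P X Y ((1-lam)*t₁ + lam*t₂) := by
  simp only [Dset, mem_setOf_eq] at hs₁ hs₂ ⊢
  refine le_trans (holder_key' P hX hY h0 h1 t₁ t₂ s₁ s₂) ?_
  have hb1 : (∫⁻ ω, ENNReal.ofReal (Real.exp (t₁ * Y ω - s₁ * X ω)) ∂P) ^ (1-lam)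
      ≤ (1:ℝ≥0∞) ^ (1-lam) := ENNReal.rpow_le_rpow hs₁ (by linarith)
  have hb2 : (∫⁻ ω, ENNReal.ofReal (Real.exp (t₂ * Y ω - s₂ * X ω)) ∂P) ^ lam
      ≤ (1:ℝ≥0∞) ^ lam := ENNReal.rpow_le_rpow hs₂ h0.le
  calc _ ≤ (1:ℝ≥0∞) ^ (1-lam) * 1 ^ lam := mul_le_mul' hb1 hb2
    _ = 1 := by simp

private lemma Dset_convex' (P : Measure Ω) {X Y : Ω → ℝ} (hX : Measurable X) (hY : Measurable Y)
    (t : ℝ) : Convex ℝ (Dset P X Y t) := by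
  intro x hx y hy a b ha hb hab
  rcases eq_or_lt_of_le ha with rfl | ha'
  · simp only [zero_smul, zero_add]
    rw [show b = 1 by linarith, one_smul]; exact hy
  rcases eq_or_lt_of_le hb with rfl | hb'
  · simp only [zero_smul, add_zero]
    rw [show a = 1 by linarith, one_smul]; exact hx
  have h := Dset_comb' P hX hY hb' (by linarith : b < 1) (t₁ := t) (t₂ := t) hx hy
  have e1 : (1:ℝ) - b = a := by linarith
  rw [e1] at h
  have e2 : a * t + b * t = t := by rw [← add_mul, hab, one_mul]
  rw [e2] at h
  simpa [smul_eq_mul] using h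

private lemma Dset_closed' (P : Measure Ω) {X Y : Ω → ℝ} (hX : Measurable X) (hY : Measurable Y)
    (t : ℝ) : IsClosed (Dset P X Y t) := by
  apply IsSeqClosed.isClosed
  intro u s hu hus
  simp only [Dset, mem_setOf_eq] at hu ⊢
  have hpt : ∀ ω : Ω, Tendsto (fun n => ENNReal.ofReal (Real.exp (t * Y ω - u n * X ω))) atTop
      (nhds (ENNReal.ofReal (Real.exp (t * Y ω - s * X ω)))) := by
    intro ω
    exact ((ENNReal.continuous_ofReal.comp Real.continuous_exp).tendsto _).comp
      (Tendsto.sub tendsto_const_nhds (hus.mul_const _))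
  calc ∫⁻ ω, ENNReal.ofReal (Real.exp (t * Y ω - s * X ω)) ∂P
      = ∫⁻ ω, liminf (fun n => ENNReal.ofReal (Real.exp (t * Y ω - u n * X ω))) atTop ∂P :=
        lintegral_congr fun ω => ((hpt ω).liminf_eq).symm
    _ ≤ liminf (fun n => ∫⁻ ω, ENNReal.ofReal (Real.exp (t * Y ω - u n * X ω)) ∂P) atTop :=
        lintegral_liminf_le fun n => expMeas' hX hY t (u n)
    _ ≤ 1 := liminf_le_of_frequently_le' (Frequently.of_forall hu)

private lemma Xpos' (P : Measure Ω) [IsProbabilityMeasure P] {X Y : Ω → ℝ} {Xn Yn : ℕ → Ω → ℝ}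
    (hX : Measurable X) (hY : Measurable Y)
    (hXn : ∀ n, Measurable (Xn n)) (hYn : ∀ n, Measurable (Yn n))
    (hiid : ∀ n, Measure.map (fun ω => (Xn n ω, Yn n ω)) P = Measure.map (fun ω => (X ω, Y ω)) P)
    (hsup : P {ω | ∀ M : ℝ, ∃ n, M < ∑ i ∈ Finset.range n, Xn i ω} = 1) :
    0 < P {ω | 0 < X ω} := by
  rcases eq_or_lt_of_le (zero_le : (0:ℝ≥0∞) ≤ P {ω | 0 < X ω}) with h | h
  · exfalso
    have hXle : P {ω | X ω ≤ 0} = 1 := by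
      have hc : {ω | X ω ≤ 0} = {ω | 0 < X ω}ᶜ := by ext ω; simp [not_lt]
      rw [hc, prob_compl_eq_one_sub (measurableSet_lt measurable_const hX), ← h]
      simp
    have hmarg : ∀ n, P {ω | Xn n ω ≤ 0} = 1 := by
      intro n
      have hm : Measurable fun ω => (Xn n ω, Yn n ω) := (hXn n).prodMk (hYn n)
      have hm' : Measurable fun ω => (X ω, Y ω) := hX.prodMk hY
      have hset : MeasurableSet {p : ℝ × ℝ | p.1 ≤ 0} :=
        measurableSet_le measurable_fst measurable_const
      have h2 := congrArg (fun μ : Measure (ℝ × ℝ) => μ {p : ℝ × ℝ | p.1 ≤ 0}) (hiid n)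
      rw [Measure.map_apply hm hset, Measure.map_apply hm' hset] at h2
      have e1 : (fun ω => (Xn n ω, Yn n ω)) ⁻¹' {p : ℝ × ℝ | p.1 ≤ 0} = {ω | Xn n ω ≤ 0} := rfl
      have e2 : (fun ω => (X ω, Y ω)) ⁻¹' {p : ℝ × ℝ | p.1 ≤ 0} = {ω | X ω ≤ 0} := rfl
      rw [e1, e2] at h2
      rw [h2, hXle]
    have hnull : P (⋃ n, {ω | 0 < Xn n ω}) = 0 := by
      refine measure_iUnion_null fun n => ?_
      have hc : {ω | 0 < Xn n ω} = {ω | Xn n ω ≤ 0}ᶜ := by ext ω; simp [not_le]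
      rw [hc, prob_compl_eq_one_sub (measurableSet_le (hXn n) measurable_const), hmarg n]
      simp
    set G := {ω | ∀ M : ℝ, ∃ n, M < ∑ i ∈ Finset.range n, Xn i ω} \ (⋃ n, {ω | 0 < Xn n ω})
    have hG : P G = 1 := by rw [measure_diff_null hnull, hsup]
    have hGne : G.Nonempty := by
      rw [Set.nonempty_iff_ne_empty]
      intro he
      rw [he, measure_empty] at hG
      exact one_ne_zero hG.symm
    obtain ⟨ω, hω1, hω2⟩ := hGne
    obtain ⟨n, hn⟩ := hω1 0
    have : ∑ i ∈ Finset.range n, Xn i ω ≤ 0 := by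
      refine Finset.sum_nonpos fun i _ => ?_
      by_contra hi
      exact hω2 (Set.mem_iUnion.2 ⟨i, by simpa [not_le] using hi⟩)
    linarith
  · exact h

private lemma Dset_bdd' (P : Measure Ω) [IsProbabilityMeasure P] {X Y : Ω → ℝ}
    (hX : Measurable X) (hY : Measurable Y) (hpos : 0 < P {ω | 0 < X ω}) (t : ℝ) :
    BddBelow (Dset P X Y t) := by
  obtain ⟨j, hj⟩ : ∃ j : ℕ, 0 < P {ω | (1:ℝ)/(j+1) < X ω} := by
    by_contra h
    push_neg at h
    have hsub : {ω | 0 < X ω} ⊆ ⋃ j : ℕ, {ω | (1:ℝ)/(j+1) < X ω} := fun ω hω => by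
      obtain ⟨j, hj⟩ := exists_nat_one_div_lt (K := ℝ) hω
      exact Set.mem_iUnion.2 ⟨j, hj⟩
    exact absurd (measure_mono_null hsub
      (measure_iUnion_null fun j => le_zero_iff.mp (h j))) (ne_of_gt hpos)
  set ε : ℝ := 1/(j+1) with hεdef
  have hε : 0 < ε := by positivity
  obtain ⟨m, hm⟩ : ∃ m : ℕ, 0 < P ({ω | ε < X ω} ∩ {ω | |Y ω| ≤ m}) := by
    by_contra h
    push_neg at h
    have hsub : {ω | ε < X ω} ⊆ ⋃ m : ℕ, ({ω | ε < X ω} ∩ {ω | |Y ω| ≤ m}) := fun ω hω => by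
      obtain ⟨m, hm⟩ := exists_nat_ge |Y ω|
      exact Set.mem_iUnion.2 ⟨m, hω, hm⟩
    exact absurd (measure_mono_null hsub
      (measure_iUnion_null fun m => le_zero_iff.mp (h m))) (ne_of_gt hj)
  set A := {ω | ε < X ω} ∩ {ω | |Y ω| ≤ m} with hAdef
  set c : ℝ := (P A).toReal with hcdef
  have hc : 0 < c := ENNReal.toReal_pos (ne_of_gt hm) (measure_ne_top P A)
  set s₀ : ℝ := min 0 ((Real.log c - |t| * m)/ε) - 1 with hs₀def
  refine ⟨s₀, fun s hs => ?_⟩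
  by_contra hcon
  push_neg at hcon
  have hs0 : s < 0 := by
    have := min_le_left 0 ((Real.log c - |t| * m)/ε)
    simp only [hs₀def] at hcon; linarith
  have hslt : s * ε < Real.log c - |t| * m := by
    have h1 : s < (Real.log c - |t| * m)/ε := by
      have := min_le_right 0 ((Real.log c - |t| * m)/ε)
      simp only [hs₀def] at hcon; linarith
    calc s * ε < ((Real.log c - |t| * m)/ε) * ε := by
          exact mul_lt_mul_of_pos_right h1 hε
      _ = Real.log c - |t| * m := by field_simp
  have key : ∀ ω ∈ A, Real.exp (-(|t| * m) - s * ε) ≤ Real.exp (t * Y ω - s * X ω) := by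
    intro ω hω
    apply Real.exp_le_exp.2
    have habs : |t * Y ω| ≤ |t| * m := by
      rw [abs_mul]
      exact mul_le_mul_of_nonneg_left hω.2 (abs_nonneg t)
    have h1 : -(|t| * m) ≤ t * Y ω := by
      have := neg_abs_le (t * Y ω); linarith
    have h2 : -(s * ε) ≤ -(s * X ω) := by
      have := mul_le_mul_of_nonneg_left hω.1.le (by linarith : (0:ℝ) ≤ -s)
      nlinarith
    linarith
  have hlow : ENNReal.ofReal (Real.exp (-(|t| * m) - s * ε)) * P A
      ≤ ∫⁻ ω, ENNReal.ofReal (Real.exp (t * Y ω - s * X ω)) ∂P := by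
    calc ENNReal.ofReal (Real.exp (-(|t| * m) - s * ε)) * P A
        = ∫⁻ _ in A, ENNReal.ofReal (Real.exp (-(|t| * m) - s * ε)) ∂P :=
          (setLIntegral_const A _).symm
      _ ≤ ∫⁻ ω in A, ENNReal.ofReal (Real.exp (t * Y ω - s * X ω)) ∂P :=
          setLIntegral_mono (expMeas' hX hY t s)
            fun ω hω => ENNReal.ofReal_le_ofReal (key ω hω)
      _ ≤ _ := setLIntegral_le_lintegral A _
  have hgt : (1:ℝ≥0∞) < ENNReal.ofReal (Real.exp (-(|t| * m) - s * ε)) * P A := by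
    have hPA : P A = ENNReal.ofReal c := (ENNReal.ofReal_toReal (measure_ne_top P A)).symm
    rw [hPA, ← ENNReal.ofReal_mul (Real.exp_pos _).le]
    have hreal : 1 < Real.exp (-(|t| * m) - s * ε) * c := by
      have h3 : Real.exp (-(Real.log c)) < Real.exp (-(|t| * m) - s * ε) :=
        Real.exp_lt_exp.2 (by linarith)
      rw [Real.exp_neg, Real.exp_log hc] at h3
      have h4 : c⁻¹ * c < Real.exp (-(|t| * m) - s * ε) * c :=
        mul_lt_mul_of_pos_right h3 hc
      rwa [inv_mul_cancel₀ (ne_of_gt hc)] at h4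
    exact ENNReal.one_lt_ofReal.2 hreal
  exact lt_irrefl _ (lt_of_lt_of_le hgt (le_trans hlow hs))

private lemma integrable_of_memD' (P : Measure Ω) {X Y : Ω → ℝ}
    (hX : Measurable X) (hY : Measurable Y)
    {t s : ℝ} (hs : s ∈ Dset P X Y t) :
    Integrable (fun ω => Real.exp (t * Y ω - s * X ω)) P := by
  constructor
  · exact (((measurable_const.mul hY).sub (measurable_const.mul hX)).exp).aestronglyMeasurable
  · rw [hasFiniteIntegral_iff_ofReal (Eventually.of_forall fun ω => (Real.exp_pos _).le)]
    exact lt_of_le_of_lt hs ENNReal.one_lt_top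

private lemma strict_cvx' (P : Measure Ω) [IsProbabilityMeasure P] {X Y : Ω → ℝ}
    (hX : Measurable X) (hY : Measurable Y)
    (hXne : 0 < P {ω | X ω ≠ 0}) (t : ℝ) :
    StrictConvexOn ℝ (Dset P X Y t) (fun s => ∫ ω, Real.exp (t * Y ω - s * X ω) ∂P) := by
  refine ⟨Dset_convex' P hX hY t, ?_⟩
  intro x hx y hy hxy a b ha hb hab
  simp only [smul_eq_mul]
  set sm := a * x + b * y with hsm
  have hmidD : sm ∈ Dset P X Y t := by
    have h := Dset_comb' P hX hY hb (by linarith : b < 1) (t₁ := t) (t₂ := t) hx hy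
    rw [show (1:ℝ) - b = a by linarith, show a * t + b * t = t by
      rw [← add_mul, hab, one_mul]] at h
    exact h
  have hi1 := integrable_of_memD' P hX hY hx
  have hi2 := integrable_of_memD' P hX hY hy
  have him := integrable_of_memD' P hX hY hmidD
  set g : Ω → ℝ := fun ω => a * Real.exp (t * Y ω - x * X ω) + b * Real.exp (t * Y ω - y * X ω)
      - Real.exp (t * Y ω - sm * X ω) with hg
  have harg : ∀ ω : Ω, t * Y ω - sm * X ω
      = a * (t * Y ω - x * X ω) + b * (t * Y ω - y * X ω) := fun ω => by
    rw [hsm]; linear_combination (t * Y ω) * hab.symm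
  have hgnn : ∀ ω, 0 ≤ g ω := fun ω => by
    have h := convexOn_exp.2 (mem_univ (t * Y ω - x * X ω)) (mem_univ (t * Y ω - y * X ω))
      ha.le hb.le hab
    simp only [smul_eq_mul] at h
    simp only [hg, harg ω]
    linarith
  have hgpos : ∀ ω, X ω ≠ 0 → 0 < g ω := fun ω hω => by
    have hne : t * Y ω - x * X ω ≠ t * Y ω - y * X ω := by
      intro h
      exact hxy (mul_right_cancel₀ hω (by linarith))
    have h := strictConvexOn_exp.2 (mem_univ (t * Y ω - x * X ω))
      (mem_univ (t * Y ω - y * X ω)) hne ha hb hab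
    simp only [smul_eq_mul] at h
    simp only [hg, harg ω]
    linarith
  have hgint : Integrable g P := ((hi1.const_mul a).add (hi2.const_mul b)).sub him
  have hipos : 0 < ∫ ω, g ω ∂P := by
    rw [integral_pos_iff_support_of_nonneg hgnn hgint]
    refine lt_of_lt_of_le hXne (measure_mono fun ω hω => ?_)
    exact ne_of_gt (hgpos ω hω)
  rw [hg] at hipos
  beta_reduce at hipos
  have hsumint : Integrable (fun ω => a * Real.exp (t * Y ω - x * X ω)
      + b * Real.exp (t * Y ω - y * X ω)) P := (hi1.const_mul a).add (hi2.const_mul b)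
  rw [integral_sub hsumint him,
    integral_add (hi1.const_mul a) (hi2.const_mul b),
    MeasureTheory.integral_const_mul, MeasureTheory.integral_const_mul] at hipos
  linarith

end AuxLemmas

/-- Lemma 6.1, parts (1) and (2). -/
theorem Dset_convexity_properties
    {Ω : Type} [MeasurableSpace Ω] (P : Measure Ω) [IsProbabilityMeasure P]
    (X Y : Ω → ℝ) (Xn Yn : ℕ → Ω → ℝ)
    (hX : Measurable X) (hY : Measurable Y)
    (hXn : ∀ n, Measurable (Xn n)) (hYn : ∀ n, Measurable (Yn n))
    (hiid : ∀ n, Measure.map (fun ω => (Xn n ω, Yn n ω)) P = Measure.map (fun ω => (X ω, Y ω)) P)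
    (hindep : iIndepFun (fun n ω => (Xn n ω, Yn n ω)) P)
    (hXnondeg : ¬ ∃ c : ℝ, P {ω | X ω = c} = 1)
    (hYnondeg : ¬ ∃ c : ℝ, P {ω | Y ω = c} = 1)
    (hsup : P {ω | ∀ M : ℝ, ∃ n, M < ∑ i ∈ Finset.range n, Xn i ω} = 1)
    :
    -- (1): strict convexity of `s ↦ E[e^{tY - sX}]` on `𝓓_t`, and the Minkowski inclusion
    (∀ t : ℝ, (Dset P X Y t).Nonempty →
      StrictConvexOn ℝ (Dset P X Y t) (fun s => ∫ ω, Real.exp (t * Y ω - s * X ω) ∂P)) ∧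
    (∀ t₁ t₂ lam : ℝ, lam ∈ Set.Ioo (0:ℝ) 1 →
      ∀ s₁ ∈ Dset P X Y t₁, ∀ s₂ ∈ Dset P X Y t₂,
        (1 - lam) * s₁ + lam * s₂ ∈ Dset P X Y ((1 - lam) * t₁ + lam * t₂)) ∧
    -- (2): `𝓓_t` is a closed interval, `h(t) > -∞`, and `h(t) ∈ 𝓓_t` whenever `h(t) < ∞`
    (∀ t : ℝ, IsClosed (Dset P X Y t) ∧ (Dset P X Y t).OrdConnected ∧
      BddBelow (Dset P X Y t) ∧
      ((Dset P X Y t).Nonempty → sInf (Dset P X Y t) ∈ Dset P X Y t)) := by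
  have hXne : 0 < P {ω | X ω ≠ 0} := by
    rcases eq_or_lt_of_le (zero_le : (0:ℝ≥0∞) ≤ P {ω | X ω ≠ 0}) with h | h
    · exfalso
      apply hXnondeg
      refine ⟨0, ?_⟩
      have hmeas : MeasurableSet {ω | X ω ≠ 0} :=
        (measurableSet_eq_fun hX measurable_const).compl
      have hc : {ω | X ω = 0} = {ω | X ω ≠ 0}ᶜ := by ext ω; simp
      rw [hc, prob_compl_eq_one_sub hmeas, ← h]
      simp
    · exact h
  have hpos : 0 < P {ω | 0 < X ω} := Xpos' P hX hY hXn hYn hiid hsup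
  refine ⟨fun t _ => strict_cvx' P hX hY hXne t, ?_, fun t => ?_⟩
  · intro t₁ t₂ lam hlam s₁ h1 s₂ h2
    exact Dset_comb' P hX hY hlam.1 hlam.2 h1 h2
  · refine ⟨Dset_closed' P hX hY t, (Dset_convex' P hX hY t).ordConnected,
      Dset_bdd' P hX hY hpos t, fun hne => ?_⟩
    exact (Dset_closed' P hX hY t).csInf_mem hne (Dset_bdd' P hX hY hpos t)
end
end

section
/- Let (X, Y) ∈ ℝ² be a random vector with X and Y nondegenerate and Pr{sup_{n≥1} Σ_{i=1}^n X_i = ∞} = 1 for i.i.d. copies X_i of X. Then: (3) h is convex on 𝓐 = {t ∈ ℝ : h(t) < ∞} and h(0) = 0; (4) 𝓐 is an interval containing 0, and for any t ∈ 𝓐, if the interior of 𝓓_t is nonempty, then the interior of 𝓓_s is nonempty for all s in the interior of 𝓐. -/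
open MeasureTheory ProbabilityTheory Real Set Filter Asymptotics
open scoped ENNReal

noncomputable section

section Aux

variable {Ω : Type} [MeasurableSpace Ω]

/-- Hölder's inequality: the region `{(t,s) : E[e^{tY-sX}] ≤ 1}` is convex. -/
lemma key_holder (P : Measure Ω)
    (X Y : Ω → ℝ) (hX : Measurable X) (hY : Measurable Y)
    {t₁ s₁ t₂ s₂ a b : ℝ} (ha : 0 ≤ a) (hb : 0 ≤ b) (hab : a + b = 1)
    (h₁ : s₁ ∈ Dset P X Y t₁) (h₂ : s₂ ∈ Dset P X Y t₂) :
    a * s₁ + b * s₂ ∈ Dset P X Y (a * t₁ + b * t₂) := by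
  rcases ha.eq_or_lt with rfl | ha'
  · simp only [zero_add] at hab; subst hab; simpa using h₂
  rcases hb.eq_or_lt with rfl | hb'
  · simp only [add_zero] at hab; subst hab; simpa using h₁
  set A₁ : Ω → ℝ := fun ω => t₁ * Y ω - s₁ * X ω with hA₁
  set A₂ : Ω → ℝ := fun ω => t₂ * Y ω - s₂ * X ω with hA₂
  have hmeas₁ : Measurable fun ω => ENNReal.ofReal (Real.exp (A₁ ω)) :=
    (((hY.const_mul t₁).sub (hX.const_mul s₁)).exp).ennreal_ofReal
  have hmeas₂ : Measurable fun ω => ENNReal.ofReal (Real.exp (A₂ ω)) :=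
    (((hY.const_mul t₂).sub (hX.const_mul s₂)).exp).ennreal_ofReal
  have hpt : ∀ ω, ENNReal.ofReal (Real.exp ((a * t₁ + b * t₂) * Y ω - (a * s₁ + b * s₂) * X ω))
      = (ENNReal.ofReal (Real.exp (A₁ ω))) ^ a * (ENNReal.ofReal (Real.exp (A₂ ω))) ^ b := by
    intro ω
    have : (a * t₁ + b * t₂) * Y ω - (a * s₁ + b * s₂) * X ω = A₁ ω * a + A₂ ω * b := by
      simp only [hA₁, hA₂]; ring
    rw [this, Real.exp_add, Real.exp_mul, Real.exp_mul, ENNReal.ofReal_mul (by positivity),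
      ENNReal.ofReal_rpow_of_pos (Real.exp_pos _), ENNReal.ofReal_rpow_of_pos (Real.exp_pos _)]
  have hconj : (1/a).HolderConjugate (1/b) := Real.holderConjugate_one_div ha' hb' hab
  calc ∫⁻ ω, ENNReal.ofReal (Real.exp ((a * t₁ + b * t₂) * Y ω - (a * s₁ + b * s₂) * X ω)) ∂P
      = ∫⁻ ω, ((fun ω => (ENNReal.ofReal (Real.exp (A₁ ω))) ^ a) *
          (fun ω => (ENNReal.ofReal (Real.exp (A₂ ω))) ^ b)) ω ∂P := by
        simp only [Pi.mul_apply]; exact lintegral_congr hpt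
    _ ≤ (∫⁻ ω, ((ENNReal.ofReal (Real.exp (A₁ ω))) ^ a) ^ (1/a) ∂P) ^ (1/(1/a)) *
        (∫⁻ ω, ((ENNReal.ofReal (Real.exp (A₂ ω))) ^ b) ^ (1/b) ∂P) ^ (1/(1/b)) := by
        simpa using ENNReal.lintegral_mul_le_Lp_mul_Lq P hconj
          (hmeas₁.pow_const a).aemeasurable (hmeas₂.pow_const b).aemeasurable
    _ ≤ 1 := by
        have e₁ : ∀ ω, ((ENNReal.ofReal (Real.exp (A₁ ω))) ^ a) ^ (1/a)
            = ENNReal.ofReal (Real.exp (A₁ ω)) := by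
          intro ω; rw [← ENNReal.rpow_mul, mul_one_div, div_self ha'.ne', ENNReal.rpow_one]
        have e₂ : ∀ ω, ((ENNReal.ofReal (Real.exp (A₂ ω))) ^ b) ^ (1/b)
            = ENNReal.ofReal (Real.exp (A₂ ω)) := by
          intro ω; rw [← ENNReal.rpow_mul, mul_one_div, div_self hb'.ne', ENNReal.rpow_one]
        simp only [e₁, e₂, one_div_one_div]
        have : (∫⁻ ω, ENNReal.ofReal (Real.exp (A₁ ω)) ∂P) ^ a *
            (∫⁻ ω, ENNReal.ofReal (Real.exp (A₂ ω)) ∂P) ^ b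
            ≤ (1:ℝ≥0∞) ^ a * (1:ℝ≥0∞) ^ b := by
          gcongr
          exacts [h₁, h₂]
        simpa using this

/-- The step variable `X` takes positive values with positive probability. -/
lemma posX (P : Measure Ω) [IsProbabilityMeasure P]
    (X Y : Ω → ℝ) (Xn Yn : ℕ → Ω → ℝ)
    (hX : Measurable X) (hY : Measurable Y)
    (hXn : ∀ n, Measurable (Xn n)) (hYn : ∀ n, Measurable (Yn n))
    (hiid : ∀ n, Measure.map (fun ω => (Xn n ω, Yn n ω)) P = Measure.map (fun ω => (X ω, Y ω)) P)
    (hsup : P {ω | ∀ M : ℝ, ∃ n, M < ∑ i ∈ Finset.range n, Xn i ω} = 1) :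
    0 < P {ω | 0 < X ω} := by
  by_contra h
  push_neg at h
  have hz : P {ω | 0 < X ω} = 0 := le_antisymm h zero_le
  have hset : MeasurableSet {p : ℝ × ℝ | 0 < p.1} := measurable_fst measurableSet_Ioi
  have hzn : ∀ n, P {ω | 0 < Xn n ω} = 0 := by
    intro n
    have e1 : P {ω | 0 < Xn n ω}
        = Measure.map (fun ω => (Xn n ω, Yn n ω)) P {p : ℝ × ℝ | 0 < p.1} := by
      rw [Measure.map_apply ((hXn n).prodMk (hYn n)) hset]; rfl
    have e2 : Measure.map (fun ω => (X ω, Y ω)) P {p : ℝ × ℝ | 0 < p.1} = P {ω | 0 < X ω} := by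
      rw [Measure.map_apply (hX.prodMk hY) hset]; rfl
    rw [e1, hiid n, e2, hz]
  have hzN : P {ω | ¬ ∀ n, Xn n ω ≤ 0} = 0 := by
    have : {ω | ¬ ∀ n, Xn n ω ≤ 0} ⊆ ⋃ n, {ω | 0 < Xn n ω} := by
      intro ω hω
      push_neg at hω
      obtain ⟨n, hn⟩ := hω
      exact mem_iUnion.2 ⟨n, hn⟩
    exact le_antisymm (le_trans (measure_mono this)
      (le_of_eq (measure_iUnion_null hzn))) zero_le
  have hpt : ({ω | ∀ M : ℝ, ∃ n, M < ∑ i ∈ Finset.range n, Xn i ω} \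
      {ω | ¬ ∀ n, Xn n ω ≤ 0}).Nonempty := by
    apply nonempty_of_measure_ne_zero
    rw [measure_diff_null hzN, hsup]
    exact one_ne_zero
  obtain ⟨ω, hω1, hω2⟩ := hpt
  simp only [mem_setOf_eq, not_not] at hω2
  obtain ⟨n, hn⟩ := hω1 0
  exact absurd hn (not_lt.2 (Finset.sum_nonpos fun i _ => hω2 i))

/-- There is a set of positive probability on which `X > c > 0` and `|Y| < m`. -/
lemma exists_good_set (P : Measure Ω) [IsProbabilityMeasure P]
    (X Y : Ω → ℝ) (hpos : 0 < P {ω | 0 < X ω}) :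
    ∃ c m : ℝ, 0 < c ∧ 0 < P {ω | c < X ω ∧ |Y ω| < m} := by
  by_contra h
  push_neg at h
  have hz : ∀ n : ℕ, P {ω | 1/(n+1 : ℝ) < X ω ∧ |Y ω| < (n+1 : ℝ)} = 0 := by
    intro n
    have := h (1/(n+1 : ℝ)) (n+1 : ℝ) (by positivity)
    exact le_antisymm this zero_le
  have hsub : {ω | 0 < X ω} ⊆ ⋃ n : ℕ, {ω | 1/(n+1 : ℝ) < X ω ∧ |Y ω| < (n+1 : ℝ)} := by
    intro ω hω
    simp only [mem_setOf_eq] at hω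
    obtain ⟨n, hn⟩ := exists_nat_gt (max (1 / X ω) |Y ω|)
    refine mem_iUnion.2 ⟨n, ?_, ?_⟩
    · rw [div_lt_iff₀ (by positivity)]
      have h1 : 1 / X ω < n := lt_of_le_of_lt (le_max_left _ _) hn
      rw [div_lt_iff₀ hω] at h1
      nlinarith [hω]
    · exact lt_of_le_of_lt (le_max_right _ _) (by linarith)
  have : P {ω | 0 < X ω} ≤ P (⋃ n : ℕ, {ω | 1/(n+1 : ℝ) < X ω ∧ |Y ω| < (n+1 : ℝ)}) :=
    measure_mono hsub
  rw [measure_iUnion_null hz] at this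
  exact absurd (le_antisymm this zero_le) (ne_of_gt hpos)

/-- Each `𝓓_t` is bounded below. -/
lemma dset_lowerbound (P : Measure Ω) [IsProbabilityMeasure P]
    (X Y : Ω → ℝ) (hX : Measurable X) (hY : Measurable Y)
    (hpos : 0 < P {ω | 0 < X ω}) (t : ℝ) :
    ∃ s₀ : ℝ, ∀ s ∈ Dset P X Y t, s₀ ≤ s := by
  obtain ⟨c, m, hc, hA⟩ := exists_good_set P X Y hpos
  set A := {ω | c < X ω ∧ |Y ω| < m} with hAdef
  have hAmeas : MeasurableSet A :=
    ((measurableSet_lt measurable_const hX)).inter (measurableSet_lt hY.abs measurable_const)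
  set δ : ℝ := (P A).toReal with hδdef
  have hδpos : 0 < δ := ENNReal.toReal_pos (ne_of_gt hA) (measure_ne_top _ _)
  set s₀ : ℝ := min 0 ((-(|t| * m) - Real.log (1/δ))/c - 1) with hs₀
  refine ⟨s₀, fun s hs => ?_⟩
  by_contra hlt
  push_neg at hlt
  have hs0 : s < 0 := lt_of_lt_of_le hlt (min_le_left _ _)
  have key : (1:ℝ) < δ * Real.exp (-(|t| * m) - s * c) := by
    have h1 : s * c < -(|t| * m) - Real.log (1/δ) := by
      have := lt_of_lt_of_le hlt (min_le_right _ _)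
      have h2 : s * c < ((-(|t| * m) - Real.log (1/δ))/c - 1) * c :=
        mul_lt_mul_of_pos_right (by linarith) hc
      calc s * c < ((-(|t| * m) - Real.log (1/δ))/c - 1) * c := h2
        _ = (-(|t| * m) - Real.log (1/δ)) - c := by field_simp
        _ < -(|t| * m) - Real.log (1/δ) := by linarith
    have h3 : Real.log (1/δ) < -(|t| * m) - s * c := by linarith
    have h4 : 1/δ < Real.exp (-(|t| * m) - s * c) := by
      calc 1/δ = Real.exp (Real.log (1/δ)) := (Real.exp_log (by positivity)).symm
        _ < _ := Real.exp_lt_exp.2 h3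
    rw [div_lt_iff₀ hδpos] at h4
    linarith [h4]
  have hlow : ∀ ω ∈ A, ENNReal.ofReal (Real.exp (-(|t| * m) - s * c))
      ≤ ENNReal.ofReal (Real.exp (t * Y ω - s * X ω)) := by
    intro ω hω
    apply ENNReal.ofReal_le_ofReal
    apply Real.exp_le_exp.2
    obtain ⟨hX1, hY1⟩ := hω
    have e1 : -(|t| * m) ≤ t * Y ω := by
      have : |t * Y ω| ≤ |t| * m :=
        (abs_mul t (Y ω)).le.trans (mul_le_mul_of_nonneg_left hY1.le (abs_nonneg t))
      linarith [neg_abs_le (t * Y ω)]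
    have e2 : -s * c ≤ -s * X ω := mul_le_mul_of_nonneg_left hX1.le (by linarith)
    have := add_le_add e1 e2
    linarith
  have hint : ENNReal.ofReal (Real.exp (-(|t| * m) - s * c)) * P A
      ≤ ∫⁻ ω, ENNReal.ofReal (Real.exp (t * Y ω - s * X ω)) ∂P := by
    calc ENNReal.ofReal (Real.exp (-(|t| * m) - s * c)) * P A
        = ∫⁻ _ω in A, ENNReal.ofReal (Real.exp (-(|t| * m) - s * c)) ∂P := by
          rw [setLIntegral_const]
      _ ≤ ∫⁻ ω in A, ENNReal.ofReal (Real.exp (t * Y ω - s * X ω)) ∂P :=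
          setLIntegral_mono' hAmeas hlow
      _ ≤ ∫⁻ ω, ENNReal.ofReal (Real.exp (t * Y ω - s * X ω)) ∂P :=
          setLIntegral_le_lintegral _ _
  have h1 : (1:ℝ≥0∞) < ENNReal.ofReal (Real.exp (-(|t| * m) - s * c)) * P A := by
    have : P A = ENNReal.ofReal δ := by
      rw [hδdef, ENNReal.ofReal_toReal (measure_ne_top _ _)]
    rw [this, ← ENNReal.ofReal_mul (Real.exp_pos _).le]
    rw [show Real.exp (-(|t| * m) - s * c) * δ = δ * Real.exp (-(|t| * m) - s * c) by ring]
    exact ENNReal.one_lt_ofReal.2 key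
  exact absurd hs (not_le.2 (lt_of_lt_of_le h1 hint))

/-- Strict inequality for the mgf at half the exponent. -/
lemma mgf_half_lt_one (P : Measure Ω) [IsProbabilityMeasure P]
    (X : Ω → ℝ) (hX : Measurable X) (hpos : 0 < P {ω | 0 < X ω}) {a : ℝ} (ha : 0 < a)
    (h : ∫⁻ ω, ENNReal.ofReal (Real.exp (a * X ω)) ∂P ≤ 1) :
    ∫⁻ ω, ENNReal.ofReal (Real.exp ((a/2) * X ω)) ∂P < 1 := by
  set f : Ω → ℝ≥0∞ := fun ω => ENNReal.ofReal (Real.exp ((a/2) * X ω)) with hf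
  set g : Ω → ℝ≥0∞ := fun ω => ENNReal.ofReal (1/2 + 1/2 * Real.exp (a * X ω)) with hg
  have hsq : ∀ x : ℝ, Real.exp (a * x) = (Real.exp ((a/2) * x))^2 := by
    intro x
    rw [← Real.exp_nat_mul]
    ring_nf
  have hle : ∀ ω, f ω ≤ g ω := by
    intro ω
    apply ENNReal.ofReal_le_ofReal
    have := hsq (X ω)
    nlinarith [Real.exp_pos ((a/2) * X ω), sq_nonneg (Real.exp ((a/2) * X ω) - 1)]
  have hlt : ∀ ω, 0 < X ω → f ω < g ω := by
    intro ω hω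
    apply ENNReal.ofReal_lt_ofReal_iff_of_nonneg (Real.exp_pos _).le |>.2
    have h2 := hsq (X ω)
    have h3 : 1 < Real.exp ((a/2) * X ω) := by
      rw [show (1:ℝ) = Real.exp 0 from (Real.exp_zero).symm]
      exact Real.exp_lt_exp.2 (by positivity)
    nlinarith [sq_nonneg (Real.exp ((a/2) * X ω) - 1)]
  have hgmeas : Measurable g := by
    apply Measurable.ennreal_ofReal
    exact measurable_const.add ((hX.const_mul a).exp.const_mul _)
  have hgint : ∫⁻ ω, g ω ∂P ≤ 1 := by
    have e : ∀ ω, g ω = ENNReal.ofReal (1/2) + ENNReal.ofReal (1/2) *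
        ENNReal.ofReal (Real.exp (a * X ω)) := by
      intro ω
      show ENNReal.ofReal (1/2 + 1/2 * Real.exp (a * X ω)) = _
      rw [ENNReal.ofReal_add (by norm_num) (by positivity),
        ENNReal.ofReal_mul (by norm_num)]
    calc ∫⁻ ω, g ω ∂P
        = ∫⁻ ω, (ENNReal.ofReal (1/2) + ENNReal.ofReal (1/2) *
            ENNReal.ofReal (Real.exp (a * X ω))) ∂P := lintegral_congr e
      _ = ENNReal.ofReal (1/2) + ENNReal.ofReal (1/2) *
            ∫⁻ ω, ENNReal.ofReal (Real.exp (a * X ω)) ∂P := by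
          rw [lintegral_add_left measurable_const, lintegral_const_mul _
            ((hX.const_mul a).exp.ennreal_ofReal), lintegral_const, measure_univ, mul_one]
      _ ≤ ENNReal.ofReal (1/2) + ENNReal.ofReal (1/2) * 1 := by gcongr
      _ = 1 := by
          rw [mul_one, ← ENNReal.ofReal_add (by norm_num) (by norm_num)]
          norm_num
  have hfin : ∫⁻ ω, f ω ∂P ≠ ⊤ :=
    ne_top_of_le_ne_top (by simp) (le_trans (lintegral_mono hle) hgint)
  have := lintegral_strict_mono_of_ae_le_of_ae_lt_on (f := f) (g := g)
    hgmeas.aemeasurable hfin (Eventually.of_forall hle) (s := {ω | 0 < X ω})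
    (ne_of_gt hpos) (Eventually.of_forall hlt)
  exact lt_of_lt_of_le this hgint

/-- The random variables `Xn i` are identically distributed with `X`. -/
lemma ident_lintegral (P : Measure Ω)
    (X Y : Ω → ℝ) (Xn Yn : ℕ → Ω → ℝ)
    (hX : Measurable X) (hY : Measurable Y)
    (hXn : ∀ n, Measurable (Xn n)) (hYn : ∀ n, Measurable (Yn n))
    (hiid : ∀ n, Measure.map (fun ω => (Xn n ω, Yn n ω)) P = Measure.map (fun ω => (X ω, Y ω)) P)
    (b : ℝ) (i : ℕ) :
    ∫⁻ ω, ENNReal.ofReal (Real.exp (b * Xn i ω)) ∂P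
      = ∫⁻ ω, ENNReal.ofReal (Real.exp (b * X ω)) ∂P := by
  have hφ : Measurable fun p : ℝ × ℝ => ENNReal.ofReal (Real.exp (b * p.1)) :=
    ((measurable_fst.const_mul b).exp).ennreal_ofReal
  calc ∫⁻ ω, ENNReal.ofReal (Real.exp (b * Xn i ω)) ∂P
      = ∫⁻ p, ENNReal.ofReal (Real.exp (b * p.1)) ∂(Measure.map (fun ω => (Xn i ω, Yn i ω)) P) :=
        (lintegral_map hφ ((hXn i).prodMk (hYn i))).symm
    _ = ∫⁻ p, ENNReal.ofReal (Real.exp (b * p.1)) ∂(Measure.map (fun ω => (X ω, Y ω)) P) := by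
        rw [hiid i]
    _ = ∫⁻ ω, ENNReal.ofReal (Real.exp (b * X ω)) ∂P := lintegral_map hφ (hX.prodMk hY)

/-- The mgf of the partial sums factorises. -/
lemma prod_mgf (P : Measure Ω) [IsProbabilityMeasure P]
    (X Y : Ω → ℝ) (Xn Yn : ℕ → Ω → ℝ)
    (hX : Measurable X) (hY : Measurable Y)
    (hXn : ∀ n, Measurable (Xn n)) (hYn : ∀ n, Measurable (Yn n))
    (hiid : ∀ n, Measure.map (fun ω => (Xn n ω, Yn n ω)) P = Measure.map (fun ω => (X ω, Y ω)) P)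
    (hindep : iIndepFun (fun n ω => (Xn n ω, Yn n ω)) P)
    (b : ℝ) (n : ℕ) :
    ∫⁻ ω, ENNReal.ofReal (Real.exp (b * ∑ i ∈ Finset.range n, Xn i ω)) ∂P
      = (∫⁻ ω, ENNReal.ofReal (Real.exp (b * X ω)) ∂P) ^ n := by
  set F : ℕ → Ω → ℝ≥0∞ := fun i ω => ENNReal.ofReal (Real.exp (b * Xn i ω)) with hF
  have hFmeas : ∀ i, Measurable (F i) := fun i => ((hXn i).const_mul b).exp.ennreal_ofReal
  have hFindep : iIndepFun F P := by
    apply hindep.comp (g := fun _ (p : ℝ × ℝ) => ENNReal.ofReal (Real.exp (b * p.1)))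
    intro i
    exact ((measurable_fst.const_mul b).exp).ennreal_ofReal
  have hpt : ∀ m : ℕ, ∀ ω, ENNReal.ofReal (Real.exp (b * ∑ i ∈ Finset.range m, Xn i ω))
      = ∏ i ∈ Finset.range m, F i ω := by
    intro m ω
    rw [Finset.mul_sum, Real.exp_sum, ENNReal.ofReal_prod_of_nonneg]
    intro i _
    exact (Real.exp_pos _).le
  induction n with
  | zero => simp
  | succ n ih =>
    have hprod : Measurable (∏ j ∈ Finset.range n, F j) := by
      have : (∏ j ∈ Finset.range n, F j) = fun ω => ∏ j ∈ Finset.range n, F j ω := by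
        ext ω; simp
      rw [this]
      exact Finset.measurable_prod _ (fun i _ => hFmeas i)
    have hindep2 : IndepFun (∏ j ∈ Finset.range n, F j) (F n) P :=
      hFindep.indepFun_prod_range_succ hFmeas n
    calc ∫⁻ ω, ENNReal.ofReal (Real.exp (b * ∑ i ∈ Finset.range (n+1), Xn i ω)) ∂P
        = ∫⁻ ω, ((∏ j ∈ Finset.range n, F j) * F n) ω ∂P := by
          apply lintegral_congr
          intro ω
          rw [hpt (n+1) ω]
          simp [Finset.prod_range_succ]
      _ = (∫⁻ ω, (∏ j ∈ Finset.range n, F j) ω ∂P) * ∫⁻ ω, F n ω ∂P :=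
          lintegral_mul_eq_lintegral_mul_lintegral_of_indepFun hprod (hFmeas n) hindep2
      _ = (∫⁻ ω, ENNReal.ofReal (Real.exp (b * X ω)) ∂P) ^ (n+1) := by
          have e1 : ∫⁻ ω, (∏ j ∈ Finset.range n, F j) ω ∂P
              = (∫⁻ ω, ENNReal.ofReal (Real.exp (b * X ω)) ∂P) ^ n := by
            rw [← ih]
            apply lintegral_congr
            intro ω
            rw [hpt n ω]
            simp
          rw [e1, ident_lintegral P X Y Xn Yn hX hY hXn hYn hiid b n, pow_succ]

/-- `𝓓_0 ⊆ [0, ∞)` via a Borel–Cantelli argument. -/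
lemma dset_zero_nonneg (P : Measure Ω) [IsProbabilityMeasure P]
    (X Y : Ω → ℝ) (Xn Yn : ℕ → Ω → ℝ)
    (hX : Measurable X) (hY : Measurable Y)
    (hXn : ∀ n, Measurable (Xn n)) (hYn : ∀ n, Measurable (Yn n))
    (hiid : ∀ n, Measure.map (fun ω => (Xn n ω, Yn n ω)) P = Measure.map (fun ω => (X ω, Y ω)) P)
    (hindep : iIndepFun (fun n ω => (Xn n ω, Yn n ω)) P)
    (hsup : P {ω | ∀ M : ℝ, ∃ n, M < ∑ i ∈ Finset.range n, Xn i ω} = 1)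
    {s : ℝ} (hs : s ∈ Dset P X Y 0) : 0 ≤ s := by
  by_contra hneg
  push_neg at hneg
  set a : ℝ := -s with hadef
  have ha : 0 < a := by simp only [hadef]; linarith
  have h1 : ∫⁻ ω, ENNReal.ofReal (Real.exp (a * X ω)) ∂P ≤ 1 := by
    refine le_trans (le_of_eq ?_) hs
    apply lintegral_congr
    intro ω
    congr 1
    simp only [hadef]; ring_nf
  set b : ℝ := a/2 with hbdef
  have hb : 0 < b := by positivity
  have hpos : 0 < P {ω | 0 < X ω} := posX P X Y Xn Yn hX hY hXn hYn hiid hsup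
  set ρ : ℝ≥0∞ := ∫⁻ ω, ENNReal.ofReal (Real.exp (b * X ω)) ∂P with hρdef
  have hρ : ρ < 1 := mgf_half_lt_one P X hX hpos ha h1
  set S : ℕ → Ω → ℝ := fun n ω => ∑ i ∈ Finset.range n, Xn i ω with hSdef
  have hmarkov : ∀ n, P {ω | 0 < S n ω} ≤ ρ ^ n := by
    intro n
    have hfm : AEMeasurable (fun ω => ENNReal.ofReal (Real.exp (b * S n ω))) P := by
      apply Measurable.aemeasurable
      apply Measurable.ennreal_ofReal
      apply Measurable.exp
      exact (Finset.measurable_sum _ (fun i _ => hXn i)).const_mul b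
    have hsub : {ω | 0 < S n ω} ⊆ {ω | 1 ≤ ENNReal.ofReal (Real.exp (b * S n ω))} := by
      intro ω hω
      simp only [mem_setOf_eq] at hω ⊢
      rw [show (1:ℝ≥0∞) = ENNReal.ofReal 1 by simp]
      apply ENNReal.ofReal_le_ofReal
      rw [show (1:ℝ) = Real.exp 0 from (Real.exp_zero).symm]
      exact Real.exp_le_exp.2 (by positivity)
    calc P {ω | 0 < S n ω} ≤ P {ω | 1 ≤ ENNReal.ofReal (Real.exp (b * S n ω))} :=
          measure_mono hsub
      _ ≤ ∫⁻ ω, ENNReal.ofReal (Real.exp (b * S n ω)) ∂P := by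
          have := mul_meas_ge_le_lintegral₀ hfm 1
          simpa using this
      _ = ρ ^ n := prod_mgf P X Y Xn Yn hX hY hXn hYn hiid hindep b n
  have htsum : ∑' n, P {ω | 0 < S n ω} ≠ ⊤ := by
    have h2 : ∑' n, P {ω | 0 < S n ω} ≤ ∑' n, ρ ^ n := ENNReal.tsum_le_tsum hmarkov
    rw [ENNReal.tsum_geometric] at h2
    refine ne_top_of_le_ne_top ?_ h2
    simp only [ne_eq, ENNReal.inv_eq_top]
    rw [tsub_eq_zero_iff_le]
    exact not_le.2 hρ
  have hlimsup : P (limsup (fun n => {ω | 0 < S n ω}) atTop) = 0 :=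
    measure_limsup_atTop_eq_zero htsum
  have hsubset : {ω | ∀ M : ℝ, ∃ n, M < ∑ i ∈ Finset.range n, Xn i ω}
      ⊆ limsup (fun n => {ω | 0 < S n ω}) atTop := by
    intro ω hω
    simp only [mem_setOf_eq] at hω
    rw [limsup_eq_iInf_iSup_of_nat]
    simp only [iInf_eq_iInter, iSup_eq_iUnion, mem_iInter, mem_iUnion]
    intro N
    set M' : ℝ := max 0 ((Finset.range (N+1)).sup' (by simp) (fun k => S k ω)) with hM'
    obtain ⟨n, hn⟩ := hω M'
    have hn0 : 0 < S n ω := lt_of_le_of_lt (le_max_left _ _) hn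
    have hnN : N ≤ n := by
      by_contra hc
      push_neg at hc
      have : S n ω ≤ M' := le_trans (Finset.le_sup' (fun k => S k ω)
        (Finset.mem_range.2 (by omega))) (le_max_right _ _)
      exact absurd hn (not_lt.2 this)
    exact ⟨n, hnN, hn0⟩
  have : P {ω | ∀ M : ℝ, ∃ n, M < ∑ i ∈ Finset.range n, Xn i ω} = 0 :=
    le_antisymm (le_trans (measure_mono hsubset) (le_of_eq hlimsup)) zero_le
  rw [hsup] at this
  exact one_ne_zero this

end Aux

/-- Lemma 6.1, parts (3) and (4), where `𝓐 = {t : h(t) < ∞} = {t : 𝓓_t ≠ ∅}`. -/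
theorem hfun_convexity_properties
    {Ω : Type} [MeasurableSpace Ω] (P : Measure Ω) [IsProbabilityMeasure P]
    (X Y : Ω → ℝ) (Xn Yn : ℕ → Ω → ℝ)
    (hX : Measurable X) (hY : Measurable Y)
    (hXn : ∀ n, Measurable (Xn n)) (hYn : ∀ n, Measurable (Yn n))
    (hiid : ∀ n, Measure.map (fun ω => (Xn n ω, Yn n ω)) P = Measure.map (fun ω => (X ω, Y ω)) P)
    (hindep : iIndepFun (fun n ω => (Xn n ω, Yn n ω)) P)
    (hXnondeg : ¬ ∃ c : ℝ, P {ω | X ω = c} = 1)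
    (hYnondeg : ¬ ∃ c : ℝ, P {ω | Y ω = c} = 1)
    (hsup : P {ω | ∀ M : ℝ, ∃ n, M < ∑ i ∈ Finset.range n, Xn i ω} = 1)
    :
    -- (3): `h` is convex on `𝓐` and `h(0) = 0`
    ConvexOn ℝ {t : ℝ | (Dset P X Y t).Nonempty} (hfun P X Y) ∧
    hfun P X Y 0 = 0 ∧
    -- (4): `𝓐` is an interval containing `0`, and nonemptiness of `𝓓_t°` propagates
    {t : ℝ | (Dset P X Y t).Nonempty}.OrdConnected ∧
    (0 : ℝ) ∈ {t : ℝ | (Dset P X Y t).Nonempty} ∧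
    (∀ t ∈ {t : ℝ | (Dset P X Y t).Nonempty}, (interior (Dset P X Y t)).Nonempty →
      ∀ s ∈ interior {t : ℝ | (Dset P X Y t).Nonempty}, (interior (Dset P X Y s)).Nonempty) := by
  have hpos : 0 < P {ω | 0 < X ω} := posX P X Y Xn Yn hX hY hXn hYn hiid hsup
  have hbdd : ∀ t : ℝ, BddBelow (Dset P X Y t) := by
    intro t
    obtain ⟨s₀, hs₀⟩ := dset_lowerbound P X Y hX hY hpos t
    exact ⟨s₀, hs₀⟩
  -- membership of 0
  have mem0 : (0:ℝ) ∈ Dset P X Y 0 := by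
    show ∫⁻ ω, ENNReal.ofReal (Real.exp (0 * Y ω - 0 * X ω)) ∂P ≤ 1
    simp
  -- convexity of 𝓐
  have hAconv : Convex ℝ {t : ℝ | (Dset P X Y t).Nonempty} := by
    intro t₁ h₁ t₂ h₂ a b ha hb hab
    obtain ⟨s₁, hs₁⟩ := h₁
    obtain ⟨s₂, hs₂⟩ := h₂
    exact ⟨a * s₁ + b * s₂, key_holder P X Y hX hY ha hb hab hs₁ hs₂⟩
  -- convexity of hfun
  have hconvexOn : ConvexOn ℝ {t : ℝ | (Dset P X Y t).Nonempty} (hfun P X Y) := by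
    refine ⟨hAconv, ?_⟩
    intro t₁ h₁ t₂ h₂ a b ha hb hab
    simp only [smul_eq_mul]
    rcases ha.eq_or_lt with rfl | ha'
    · simp only [zero_add] at hab; subst hab; simp
    rcases hb.eq_or_lt with rfl | hb'
    · simp only [add_zero] at hab; subst hab; simp
    have main : ∀ s₁ ∈ Dset P X Y t₁, ∀ s₂ ∈ Dset P X Y t₂,
        hfun P X Y (a * t₁ + b * t₂) ≤ a * s₁ + b * s₂ := by
      intro s₁ hs₁ s₂ hs₂
      exact csInf_le (hbdd _) (key_holder P X Y hX hY ha hb hab hs₁ hs₂)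
    have step1 : ∀ s₂ ∈ Dset P X Y t₂,
        hfun P X Y (a * t₁ + b * t₂) ≤ a * hfun P X Y t₁ + b * s₂ := by
      intro s₂ hs₂
      have hlb : ∀ s₁ ∈ Dset P X Y t₁,
          (hfun P X Y (a * t₁ + b * t₂) - b * s₂)/a ≤ s₁ := by
        intro s₁ hs₁
        rw [div_le_iff₀ ha']
        have := main s₁ hs₁ s₂ hs₂
        linarith [mul_comm s₁ a]
      have := le_csInf h₁ hlb
      rw [div_le_iff₀ ha'] at this
      have h2 : hfun P X Y t₁ * a = a * hfun P X Y t₁ := mul_comm _ _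
      show hfun P X Y (a * t₁ + b * t₂) ≤ a * hfun P X Y t₁ + b * s₂
      have : hfun P X Y (a * t₁ + b * t₂) - b * s₂ ≤ sInf (Dset P X Y t₁) * a := this
      have heq : sInf (Dset P X Y t₁) = hfun P X Y t₁ := rfl
      rw [heq] at this
      linarith [mul_comm (hfun P X Y t₁) a]
    have hlb2 : ∀ s₂ ∈ Dset P X Y t₂,
        (hfun P X Y (a * t₁ + b * t₂) - a * hfun P X Y t₁)/b ≤ s₂ := by
      intro s₂ hs₂
      rw [div_le_iff₀ hb']
      have := step1 s₂ hs₂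
      linarith [mul_comm s₂ b]
    have := le_csInf h₂ hlb2
    rw [div_le_iff₀ hb'] at this
    have heq : sInf (Dset P X Y t₂) = hfun P X Y t₂ := rfl
    rw [heq] at this
    linarith [mul_comm (hfun P X Y t₂) b]
  -- h(0) = 0
  have h0 : hfun P X Y 0 = 0 := by
    apply le_antisymm
    · exact csInf_le (hbdd 0) mem0
    · exact le_csInf ⟨0, mem0⟩ fun s hs =>
        dset_zero_nonneg P X Y Xn Yn hX hY hXn hYn hiid hindep hsup hs
  refine ⟨hconvexOn, h0, hAconv.ordConnected, ⟨0, mem0⟩, ?_⟩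
  -- propagation of nonempty interior
  intro t ht hint s hsint
  rcases eq_or_ne s t with rfl | hst
  · exact hint
  obtain ⟨u, hu⟩ := hint
  obtain ⟨ε', hε', hball'⟩ := Metric.mem_nhds_iff.1 (mem_interior_iff_mem_nhds.1 hu)
  have hsubD : Metric.ball u ε' ⊆ Dset P X Y t := hball'
  have hu₁ : u - ε'/2 ∈ Dset P X Y t := by
    apply hsubD
    rw [Metric.mem_ball, Real.dist_eq, show u - ε'/2 - u = -(ε'/2) by ring, abs_neg,
      abs_of_nonneg (by linarith)]
    linarith
  have hu₂ : u + ε'/2 ∈ Dset P X Y t := by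
    apply hsubD
    rw [Metric.mem_ball, Real.dist_eq, show u + ε'/2 - u = ε'/2 by ring,
      abs_of_nonneg (by linarith)]
    linarith
  obtain ⟨ε, hε, hball⟩ := Metric.mem_nhds_iff.1 (mem_interior_iff_mem_nhds.1 hsint)
  have hsubA : Metric.ball s ε ⊆ {t : ℝ | (Dset P X Y t).Nonempty} := hball
  -- choose r on the far side of s from t
  have key : ∃ r : ℝ, (Dset P X Y r).Nonempty ∧ ((t < s ∧ s < r) ∨ (r < s ∧ s < t)) := by
    rcases lt_or_gt_of_ne hst with hlt | hgt
    · -- s < t ; take r := s - ε/2 < s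
      refine ⟨s - ε/2, ?_, Or.inr ⟨by linarith, hlt⟩⟩
      apply hsubA
      rw [Metric.mem_ball, Real.dist_eq, show s - ε/2 - s = -(ε/2) by ring, abs_neg,
        abs_of_nonneg (by linarith)]
      linarith
    · -- t < s ; take r := s + ε/2 > s
      refine ⟨s + ε/2, ?_, Or.inl ⟨hgt, by linarith⟩⟩
      apply hsubA
      rw [Metric.mem_ball, Real.dist_eq, show s + ε/2 - s = ε/2 by ring,
        abs_of_nonneg (by linarith)]
      linarith
  obtain ⟨r, ⟨v, hv⟩, hcase⟩ := key
  have hrt : r ≠ t := by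
    rcases hcase with ⟨h1, h2⟩ | ⟨h1, h2⟩ <;> intro hc <;> subst hc <;> linarith
  set lam : ℝ := (r - s)/(r - t) with hlamdef
  have hmul : lam * (r - t) = r - s := div_mul_cancel₀ _ (sub_ne_zero.2 hrt)
  have hlam0 : 0 < lam := by
    rcases hcase with ⟨h1, h2⟩ | ⟨h1, h2⟩
    · exact div_pos (by linarith) (by linarith)
    · exact div_pos_of_neg_of_neg (by linarith) (by linarith)
  have hlam1 : lam < 1 := by
    rcases hcase with ⟨h1, h2⟩ | ⟨h1, h2⟩
    · rw [hlamdef, div_lt_one (by linarith)]; linarith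
    · have h' : lam = (s - r)/(t - r) := by
        rw [hlamdef, ← neg_div_neg_eq]; congr 1 <;> ring
      rw [h', div_lt_one (by linarith)]; linarith
  have heq : lam * t + (1 - lam) * r = s := by linear_combination (-1 : ℝ) * hmul
  have hw₁ : lam * (u - ε'/2) + (1 - lam) * v ∈ Dset P X Y s := by
    have := key_holder P X Y hX hY (a := lam) (b := 1 - lam) hlam0.le (by linarith)
      (by ring) hu₁ hv
    rwa [heq] at this
  have hw₂ : lam * (u + ε'/2) + (1 - lam) * v ∈ Dset P X Y s := by
    have := key_holder P X Y hX hY (a := lam) (b := 1 - lam) hlam0.le (by linarith)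
      (by ring) hu₂ hv
    rwa [heq] at this
  obtain ⟨w₁, hw₁', w₂, hw₂', hwlt⟩ : ∃ w₁, w₁ ∈ Dset P X Y s ∧ ∃ w₂, w₂ ∈ Dset P X Y s ∧
      w₁ < w₂ := ⟨_, hw₁, _, hw₂, by nlinarith [mul_pos hlam0 hε']⟩
  have hDconv : Convex ℝ (Dset P X Y s) := by
    intro x₁ hx₁ x₂ hx₂ a b hha hhb hhab
    have := key_holder P X Y hX hY hha hhb hhab hx₁ hx₂
    rwa [show a * s + b * s = s by rw [← add_mul, hhab, one_mul]] at this
  have hIcc : Set.Icc w₁ w₂ ⊆ Dset P X Y s := hDconv.ordConnected.out hw₁' hw₂'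
  have hIoo : Set.Ioo w₁ w₂ ⊆ interior (Dset P X Y s) :=
    interior_maximal (le_trans Set.Ioo_subset_Icc_self hIcc) isOpen_Ioo
  exact ⟨(w₁ + w₂)/2, hIoo ⟨by linarith, by linarith⟩⟩
end
end

section
/- Let t ∈ ℝ be such that β_X < h(t) < ∞ and the interior of 𝓓_t is nonempty. Then x ↦ M_x(t) is right-continuous on [0,∞), and for every ε > 0 with h(t) + ε in the interior of 𝓓_t, there exists K_ε > 0 such that M_x(t) ≤ K_ε e^{(h(t)+ε)x} for all x > 0. Furthermore, if either h(t) ≥ 0 or ε < |h(t)|, one may take K_ε = H(h(t))/(1 − ρ(t, ε)), where H(a) = E[e^{−(0∧a)X}] + 1 and ρ(t, ε) = E[e^{tY − (h(t)+ε)X}]. -/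
set_option maxHeartbeats 1000000


open MeasureTheory ProbabilityTheory Real Set Filter Asymptotics
open scoped ENNReal

noncomputable section

section Helpers

variable {Ω : Type} [MeasurableSpace Ω] {Xn : ℕ → Ω → ℝ}

lemma measurable_comp_nat {g : Ω → ℕ} {F : ℕ → Ω → ℝ} (hg : Measurable g)
    (hF : ∀ n, Measurable (F n)) : Measurable fun ω => F (g ω) ω := by
  intro s hs
  have h : (fun ω => F (g ω) ω) ⁻¹' s = ⋃ n, g ⁻¹' {n} ∩ F n ⁻¹' s := by
    ext ω
    simp only [mem_preimage, mem_iUnion, mem_inter_iff, mem_singleton_iff]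
    exact ⟨fun h => ⟨g ω, rfl, h⟩, fun ⟨n, hn, hns⟩ => by rw [hn]; exact hns⟩
  rw [h]
  exact MeasurableSet.iUnion fun n => (hg (measurableSet_singleton n)).inter (hF n hs)

lemma NN_eq_of_greatest {x : ℝ} {ω : Ω} {n : ℕ}
    (h1 : ∀ j ≤ n, ∑ i ∈ Finset.range j, Xn i ω ≤ x)
    (h2 : ¬ (∑ i ∈ Finset.range (n+1), Xn i ω ≤ x)) : NN Xn x ω = n := by
  apply IsGreatest.csSup_eq
  constructor
  · exact h1
  · intro a ha
    by_contra hna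
    push_neg at hna
    exact h2 (ha (n+1) hna)

lemma NN_spec {x : ℝ} (hx : 0 ≤ x) {ω : Ω}
    (hω : ∃ m, x < ∑ i ∈ Finset.range m, Xn i ω) :
    (∀ j ≤ NN Xn x ω, ∑ i ∈ Finset.range j, Xn i ω ≤ x) ∧
      x < ∑ i ∈ Finset.range (NN Xn x ω + 1), Xn i ω := by
  obtain ⟨m, hm⟩ := hω
  set T := {n : ℕ | ∀ k ≤ n, ∑ i ∈ Finset.range k, Xn i ω ≤ x} with hT
  have h0 : 0 ∈ T := by
    intro k hk
    interval_cases k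
    simpa using hx
  have hbdd : BddAbove T := by
    refine ⟨m, fun a ha => ?_⟩
    by_contra hma
    push_neg at hma
    exact absurd (ha m hma.le) (not_le.2 hm)
  have hmem : NN Xn x ω ∈ T := Nat.sSup_mem ⟨0, h0⟩ hbdd
  refine ⟨hmem, ?_⟩
  have hnot : NN Xn x ω + 1 ∉ T := by
    intro hmem'
    have h2 : NN Xn x ω + 1 ≤ NN Xn x ω := le_csSup hbdd hmem'
    omega
  rw [hT] at hnot
  simp only [mem_setOf_eq] at hnot
  push_neg at hnot
  obtain ⟨j, hj, hjx⟩ := hnot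
  rcases Nat.lt_or_ge j (NN Xn x ω + 1) with hlt | hge
  · exact absurd (hmem j (by omega)) (not_le.2 hjx)
  · have : j = NN Xn x ω + 1 := le_antisymm hj hge
    rwa [this] at hjx

lemma measurable_NN (hXn : ∀ n, Measurable (Xn n)) (x : ℝ) : Measurable (NN Xn x) := by
  have hS : ∀ j : ℕ, Measurable fun ω => ∑ i ∈ Finset.range j, Xn i ω :=
    fun j => Finset.measurable_sum _ fun i _ => hXn i
  have hP : ∀ k : ℕ, MeasurableSet {ω : Ω | ∀ j ≤ k, ∑ i ∈ Finset.range j, Xn i ω ≤ x} := by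
    intro k
    have : {ω : Ω | ∀ j ≤ k, ∑ i ∈ Finset.range j, Xn i ω ≤ x}
        = ⋂ j, ⋂ (_ : j ≤ k), {ω | ∑ i ∈ Finset.range j, Xn i ω ≤ x} := by
      ext ω; simp
    rw [this]
    exact MeasurableSet.iInter fun j => MeasurableSet.iInter fun _ =>
      measurableSet_le (hS j) measurable_const
  apply measurable_to_countable'
  intro n
  rcases Nat.eq_zero_or_pos n with rfl | hn
  · have : NN Xn x ⁻¹' {0} =
        ({ω : Ω | ∀ j ≤ 0, ∑ i ∈ Finset.range j, Xn i ω ≤ x} ∩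
          {ω : Ω | ∀ j ≤ 1, ∑ i ∈ Finset.range j, Xn i ω ≤ x}ᶜ) ∪
        ({ω : Ω | ∀ j ≤ 0, ∑ i ∈ Finset.range j, Xn i ω ≤ x}ᶜ ∪
          ⋂ k, {ω : Ω | ∀ j ≤ k, ∑ i ∈ Finset.range j, Xn i ω ≤ x}) := by
      ext ω
      simp only [mem_preimage, mem_singleton_iff, mem_union, mem_inter_iff, mem_compl_iff,
        mem_iInter, mem_setOf_eq]
      constructor
      · intro hNN
        by_cases hp0 : ∀ j ≤ 0, ∑ i ∈ Finset.range j, Xn i ω ≤ x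
        · by_cases hall : ∀ k, ∀ j ≤ k, ∑ i ∈ Finset.range j, Xn i ω ≤ x
          · exact Or.inr (Or.inr hall)
          · left
            refine ⟨hp0, ?_⟩
            intro hp1
            -- T nonempty bounded: NN = greatest = 0, so p 1 fails
            push_neg at hall
            obtain ⟨k, j, hjk, hjx⟩ := hall
            have hbdd : BddAbove {n : ℕ | ∀ k ≤ n, ∑ i ∈ Finset.range k, Xn i ω ≤ x} := by
              refine ⟨j, fun a ha => ?_⟩
              by_contra hja
              push_neg at hja
              exact absurd (ha j hja.le) (not_le.2 hjx)
            have h1T : 1 ∈ {n : ℕ | ∀ k ≤ n, ∑ i ∈ Finset.range k, Xn i ω ≤ x} := hp1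
            have := le_csSup hbdd h1T
            rw [show sSup {n : ℕ | ∀ k ≤ n, ∑ i ∈ Finset.range k, Xn i ω ≤ x} = NN Xn x ω from rfl,
              hNN] at this
            omega
        · exact Or.inr (Or.inl hp0)
      · rintro (⟨hp0, hp1⟩ | hp0 | hall)
        · exact NN_eq_of_greatest hp0 (by
            intro h; exact hp1 (by intro j hj; interval_cases j <;> simp_all))
        · have hempty : {n : ℕ | ∀ k ≤ n, ∑ i ∈ Finset.range k, Xn i ω ≤ x} = ∅ := by
            ext a
            simp only [mem_setOf_eq, mem_empty_iff_false, iff_false]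
            intro ha
            exact hp0 fun j hj => ha j (hj.trans (Nat.zero_le a))
          rw [NN, hempty]
          exact csSup_empty
        · have hinf : {n : ℕ | ∀ k ≤ n, ∑ i ∈ Finset.range k, Xn i ω ≤ x} = univ := by
            ext a; simpa using fun j hj => hall a j hj
          rw [NN, hinf]
          exact Set.Infinite.Nat.sSup_eq_zero infinite_univ
    rw [this]
    exact ((hP 0).inter (hP 1).compl).union ((hP 0).compl.union (MeasurableSet.iInter hP))
  · have : NN Xn x ⁻¹' {n} =
        {ω : Ω | ∀ j ≤ n, ∑ i ∈ Finset.range j, Xn i ω ≤ x} ∩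
          {ω : Ω | ∀ j ≤ n + 1, ∑ i ∈ Finset.range j, Xn i ω ≤ x}ᶜ := by
      ext ω
      simp only [mem_preimage, mem_singleton_iff, mem_inter_iff, mem_compl_iff, mem_setOf_eq]
      constructor
      · intro hNN
        -- since n > 0, the set is nonempty and bounded with greatest n
        by_cases hp0 : (0:ℕ) ∈ {m : ℕ | ∀ k ≤ m, ∑ i ∈ Finset.range k, Xn i ω ≤ x}
        · by_cases hall : ∀ k, ∀ j ≤ k, ∑ i ∈ Finset.range j, Xn i ω ≤ x
          · exfalso
            have hinf : {m : ℕ | ∀ k ≤ m, ∑ i ∈ Finset.range k, Xn i ω ≤ x} = univ := by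
              ext a; simpa using fun j hj => hall a j hj
            rw [NN, hinf, Set.Infinite.Nat.sSup_eq_zero infinite_univ] at hNN
            omega
          · push_neg at hall
            obtain ⟨k, j, hjk, hjx⟩ := hall
            have hbdd : BddAbove {m : ℕ | ∀ k ≤ m, ∑ i ∈ Finset.range k, Xn i ω ≤ x} := by
              refine ⟨j, fun a ha => ?_⟩
              by_contra hja
              push_neg at hja
              exact absurd (ha j hja.le) (not_le.2 hjx)
            have hmem := Nat.sSup_mem ⟨0, hp0⟩ hbdd
            rw [show sSup {m : ℕ | ∀ k ≤ m, ∑ i ∈ Finset.range k, Xn i ω ≤ x} = NN Xn x ω from rfl,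
              hNN] at hmem
            refine ⟨hmem, fun hp1 => ?_⟩
            have := le_csSup hbdd hp1
            rw [show sSup {m : ℕ | ∀ k ≤ m, ∑ i ∈ Finset.range k, Xn i ω ≤ x} = NN Xn x ω from rfl,
              hNN] at this
            omega
        · exfalso
          have hempty : {m : ℕ | ∀ k ≤ m, ∑ i ∈ Finset.range k, Xn i ω ≤ x} = ∅ := by
            ext a
            simp only [mem_setOf_eq, mem_empty_iff_false, iff_false]
            intro ha
            exact hp0 fun j hj => ha j (hj.trans (Nat.zero_le a))
          rw [NN, hempty, csSup_empty] at hNN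
          simp at hNN
          omega
      · rintro ⟨hp, hp1⟩
        apply NN_eq_of_greatest hp
        intro hle
        exact hp1 (by
          intro j hj
          rcases Nat.lt_or_ge j (n+1) with h | h
          · exact hp j (by omega)
          · have : j = n + 1 := by omega
            rwa [this])
    rw [this]
    exact (hP n).inter (hP (n+1)).compl

end Helpers
lemma lintegral_prod_range' {Ω : Type} [MeasurableSpace Ω] {P : Measure Ω} [IsProbabilityMeasure P]
    (v : ℕ → Ω → ℝ≥0∞) (hv : ∀ i, Measurable (v i))
    (hind : iIndepFun v P) (n : ℕ) :
    ∫⁻ ω, ∏ i ∈ Finset.range n, v i ω ∂P = ∏ i ∈ Finset.range n, ∫⁻ ω, v i ω ∂P := by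
  induction n with
  | zero => simp
  | succ n ih =>
    simp only [Finset.prod_range_succ]
    have hi : IndepFun (∏ j ∈ Finset.range n, v j) (v n) P :=
      hind.indepFun_prod_range_succ hv n
    have hmeas : Measurable (∏ j ∈ Finset.range n, v j) := by
      have : (∏ j ∈ Finset.range n, v j) = fun ω => ∏ j ∈ Finset.range n, v j ω := by
        funext ω; simp
      rw [this]
      exact Finset.measurable_prod _ fun i _ => hv i
    have key := lintegral_mul_eq_lintegral_mul_lintegral_of_indepFun'' (μ := P)
      hmeas.aemeasurable (hv n).aemeasurable hi
    have heq : ∀ ω, (∏ j ∈ Finset.range n, v j) ω = ∏ j ∈ Finset.range n, v j ω := by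
      intro ω; simp
    calc ∫⁻ ω, (∏ i ∈ Finset.range n, v i ω) * v n ω ∂P
        = ∫⁻ ω, (∏ j ∈ Finset.range n, v j) ω * v n ω ∂P := by
          simp_rw [heq]
      _ = (∫⁻ ω, (∏ j ∈ Finset.range n, v j) ω ∂P) * ∫⁻ ω, v n ω ∂P := key
      _ = (∏ i ∈ Finset.range n, ∫⁻ ω, v i ω ∂P) * ∫⁻ ω, v n ω ∂P := by
          simp_rw [heq]; rw [ih]

section Main
variable {Ω : Type} [MeasurableSpace Ω] {P : Measure Ω} [IsProbabilityMeasure P]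
  {X Y : Ω → ℝ} {Xn Yn : ℕ → Ω → ℝ}

lemma lintegral_comp_pair (hX : Measurable X) (hY : Measurable Y)
    (hXn : ∀ n, Measurable (Xn n)) (hYn : ∀ n, Measurable (Yn n))
    (hiid : ∀ n, Measure.map (fun ω => (Xn n ω, Yn n ω)) P
      = Measure.map (fun ω => (X ω, Y ω)) P)
    (n : ℕ) {f : ℝ × ℝ → ℝ≥0∞} (hf : Measurable f) :
    ∫⁻ ω, f (Xn n ω, Yn n ω) ∂P = ∫⁻ ω, f (X ω, Y ω) ∂P := by
  rw [← lintegral_map hf ((hXn n).prodMk (hYn n)), hiid n,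
    lintegral_map hf (hX.prodMk hY)]

lemma lintegral_Fn (hX : Measurable X) (hY : Measurable Y)
    (hXn : ∀ n, Measurable (Xn n)) (hYn : ∀ n, Measurable (Yn n))
    (hiid : ∀ n, Measure.map (fun ω => (Xn n ω, Yn n ω)) P
      = Measure.map (fun ω => (X ω, Y ω)) P)
    (hindep : iIndepFun (fun n ω => (Xn n ω, Yn n ω)) P)
    (t s c : ℝ) (n : ℕ) :
    ∫⁻ ω, (∏ i ∈ Finset.range n, ENNReal.ofReal (Real.exp (t * Yn i ω - s * Xn i ω))) *
        ENNReal.ofReal (Real.exp (c * Xn n ω)) ∂P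
      = (∫⁻ ω, ENNReal.ofReal (Real.exp (t * Y ω - s * X ω)) ∂P) ^ n *
        ∫⁻ ω, ENNReal.ofReal (Real.exp (c * X ω)) ∂P := by
  classical
  set gf : ℕ → ℝ × ℝ → ℝ≥0∞ := fun i p =>
    if i = n then ENNReal.ofReal (Real.exp (c * p.1))
    else ENNReal.ofReal (Real.exp (t * p.2 - s * p.1)) with hgf
  have hgmeas : ∀ i, Measurable (gf i) := by
    intro i
    simp only [hgf]
    split_ifs
    · exact (measurable_fst.const_mul c).exp.ennreal_ofReal
    · exact ((measurable_snd.const_mul t).sub (measurable_fst.const_mul s)).exp.ennreal_ofReal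
  set v : ℕ → Ω → ℝ≥0∞ := fun i => gf i ∘ (fun ω => (Xn i ω, Yn i ω)) with hv
  have hvmeas : ∀ i, Measurable (v i) := fun i => (hgmeas i).comp ((hXn i).prodMk (hYn i))
  have hvind : iIndepFun v P := hindep.comp gf hgmeas
  have hprod : ∀ ω, (∏ i ∈ Finset.range n, ENNReal.ofReal (Real.exp (t * Yn i ω - s * Xn i ω))) *
      ENNReal.ofReal (Real.exp (c * Xn n ω)) = ∏ i ∈ Finset.range (n+1), v i ω := by
    intro ω
    rw [Finset.prod_range_succ]
    congr 1
    · refine Finset.prod_congr rfl fun i hi => ?_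
      have : i ≠ n := Nat.ne_of_lt (Finset.mem_range.1 hi)
      simp [hv, hgf, this]
    · simp [hv, hgf]
  simp_rw [hprod]
  rw [lintegral_prod_range' v hvmeas hvind (n+1), Finset.prod_range_succ]
  congr 1
  · have heach : ∀ i ∈ Finset.range n, (∫⁻ ω, v i ω ∂P)
        = ∫⁻ ω, ENNReal.ofReal (Real.exp (t * Y ω - s * X ω)) ∂P := by
      intro i hi
      have hne : i ≠ n := Nat.ne_of_lt (Finset.mem_range.1 hi)
      have hvi : v i = fun ω => ENNReal.ofReal (Real.exp (t * Yn i ω - s * Xn i ω)) := by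
        funext ω; simp [hv, hgf, hne]
      rw [hvi]
      exact lintegral_comp_pair hX hY hXn hYn hiid i
        (((measurable_snd.const_mul t).sub (measurable_fst.const_mul s)).exp.ennreal_ofReal)
    rw [Finset.prod_congr rfl heach, Finset.prod_const, Finset.card_range]
  · have : v n = fun ω => ENNReal.ofReal (Real.exp (c * Xn n ω)) := by
      funext ω; simp [hv, hgf]
    rw [this]
    exact lintegral_comp_pair hX hY hXn hYn hiid n
      ((measurable_fst.const_mul c).exp.ennreal_ofReal)

end Main

section Main2
variable {Ω : Type} [MeasurableSpace Ω] {P : Measure Ω} [IsProbabilityMeasure P]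
  {X Y : Ω → ℝ} {Xn Yn : ℕ → Ω → ℝ}

lemma ofReal_prod_exp {ι : Type*} (s : Finset ι) (f : ι → ℝ) :
    ENNReal.ofReal (∏ i ∈ s, Real.exp (f i)) = ∏ i ∈ s, ENNReal.ofReal (Real.exp (f i)) := by
  classical
  induction s using Finset.cons_induction with
  | empty => simp
  | cons a s ha ih =>
    rw [Finset.prod_cons, Finset.prod_cons, ENNReal.ofReal_mul (Real.exp_pos _).le, ih]

lemma measurable_WW (hXn : ∀ n, Measurable (Xn n)) (hYn : ∀ n, Measurable (Yn n)) (x : ℝ) :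
    Measurable (WW Xn Yn x) :=
  measurable_comp_nat (measurable_NN hXn x)
    (fun n => Finset.measurable_sum _ fun i _ => hYn i)

lemma ae_good (hXn : ∀ n, Measurable (Xn n))
    (hsup : P {ω | ∀ M : ℝ, ∃ n, M < ∑ i ∈ Finset.range n, Xn i ω} = 1) :
    ∀ᵐ ω ∂P, ∀ M : ℝ, ∃ n, M < ∑ i ∈ Finset.range n, Xn i ω := by
  have hset : {ω : Ω | ∀ M : ℝ, ∃ n, M < ∑ i ∈ Finset.range n, Xn i ω}
      = ⋂ (m : ℕ), ⋃ n, {ω : Ω | (m : ℝ) < ∑ i ∈ Finset.range n, Xn i ω} := by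
    ext ω
    simp only [mem_setOf_eq, mem_iInter, mem_iUnion]
    constructor
    · intro h m; exact h m
    · intro h M
      obtain ⟨m, hm⟩ := exists_nat_ge M
      obtain ⟨n, hn⟩ := h m
      exact ⟨n, lt_of_le_of_lt hm hn⟩
  have hmeas : MeasurableSet {ω : Ω | ∀ M : ℝ, ∃ n, M < ∑ i ∈ Finset.range n, Xn i ω} := by
    rw [hset]
    exact MeasurableSet.iInter fun m => MeasurableSet.iUnion fun n =>
      measurableSet_lt measurable_const (Finset.measurable_sum _ fun i _ => hXn i)
  have hc : P {ω : Ω | ∀ M : ℝ, ∃ n, M < ∑ i ∈ Finset.range n, Xn i ω}ᶜ = 0 := by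
    rw [measure_compl hmeas (measure_ne_top _ _), measure_univ, hsup, tsub_self]
  rw [ae_iff]
  exact hc

lemma pointwise_core (t s c x : ℝ) (hc : 0 ≤ c) (hsc : -s ≤ c) (hx : 0 ≤ x) {ω : Ω}
    (hω : ∃ m, x < ∑ i ∈ Finset.range m, Xn i ω) :
    ENNReal.ofReal (Real.exp (t * WW Xn Yn x ω)) ≤
      ENNReal.ofReal (Real.exp (s * x)) *
        ((∏ i ∈ Finset.range (NN Xn x ω),
            ENNReal.ofReal (Real.exp (t * Yn i ω - s * Xn i ω))) *
          ENNReal.ofReal (Real.exp (c * Xn (NN Xn x ω) ω))) := by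
  obtain ⟨h1, h2⟩ := NN_spec hx hω
  set n := NN Xn x ω with hn
  have hSn : ∑ i ∈ Finset.range n, Xn i ω ≤ x := h1 n le_rfl
  have hXn0 : 0 ≤ Xn n ω := by
    rw [Finset.sum_range_succ] at h2; linarith
  have hexp : s * (∑ i ∈ Finset.range n, Xn i ω) ≤ s * x + c * Xn n ω := by
    rcases le_or_gt 0 s with hs | hs
    · nlinarith [mul_nonneg hs (sub_nonneg.2 hSn), mul_nonneg hc hXn0]
    · have hgt : x - (∑ i ∈ Finset.range n, Xn i ω) < Xn n ω := by
        rw [Finset.sum_range_succ] at h2; linarith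
      nlinarith [mul_le_mul_of_nonneg_left hgt.le (neg_nonneg.2 hs.le),
        mul_le_mul_of_nonneg_right hsc hXn0]
  have hreal : Real.exp (t * WW Xn Yn x ω) ≤
      Real.exp (s * x) * ((∏ i ∈ Finset.range n, Real.exp (t * Yn i ω - s * Xn i ω)) *
        Real.exp (c * Xn n ω)) := by
    have hWW : t * WW Xn Yn x ω
        = s * (∑ i ∈ Finset.range n, Xn i ω)
          + ∑ i ∈ Finset.range n, (t * Yn i ω - s * Xn i ω) := by
      rw [WW, ← hn, Finset.sum_sub_distrib, ← Finset.mul_sum, ← Finset.mul_sum]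
      ring
    rw [hWW, Real.exp_add, Real.exp_sum]
    have hQ : (0:ℝ) ≤ ∏ i ∈ Finset.range n, Real.exp (t * Yn i ω - s * Xn i ω) :=
      Finset.prod_nonneg fun i _ => (Real.exp_pos _).le
    calc Real.exp (s * ∑ i ∈ Finset.range n, Xn i ω)
          * ∏ i ∈ Finset.range n, Real.exp (t * Yn i ω - s * Xn i ω)
        ≤ (Real.exp (s * x) * Real.exp (c * Xn n ω))
          * ∏ i ∈ Finset.range n, Real.exp (t * Yn i ω - s * Xn i ω) := by
          apply mul_le_mul_of_nonneg_right _ hQ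
          rw [← Real.exp_add]
          exact Real.exp_le_exp.2 hexp
      _ = Real.exp (s * x) * ((∏ i ∈ Finset.range n, Real.exp (t * Yn i ω - s * Xn i ω))
            * Real.exp (c * Xn n ω)) := by ring
  calc ENNReal.ofReal (Real.exp (t * WW Xn Yn x ω))
      ≤ ENNReal.ofReal (Real.exp (s * x) *
          ((∏ i ∈ Finset.range n, Real.exp (t * Yn i ω - s * Xn i ω)) *
            Real.exp (c * Xn n ω))) := ENNReal.ofReal_le_ofReal hreal
    _ = ENNReal.ofReal (Real.exp (s * x)) *
          ((∏ i ∈ Finset.range n, ENNReal.ofReal (Real.exp (t * Yn i ω - s * Xn i ω))) *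
            ENNReal.ofReal (Real.exp (c * Xn n ω))) := by
        rw [ENNReal.ofReal_mul (Real.exp_pos _).le,
          ENNReal.ofReal_mul (Finset.prod_nonneg fun i _ => (Real.exp_pos _).le),
          ofReal_prod_exp]

end Main2

section Main3
variable {Ω : Type} [MeasurableSpace Ω] {P : Measure Ω} [IsProbabilityMeasure P]
  {X Y : Ω → ℝ}

lemma rho_lt_one (hX : Measurable X) (hY : Measurable Y)
    (hXnondeg : ¬ ∃ c : ℝ, P {ω | X ω = c} = 1) {t s : ℝ}
    (hs : s ∈ interior (Dset P X Y t)) :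
    ∫⁻ ω, ENNReal.ofReal (Real.exp (t * Y ω - s * X ω)) ∂P < 1 := by
  obtain ⟨δ, hδ, hball⟩ := Metric.mem_nhds_iff.1 (mem_interior_iff_mem_nhds.1 hs)
  have ha : s - δ/2 ∈ Dset P X Y t := hball (by
    rw [Metric.mem_ball, Real.dist_eq, show s - δ/2 - s = -(δ/2) by ring, abs_neg,
      abs_of_nonneg (by linarith)]
    linarith)
  have hb : s + δ/2 ∈ Dset P X Y t := hball (by
    rw [Metric.mem_ball, Real.dist_eq, show s + δ/2 - s = δ/2 by ring,
      abs_of_nonneg (by linarith)]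
    linarith)
  set a := s - δ/2 with hadef
  set b := s + δ/2 with hbdef
  have hfa : ∫⁻ ω, ENNReal.ofReal (Real.exp (t * Y ω - a * X ω)) ∂P ≤ 1 := ha
  have hfb : ∫⁻ ω, ENNReal.ofReal (Real.exp (t * Y ω - b * X ω)) ∂P ≤ 1 := hb
  -- pointwise identity
  have hpt : ∀ ω : Ω, ENNReal.ofReal (Real.exp (t * Y ω - a * X ω)) +
      ENNReal.ofReal (Real.exp (t * Y ω - b * X ω)) =
      (ENNReal.ofReal (Real.exp (t * Y ω - s * X ω)) +
        ENNReal.ofReal (Real.exp (t * Y ω - s * X ω))) +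
      ENNReal.ofReal ((Real.exp ((t * Y ω - a * X ω)/2) -
        Real.exp ((t * Y ω - b * X ω)/2))^2) := by
    intro ω
    set p := t * Y ω - a * X ω
    set q := t * Y ω - b * X ω
    have hpq : (p + q) / 2 = t * Y ω - s * X ω := by
      simp only [p, q, hadef, hbdef]; ring
    have e1 : Real.exp (p/2) * Real.exp (p/2) = Real.exp p := by
      rw [← Real.exp_add]; ring_nf
    have e2 : Real.exp (q/2) * Real.exp (q/2) = Real.exp q := by
      rw [← Real.exp_add]; ring_nf
    have e3 : Real.exp (p/2) * Real.exp (q/2) = Real.exp (t * Y ω - s * X ω) := by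
      rw [← Real.exp_add, ← hpq]; ring_nf
    have hid : Real.exp p + Real.exp q =
        (Real.exp (t * Y ω - s * X ω) + Real.exp (t * Y ω - s * X ω)) +
          (Real.exp (p/2) - Real.exp (q/2))^2 := by
      nlinarith [e1, e2, e3]
    rw [← ENNReal.ofReal_add (Real.exp_pos _).le (Real.exp_pos _).le,
      ← ENNReal.ofReal_add (Real.exp_pos _).le (Real.exp_pos _).le,
      ← ENNReal.ofReal_add (by positivity) (sq_nonneg _)]
    exact congrArg _ hid
  -- integrate
  set ρ := ∫⁻ ω, ENNReal.ofReal (Real.exp (t * Y ω - s * X ω)) ∂P with hρ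
  set d := ∫⁻ ω, ENNReal.ofReal ((Real.exp ((t * Y ω - a * X ω)/2) -
      Real.exp ((t * Y ω - b * X ω)/2))^2) ∂P with hd
  have hmeas_s : Measurable fun ω => ENNReal.ofReal (Real.exp (t * Y ω - s * X ω)) :=
    ((hY.const_mul t).sub (hX.const_mul s)).exp.ennreal_ofReal
  have hmeas_d : Measurable fun ω => ENNReal.ofReal ((Real.exp ((t * Y ω - a * X ω)/2) -
      Real.exp ((t * Y ω - b * X ω)/2))^2) :=
    ((((hY.const_mul t).sub (hX.const_mul a)).div_const 2).exp.sub
      (((hY.const_mul t).sub (hX.const_mul b)).div_const 2).exp).pow_const 2 |>.ennreal_ofReal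
  have hsum : ρ + ρ + d ≤ 2 := by
    have hL : ∫⁻ ω, (ENNReal.ofReal (Real.exp (t * Y ω - a * X ω)) +
        ENNReal.ofReal (Real.exp (t * Y ω - b * X ω))) ∂P ≤ 2 := by
      rw [lintegral_add_left (show Measurable fun ω => ENNReal.ofReal (Real.exp (t * Y ω - a * X ω)) from
        ((hY.const_mul t).sub (hX.const_mul a)).exp.ennreal_ofReal)]
      calc _ ≤ (1:ℝ≥0∞) + 1 := add_le_add hfa hfb
        _ = 2 := by norm_num
    calc ρ + ρ + d
        = ∫⁻ ω, ((ENNReal.ofReal (Real.exp (t * Y ω - s * X ω)) +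
            ENNReal.ofReal (Real.exp (t * Y ω - s * X ω))) +
          ENNReal.ofReal ((Real.exp ((t * Y ω - a * X ω)/2) -
            Real.exp ((t * Y ω - b * X ω)/2))^2)) ∂P := by
          rw [lintegral_add_left (show Measurable fun ω => ENNReal.ofReal (Real.exp (t * Y ω - s * X ω)) +
              ENNReal.ofReal (Real.exp (t * Y ω - s * X ω)) from hmeas_s.add hmeas_s),
            lintegral_add_left hmeas_s]
      _ = ∫⁻ ω, (ENNReal.ofReal (Real.exp (t * Y ω - a * X ω)) +
            ENNReal.ofReal (Real.exp (t * Y ω - b * X ω))) ∂P := by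
          apply lintegral_congr
          intro ω
          exact (hpt ω).symm
      _ ≤ 2 := hL
  by_contra hcon
  push_neg at hcon
  have hd0 : d = 0 := by
    have h2d : 2 + d ≤ 2 := by
      calc 2 + d = 1 + 1 + d := by norm_num
        _ ≤ ρ + ρ + d := add_le_add (add_le_add hcon hcon) le_rfl
        _ ≤ 2 := hsum
    by_contra hd0
    have : (2:ℝ≥0∞) < 2 + d := ENNReal.lt_add_right (by norm_num) hd0
    exact absurd (lt_of_lt_of_le this h2d) (lt_irrefl _)
  have hae : ∀ᵐ ω ∂P, ENNReal.ofReal ((Real.exp ((t * Y ω - a * X ω)/2) -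
      Real.exp ((t * Y ω - b * X ω)/2))^2) = 0 := by
    have h := (lintegral_eq_zero_iff hmeas_d).1 hd0
    filter_upwards [h] with ω hω using hω
  have haeX : ∀ᵐ ω ∂P, X ω = 0 := by
    filter_upwards [hae] with ω hω
    rw [ENNReal.ofReal_eq_zero] at hω
    have hsq : (Real.exp ((t * Y ω - a * X ω)/2) - Real.exp ((t * Y ω - b * X ω)/2))^2 = 0 :=
      le_antisymm hω (sq_nonneg _)
    have heq : Real.exp ((t * Y ω - a * X ω)/2) = Real.exp ((t * Y ω - b * X ω)/2) := by
      have hz := sq_eq_zero_iff.1 hsq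
      linarith
    have harg : (t * Y ω - a * X ω)/2 = (t * Y ω - b * X ω)/2 := Real.exp_injective heq
    have : (b - a) * X ω = 0 := by clear_value a b; rw [sub_mul]; linarith
    have hba : b - a = δ := by rw [hadef, hbdef]; ring
    rw [hba] at this
    exact (mul_eq_zero.1 this).resolve_left (ne_of_gt hδ)
  apply hXnondeg
  refine ⟨0, ?_⟩
  rw [← measure_univ (μ := P)]
  apply measure_congr
  rw [Filter.eventuallyEq_univ]
  exact haeX

end Main3

section Main4
variable {Ω : Type} [MeasurableSpace Ω] {P : Measure Ω} [IsProbabilityMeasure P]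
  {X : Ω → ℝ}

lemma A_lt_top (hX : Measurable X) {h : ℝ} (hβ : betaX P X < (h : EReal)) :
    ∫⁻ ω, ENNReal.ofReal (Real.exp (max 0 (-h) * X ω)) ∂P < ∞ := by
  rcases le_or_gt 0 h with hh | hh
  · have hc0 : max 0 (-h) = 0 := max_eq_left (by linarith)
    simp only [hc0, zero_mul, Real.exp_zero, ENNReal.ofReal_one, lintegral_one, measure_univ]
    exact ENNReal.one_lt_top
  · set c := max 0 (-h) with hcdef
    have hc : c = -h := max_eq_right (by linarith)
    have hcpos : 0 < c := by rw [hc]; linarith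
    -- pick h' strictly between betaX and h
    obtain ⟨z, hz1, hz2⟩ := exists_between hβ
    have hzt : z ≠ ⊤ := ne_top_of_lt hz2
    have hzb : z ≠ ⊥ := by
      intro hbot
      rw [hbot] at hz1
      exact absurd hz1 (by simp)
    set h' := z.toReal with hh'
    have hzeq : (h' : EReal) = z := EReal.coe_toReal hzt hzb
    have hh'lt : h' < h := by
      have := hz2
      rw [← hzeq] at this
      exact_mod_cast this
    have hβ' : betaX P X < (h' : EReal) := by rw [hzeq]; exact hz1
    -- eventual tail bound
    have hev : ∀ᶠ u : ℝ in atTop,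
        ((Real.log (P {ω | u < X ω}).toReal / u : ℝ) : EReal) < (h' : EReal) :=
      eventually_lt_of_limsup_lt hβ'
    obtain ⟨x₀', hx₀'⟩ := eventually_atTop.1 hev
    set x₀ := max x₀' 1 with hx₀def
    have hx₀pos : (0:ℝ) < x₀ := lt_of_lt_of_le one_pos (le_max_right _ _)
    have htail : ∀ u : ℝ, x₀ ≤ u → P {ω | u < X ω} ≤ ENNReal.ofReal (Real.exp (h' * u)) := by
      intro u hu
      have hu0 : 0 < u := lt_of_lt_of_le hx₀pos hu
      have hlt := hx₀' u (le_trans (le_max_left _ _) hu)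
      rw [EReal.coe_lt_coe_iff] at hlt
      have hlog : Real.log (P {ω | u < X ω}).toReal < h' * u := by
        rw [div_lt_iff₀ hu0] at hlt
        linarith [hlt]
      rcases eq_or_ne (P {ω | u < X ω}) 0 with hz | hz
      · rw [hz]; exact zero_le
      · have hp : 0 < (P {ω | u < X ω}).toReal :=
          ENNReal.toReal_pos hz (measure_ne_top _ _)
        have : (P {ω | u < X ω}).toReal < Real.exp (h' * u) :=
          (Real.log_lt_iff_lt_exp hp).1 hlog
        calc P {ω | u < X ω} = ENNReal.ofReal (P {ω | u < X ω}).toReal :=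
              (ENNReal.ofReal_toReal (measure_ne_top _ _)).symm
          _ ≤ ENNReal.ofReal (Real.exp (h' * u)) := ENNReal.ofReal_le_ofReal this.le
    -- pointwise domination
    have hpt : ∀ ω : Ω, ENNReal.ofReal (Real.exp (c * X ω)) ≤
        ENNReal.ofReal (Real.exp (c * x₀)) +
          ∑' n : ℕ, Set.indicator {ω : Ω | x₀ + n < X ω}
            (fun _ => ENNReal.ofReal (Real.exp (c * (x₀ + n + 1)))) ω := by
      intro ω
      rcases le_or_gt (X ω) x₀ with hle | hlt
      · exact le_trans (ENNReal.ofReal_le_ofReal (Real.exp_le_exp.2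
          (mul_le_mul_of_nonneg_left hle hcpos.le))) le_self_add
      · set dd := X ω - x₀ with hdd
        have hd0 : 0 < dd := by rw [hdd]; linarith
        set m := ⌈dd⌉₊ with hm
        have hm0 : 0 < m := Nat.ceil_pos.2 hd0
        set n := m - 1 with hn
        have hkey1 : x₀ + n < X ω := by
          have : (n : ℝ) < dd := Nat.lt_ceil.1 (by omega)
          rw [hdd] at this; linarith
        have hkey2 : X ω ≤ x₀ + n + 1 := by
          have h1 : dd ≤ (m : ℝ) := Nat.le_ceil dd
          have h2 : (m : ℝ) = (n : ℝ) + 1 := by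
            have hmn : n + 1 = m := Nat.succ_pred_eq_of_pos hm0
            rw [← hmn]
            push_cast
            ring
          rw [hdd] at h1; rw [h2] at h1; linarith
        calc ENNReal.ofReal (Real.exp (c * X ω))
            ≤ ENNReal.ofReal (Real.exp (c * (x₀ + n + 1))) :=
              ENNReal.ofReal_le_ofReal (Real.exp_le_exp.2
                (mul_le_mul_of_nonneg_left hkey2 hcpos.le))
          _ = Set.indicator {ω : Ω | x₀ + n < X ω}
                (fun _ => ENNReal.ofReal (Real.exp (c * (x₀ + n + 1)))) ω := by
              exact (Set.indicator_of_mem (show ω ∈ {ω : Ω | x₀ + (n:ℝ) < X ω} from hkey1)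
                (fun _ => ENNReal.ofReal (Real.exp (c * (x₀ + (n:ℝ) + 1))))).symm
          _ ≤ ∑' k : ℕ, Set.indicator {ω : Ω | x₀ + k < X ω}
                (fun _ => ENNReal.ofReal (Real.exp (c * (x₀ + k + 1)))) ω := ENNReal.le_tsum n
          _ ≤ _ := le_add_self
    -- integrate
    have hind_meas : ∀ n : ℕ, Measurable (Set.indicator {ω : Ω | x₀ + n < X ω}
        (fun _ => ENNReal.ofReal (Real.exp (c * (x₀ + n + 1)))) : Ω → ℝ≥0∞) := by
      intro n
      exact measurable_const.indicator (measurableSet_lt measurable_const hX)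
    have hbound : ∫⁻ ω, ENNReal.ofReal (Real.exp (c * X ω)) ∂P ≤
        ENNReal.ofReal (Real.exp (c * x₀)) +
          ∑' n : ℕ, ENNReal.ofReal (Real.exp (c * (x₀ + n + 1))) * P {ω : Ω | x₀ + n < X ω} := by
      calc ∫⁻ ω, ENNReal.ofReal (Real.exp (c * X ω)) ∂P
          ≤ ∫⁻ ω, (ENNReal.ofReal (Real.exp (c * x₀)) +
              ∑' n : ℕ, Set.indicator {ω : Ω | x₀ + n < X ω}
                (fun _ => ENNReal.ofReal (Real.exp (c * (x₀ + n + 1)))) ω) ∂P :=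
            lintegral_mono hpt
        _ = ENNReal.ofReal (Real.exp (c * x₀)) +
              ∫⁻ ω, ∑' n : ℕ, Set.indicator {ω : Ω | x₀ + n < X ω}
                (fun _ => ENNReal.ofReal (Real.exp (c * (x₀ + n + 1)))) ω ∂P := by
            rw [lintegral_add_left measurable_const, lintegral_const, measure_univ, mul_one]
        _ = ENNReal.ofReal (Real.exp (c * x₀)) +
              ∑' n : ℕ, ∫⁻ ω, Set.indicator {ω : Ω | x₀ + n < X ω}
                (fun _ => ENNReal.ofReal (Real.exp (c * (x₀ + n + 1)))) ω ∂P := by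
            rw [lintegral_tsum fun n => (hind_meas n).aemeasurable]
        _ = ENNReal.ofReal (Real.exp (c * x₀)) +
              ∑' n : ℕ, ENNReal.ofReal (Real.exp (c * (x₀ + n + 1))) * P {ω : Ω | x₀ + n < X ω} := by
            congr 1
            refine tsum_congr fun n => ?_
            rw [lintegral_indicator_const (measurableSet_lt measurable_const hX)]
    -- sum the geometric series
    set r := ENNReal.ofReal (Real.exp (c + h')) with hr
    have hrlt : r < 1 := by
      rw [hr, ← ENNReal.ofReal_one]
      apply ENNReal.ofReal_lt_ofReal_iff_of_nonneg (Real.exp_pos _).le |>.2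
      apply Real.exp_lt_one_iff.2
      rw [hc]; linarith
    have hterm : ∀ n : ℕ, ENNReal.ofReal (Real.exp (c * (x₀ + n + 1))) * P {ω : Ω | x₀ + n < X ω}
        ≤ ENNReal.ofReal (Real.exp (c * (x₀ + 1) + h' * x₀)) * r ^ n := by
      intro n
      calc ENNReal.ofReal (Real.exp (c * (x₀ + n + 1))) * P {ω : Ω | x₀ + n < X ω}
          ≤ ENNReal.ofReal (Real.exp (c * (x₀ + n + 1))) *
              ENNReal.ofReal (Real.exp (h' * (x₀ + n))) := by
            apply mul_le_mul_right
            exact htail (x₀ + n) (by linarith [Nat.cast_nonneg (α := ℝ) n])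
        _ = ENNReal.ofReal (Real.exp (c * (x₀ + 1) + h' * x₀) * Real.exp ((c + h') * n)) := by
            rw [← ENNReal.ofReal_mul (Real.exp_pos _).le, ← Real.exp_add, ← Real.exp_add]
            congr 2
            ring
        _ = ENNReal.ofReal (Real.exp (c * (x₀ + 1) + h' * x₀)) * r ^ n := by
            rw [ENNReal.ofReal_mul (Real.exp_pos _).le]
            congr 1
            rw [hr, ← ENNReal.ofReal_pow (Real.exp_pos _).le, ← Real.exp_nat_mul]
            congr 1
            ring
    have hsumfin : ∑' n : ℕ, ENNReal.ofReal (Real.exp (c * (x₀ + n + 1))) *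
        P {ω : Ω | x₀ + n < X ω} < ∞ := by
      calc ∑' n : ℕ, ENNReal.ofReal (Real.exp (c * (x₀ + n + 1))) * P {ω : Ω | x₀ + n < X ω}
          ≤ ∑' n : ℕ, ENNReal.ofReal (Real.exp (c * (x₀ + 1) + h' * x₀)) * r ^ n :=
            ENNReal.tsum_le_tsum hterm
        _ = ENNReal.ofReal (Real.exp (c * (x₀ + 1) + h' * x₀)) * ∑' n : ℕ, r ^ n :=
            ENNReal.tsum_mul_left
        _ = ENNReal.ofReal (Real.exp (c * (x₀ + 1) + h' * x₀)) * (1 - r)⁻¹ := by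
            rw [ENNReal.tsum_geometric]
        _ < ∞ := by
            apply ENNReal.mul_lt_top ENNReal.ofReal_lt_top
            simp only [ENNReal.inv_lt_top]
            exact tsub_pos_of_lt hrlt
    calc ∫⁻ ω, ENNReal.ofReal (Real.exp (c * X ω)) ∂P
        ≤ _ := hbound
      _ < ∞ := by
        apply ENNReal.add_lt_top.2
        exact ⟨ENNReal.ofReal_lt_top, hsumfin⟩

end Main4

section Main5
variable {Ω : Type} [MeasurableSpace Ω] {P : Measure Ω} [IsProbabilityMeasure P]
  {X Y : Ω → ℝ} {Xn Yn : ℕ → Ω → ℝ}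

lemma lintegral_G (hX : Measurable X) (hY : Measurable Y)
    (hXn : ∀ n, Measurable (Xn n)) (hYn : ∀ n, Measurable (Yn n))
    (hiid : ∀ n, Measure.map (fun ω => (Xn n ω, Yn n ω)) P
      = Measure.map (fun ω => (X ω, Y ω)) P)
    (hindep : iIndepFun (fun n ω => (Xn n ω, Yn n ω)) P)
    (t s c : ℝ) :
    ∫⁻ ω, (∑' n : ℕ, (∏ i ∈ Finset.range n,
        ENNReal.ofReal (Real.exp (t * Yn i ω - s * Xn i ω))) *
        ENNReal.ofReal (Real.exp (c * Xn n ω))) ∂P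
      = (1 - ∫⁻ ω, ENNReal.ofReal (Real.exp (t * Y ω - s * X ω)) ∂P)⁻¹ *
        ∫⁻ ω, ENNReal.ofReal (Real.exp (c * X ω)) ∂P := by
  have hFnmeas : ∀ n : ℕ, Measurable fun ω => (∏ i ∈ Finset.range n,
      ENNReal.ofReal (Real.exp (t * Yn i ω - s * Xn i ω))) *
      ENNReal.ofReal (Real.exp (c * Xn n ω)) := by
    intro n
    apply Measurable.mul
    · exact Finset.measurable_prod _ fun i _ =>
        (((hYn i).const_mul t).sub ((hXn i).const_mul s)).exp.ennreal_ofReal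
    · exact ((hXn n).const_mul c).exp.ennreal_ofReal
  rw [lintegral_tsum fun n => (hFnmeas n).aemeasurable]
  calc ∑' n : ℕ, ∫⁻ ω, (∏ i ∈ Finset.range n,
        ENNReal.ofReal (Real.exp (t * Yn i ω - s * Xn i ω))) *
        ENNReal.ofReal (Real.exp (c * Xn n ω)) ∂P
      = ∑' n : ℕ, (∫⁻ ω, ENNReal.ofReal (Real.exp (t * Y ω - s * X ω)) ∂P) ^ n *
        ∫⁻ ω, ENNReal.ofReal (Real.exp (c * X ω)) ∂P := by
        refine tsum_congr fun n => ?_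
        exact lintegral_Fn hX hY hXn hYn hiid hindep t s c n
    _ = (∑' n : ℕ, (∫⁻ ω, ENNReal.ofReal (Real.exp (t * Y ω - s * X ω)) ∂P) ^ n) *
        ∫⁻ ω, ENNReal.ofReal (Real.exp (c * X ω)) ∂P := ENNReal.tsum_mul_right
    _ = _ := by rw [ENNReal.tsum_geometric]

lemma mgf_bound (hX : Measurable X) (hY : Measurable Y)
    (hXn : ∀ n, Measurable (Xn n)) (hYn : ∀ n, Measurable (Yn n))
    (hiid : ∀ n, Measure.map (fun ω => (Xn n ω, Yn n ω)) P
      = Measure.map (fun ω => (X ω, Y ω)) P)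
    (hindep : iIndepFun (fun n ω => (Xn n ω, Yn n ω)) P)
    (hsup' : ∀ᵐ ω ∂P, ∀ M : ℝ, ∃ n, M < ∑ i ∈ Finset.range n, Xn i ω)
    (t s c : ℝ) (hc : 0 ≤ c) (hsc : -s ≤ c) {x : ℝ} (hx : 0 ≤ x) :
    MgfW P Xn Yn x t ≤ ENNReal.ofReal (Real.exp (s * x)) *
      ((1 - ∫⁻ ω, ENNReal.ofReal (Real.exp (t * Y ω - s * X ω)) ∂P)⁻¹ *
        ∫⁻ ω, ENNReal.ofReal (Real.exp (c * X ω)) ∂P) := by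
  have step1 : MgfW P Xn Yn x t ≤ ∫⁻ ω, ENNReal.ofReal (Real.exp (s * x)) *
      (∑' n : ℕ, (∏ i ∈ Finset.range n,
        ENNReal.ofReal (Real.exp (t * Yn i ω - s * Xn i ω))) *
        ENNReal.ofReal (Real.exp (c * Xn n ω))) ∂P := by
    rw [MgfW]
    apply lintegral_mono_ae
    filter_upwards [hsup'] with ω hgood
    calc ENNReal.ofReal (Real.exp (t * WW Xn Yn x ω))
        ≤ ENNReal.ofReal (Real.exp (s * x)) *
          ((∏ i ∈ Finset.range (NN Xn x ω),
              ENNReal.ofReal (Real.exp (t * Yn i ω - s * Xn i ω))) *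
            ENNReal.ofReal (Real.exp (c * Xn (NN Xn x ω) ω))) :=
          pointwise_core t s c x hc hsc hx (hgood x)
      _ ≤ _ := mul_le_mul_right (ENNReal.le_tsum (NN Xn x ω)) _
  calc MgfW P Xn Yn x t ≤ _ := step1
    _ = ENNReal.ofReal (Real.exp (s * x)) * ∫⁻ ω, (∑' n : ℕ, (∏ i ∈ Finset.range n,
          ENNReal.ofReal (Real.exp (t * Yn i ω - s * Xn i ω))) *
          ENNReal.ofReal (Real.exp (c * Xn n ω))) ∂P := by
        apply lintegral_const_mul
        apply Measurable.ennreal_tsum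
        intro n
        apply Measurable.mul
        · exact Finset.measurable_prod _ fun i _ =>
            (((hYn i).const_mul t).sub ((hXn i).const_mul s)).exp.ennreal_ofReal
        · exact ((hXn n).const_mul c).exp.ennreal_ofReal
    _ = _ := by rw [lintegral_G hX hY hXn hYn hiid hindep t s c]

end Main5

section Main6
variable {Ω : Type} [MeasurableSpace Ω] {P : Measure Ω} [IsProbabilityMeasure P]
  {X Y : Ω → ℝ} {Xn Yn : ℕ → Ω → ℝ}

lemma exists_interior_gt (hX : Measurable X) (hY : Measurable Y)
    (hXn : ∀ n, Measurable (Xn n)) (hYn : ∀ n, Measurable (Yn n))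
    (hiid : ∀ n, Measure.map (fun ω => (Xn n ω, Yn n ω)) P
      = Measure.map (fun ω => (X ω, Y ω)) P)
    (hsup' : ∀ᵐ ω ∂P, ∀ M : ℝ, ∃ n, M < ∑ i ∈ Finset.range n, Xn i ω)
    (t : ℝ) (hint : (interior (Dset P X Y t)).Nonempty) :
    ∃ s, hfun P X Y t < s ∧ s ∈ interior (Dset P X Y t) := by
  obtain ⟨s₀, hs₀⟩ := hint
  by_cases hb : BddBelow (Dset P X Y t)
  · have hle : hfun P X Y t ≤ s₀ := csInf_le hb (interior_subset hs₀)
    rcases lt_or_eq_of_le hle with hlt | heq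
    · exact ⟨s₀, hlt, hs₀⟩
    · obtain ⟨δ, hδ, hball⟩ := Metric.isOpen_iff.1 isOpen_interior s₀ hs₀
      refine ⟨s₀ + δ/2, by rw [← heq]; linarith, hball ?_⟩
      rw [Metric.mem_ball, Real.dist_eq, show s₀ + δ/2 - s₀ = δ/2 by ring,
        abs_of_nonneg (by linarith)]
      linarith
  · exfalso
    rw [not_bddBelow_iff] at hb
    have hseq : ∀ k : ℕ, ∃ a, a ∈ Dset P X Y t ∧ a < -(k:ℝ) := by
      intro k
      obtain ⟨a, ha, hlt⟩ := hb (-(k:ℝ))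
      exact ⟨a, ha, hlt⟩
    choose aa haamem haalt using hseq
    have hfk : ∀ k : ℕ, ∫⁻ ω, ENNReal.ofReal (Real.exp (t * Y ω - aa k * X ω)) ∂P ≤ 1 :=
      fun k => haamem k
    have hmeasf : ∀ k : ℕ, Measurable fun ω =>
        ENNReal.ofReal (Real.exp (t * Y ω - aa k * X ω)) :=
      fun k => ((hY.const_mul t).sub (hX.const_mul (aa k))).exp.ennreal_ofReal
    have hXpos0 : P {ω | 0 < X ω} = 0 := by
      have hliminf : ∫⁻ ω, Filter.liminf
          (fun k : ℕ => ENNReal.ofReal (Real.exp (t * Y ω - aa k * X ω))) atTop ∂P ≤ 1 :=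
        le_trans (lintegral_liminf_le hmeasf) (by
          apply Filter.liminf_le_of_le (by isBoundedDefault)
          intro b hb
          obtain ⟨k, hk⟩ := hb.exists
          exact le_trans hk (hfk k))
      have hptinf : ∀ ω : Ω, 0 < X ω → Filter.liminf
          (fun k : ℕ => ENNReal.ofReal (Real.exp (t * Y ω - aa k * X ω))) atTop = ∞ := by
        intro ω hpos
        apply Filter.Tendsto.liminf_eq
        apply tendsto_nhds_top_mono (f := fun k : ℕ =>
          ENNReal.ofReal (Real.exp (t * Y ω) * Real.exp (X ω) ^ (k:ℕ)))
        · apply ENNReal.tendsto_ofReal_atTop.comp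
          apply Filter.Tendsto.const_mul_atTop (Real.exp_pos _)
          exact tendsto_pow_atTop_atTop_of_one_lt (by
            rw [← Real.exp_zero]
            exact Real.exp_lt_exp.2 hpos)
        · filter_upwards with k
          apply ENNReal.ofReal_le_ofReal
          rw [← Real.exp_nat_mul, ← Real.exp_add]
          apply Real.exp_le_exp.2
          have : (k:ℝ) * X ω ≤ -aa k * X ω := by
            apply mul_le_mul_of_nonneg_right _ hpos.le
            have := haalt k
            linarith
          linarith
      have hlower : ∞ * P {ω | 0 < X ω} ≤ 1 := by
        calc ∞ * P {ω | 0 < X ω}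
            = ∫⁻ ω, Set.indicator {ω : Ω | 0 < X ω} (fun _ => (∞:ℝ≥0∞)) ω ∂P :=
              (lintegral_indicator_const (measurableSet_lt measurable_const hX) _).symm
          _ ≤ ∫⁻ ω, Filter.liminf
              (fun k : ℕ => ENNReal.ofReal (Real.exp (t * Y ω - aa k * X ω))) atTop ∂P := by
              apply lintegral_mono
              intro ω
              by_cases hω : 0 < X ω
              · rw [Set.indicator_of_mem (show ω ∈ {ω : Ω | 0 < X ω} from hω)]
                exact (hptinf ω hω).ge
              · rw [Set.indicator_of_notMem (show ω ∉ {ω : Ω | 0 < X ω} from hω)]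
                exact zero_le
          _ ≤ 1 := hliminf
      by_contra hne
      rw [ENNReal.top_mul hne] at hlower
      exact absurd hlower (by simp)
    have hXn0 : ∀ i : ℕ, P {ω | 0 < Xn i ω} = 0 := by
      intro i
      have hset : MeasurableSet {p : ℝ × ℝ | 0 < p.1} :=
        measurableSet_lt measurable_const measurable_fst
      have h1 : {ω : Ω | 0 < Xn i ω} = (fun ω => (Xn i ω, Yn i ω)) ⁻¹' {p : ℝ × ℝ | 0 < p.1} :=
        rfl
      have h2 : {ω : Ω | 0 < X ω} = (fun ω => (X ω, Y ω)) ⁻¹' {p : ℝ × ℝ | 0 < p.1} := rfl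
      rw [h1, ← Measure.map_apply ((hXn i).prodMk (hYn i)) hset, hiid i,
        Measure.map_apply (hX.prodMk hY) hset, ← h2, hXpos0]
    have haeneg : ∀ᵐ ω ∂P, ∀ i : ℕ, Xn i ω ≤ 0 := by
      rw [ae_all_iff]
      intro i
      have : {ω : Ω | ¬ Xn i ω ≤ 0} = {ω | 0 < Xn i ω} := by
        ext ω; simp [not_le]
      rw [ae_iff, this]
      exact hXn0 i
    haveI : (ae P).NeBot := ae_neBot.2 (IsProbabilityMeasure.ne_zero P)
    obtain ⟨ω, hgood, hneg⟩ := (hsup'.and haeneg).exists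
    obtain ⟨n, hn⟩ := hgood 0
    have : ∑ i ∈ Finset.range n, Xn i ω ≤ 0 :=
      Finset.sum_nonpos fun i _ => hneg i
    linarith

end Main6


/-- Lemma 6.2: upper bound for the exponential rate of `M_x(t)`. -/
theorem mgf_exponential_upper_bound
    {Ω : Type} [MeasurableSpace Ω] (P : Measure Ω) [IsProbabilityMeasure P]
    (X Y : Ω → ℝ) (Xn Yn : ℕ → Ω → ℝ)
    (hX : Measurable X) (hY : Measurable Y)
    (hXn : ∀ n, Measurable (Xn n)) (hYn : ∀ n, Measurable (Yn n))
    (hiid : ∀ n, Measure.map (fun ω => (Xn n ω, Yn n ω)) P = Measure.map (fun ω => (X ω, Y ω)) P)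
    (hindep : iIndepFun (fun n ω => (Xn n ω, Yn n ω)) P)
    (hXnondeg : ¬ ∃ c : ℝ, P {ω | X ω = c} = 1)
    (hYnondeg : ¬ ∃ c : ℝ, P {ω | Y ω = c} = 1)
    (hsup : P {ω | ∀ M : ℝ, ∃ n, M < ∑ i ∈ Finset.range n, Xn i ω} = 1)
    (t : ℝ)
    (hβ : betaX P X < (hfun P X Y t : EReal))
    (hne : (Dset P X Y t).Nonempty)
    (hint : (interior (Dset P X Y t)).Nonempty) :
    -- `x ↦ M_x(t)` is right-continuous on `[0, ∞)`
    (∀ x ≥ (0:ℝ), ContinuousWithinAt (fun u : ℝ => (MgfW P Xn Yn u t).toReal) (Set.Ici x) x) ∧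
    -- the exponential upper bound
    (∀ ε > (0:ℝ), hfun P X Y t + ε ∈ interior (Dset P X Y t) →
      (∃ K > (0:ℝ), ∀ x > (0:ℝ),
        MgfW P Xn Yn x t ≤ ENNReal.ofReal (K * Real.exp ((hfun P X Y t + ε) * x))) ∧
      -- the explicit constant `K_ε = H(h(t)) / (1 - ρ(t,ε))`
      ((0 ≤ hfun P X Y t ∨ ε < |hfun P X Y t|) → ∀ x > (0:ℝ),
        MgfW P Xn Yn x t ≤ ENNReal.ofReal
          ((((∫ ω, Real.exp (-(min 0 (hfun P X Y t)) * X ω) ∂P) + 1) /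
            (1 - ∫ ω, Real.exp (t * Y ω - (hfun P X Y t + ε) * X ω) ∂P)) *
            Real.exp ((hfun P X Y t + ε) * x)))) := by
  set h := hfun P X Y t with hh
  set c := max 0 (-h) with hcdef
  have hcneg : -(min 0 h) = c := by
    rcases le_total 0 h with h' | h'
    · rw [min_eq_left h', hcdef, max_eq_left (neg_nonpos.2 h')]
      ring
    · rw [min_eq_right h', hcdef, max_eq_right (neg_nonneg.2 h')]
  have hc0 : 0 ≤ c := le_max_left _ _
  have hsup' : ∀ᵐ ω ∂P, ∀ M : ℝ, ∃ n, M < ∑ i ∈ Finset.range n, Xn i ω := ae_good hXn hsup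
  have hA : ∫⁻ ω, ENNReal.ofReal (Real.exp (c * X ω)) ∂P < ∞ := by
    rw [hcdef]
    exact A_lt_top hX hβ
  set A := ∫⁻ ω, ENNReal.ofReal (Real.exp (c * X ω)) ∂P with hAdef
  -- generic final bound
  have hbound_final : ∀ s : ℝ, h < s → s ∈ interior (Dset P X Y t) →
      ∀ x : ℝ, 0 ≤ x → MgfW P Xn Yn x t ≤ ENNReal.ofReal
        (((A.toReal + 1) /
          (1 - (∫⁻ ω, ENNReal.ofReal (Real.exp (t * Y ω - s * X ω)) ∂P).toReal)) *
          Real.exp (s * x)) := by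
    intro s hs hsint x hx
    set ρ := ∫⁻ ω, ENNReal.ofReal (Real.exp (t * Y ω - s * X ω)) ∂P with hρdef
    have hρlt : ρ < 1 := rho_lt_one hX hY hXnondeg hsint
    have hρne : ρ ≠ ∞ := ne_top_of_lt (lt_of_lt_of_le hρlt le_top)
    have hρt : ρ.toReal < 1 := by
      have := ENNReal.toReal_strict_mono (by simp) hρlt
      simpa using this
    have hρt0 : 0 ≤ ρ.toReal := ENNReal.toReal_nonneg
    have hsc : -s ≤ c := by
      have h1 := le_max_right 0 (-h)
      rw [← hcdef] at h1
      linarith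
    have hb := mgf_bound hX hY hXn hYn hiid hindep hsup' t s c hc0 hsc hx
    rw [← hρdef, ← hAdef] at hb
    refine le_trans hb ?_
    have h1mρ : (1 : ℝ≥0∞) - ρ = ENNReal.ofReal (1 - ρ.toReal) := by
      rw [ENNReal.ofReal_sub _ hρt0, ENNReal.ofReal_one, ENNReal.ofReal_toReal hρne]
    have hinv : (1 - ρ)⁻¹ = ENNReal.ofReal ((1 - ρ.toReal)⁻¹) := by
      rw [h1mρ, ← ENNReal.ofReal_inv_of_pos (by linarith)]
    have hinv0 : (0:ℝ) ≤ (1 - ρ.toReal)⁻¹ := inv_nonneg.2 (by linarith)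
    rw [hinv, ← ENNReal.ofReal_toReal hA.ne,
      ← ENNReal.ofReal_mul hinv0, ← ENNReal.ofReal_mul (Real.exp_pos _).le]
    apply ENNReal.ofReal_le_ofReal
    calc Real.exp (s * x) * ((1 - ρ.toReal)⁻¹ * A.toReal)
        = (A.toReal * (1 - ρ.toReal)⁻¹) * Real.exp (s * x) := by ring
      _ ≤ ((A.toReal + 1) * (1 - ρ.toReal)⁻¹) * Real.exp (s * x) := by
          have : A.toReal * (1 - ρ.toReal)⁻¹ ≤ (A.toReal + 1) * (1 - ρ.toReal)⁻¹ :=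
            mul_le_mul_of_nonneg_right (by linarith) hinv0
          exact mul_le_mul_of_nonneg_right this (Real.exp_pos _).le
      _ = ((A.toReal + 1) / (1 - ρ.toReal)) * Real.exp (s * x) := by
          rw [div_eq_mul_inv]
      _ = (((ENNReal.ofReal A.toReal).toReal + 1) / (1 - ρ.toReal)) * Real.exp (s * x) := by
          rw [ENNReal.toReal_ofReal ENNReal.toReal_nonneg]
  constructor
  · -- right-continuity
    intro x hx
    obtain ⟨s, hs_gt, hs_int⟩ := exists_interior_gt hX hY hXn hYn hiid hsup' t hint
    have hρlt : (∫⁻ ω, ENNReal.ofReal (Real.exp (t * Y ω - s * X ω)) ∂P) < 1 :=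
      rho_lt_one hX hY hXnondeg hs_int
    have hsc : -s ≤ c := by
      have h1 := le_max_right 0 (-h)
      rw [← hcdef] at h1
      linarith
    set G : Ω → ℝ≥0∞ := fun ω => ∑' n : ℕ, (∏ i ∈ Finset.range n,
        ENNReal.ofReal (Real.exp (t * Yn i ω - s * Xn i ω))) *
        ENNReal.ofReal (Real.exp (c * Xn n ω)) with hGdef
    have hGmeas : Measurable G := by
      apply Measurable.ennreal_tsum
      intro n
      apply Measurable.mul
      · exact Finset.measurable_prod _ fun i _ =>
          (((hYn i).const_mul t).sub ((hXn i).const_mul s)).exp.ennreal_ofReal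
      · exact ((hXn n).const_mul c).exp.ennreal_ofReal
    have hGint : ∫⁻ ω, G ω ∂P =
        (1 - ∫⁻ ω, ENNReal.ofReal (Real.exp (t * Y ω - s * X ω)) ∂P)⁻¹ * A :=
      lintegral_G hX hY hXn hYn hiid hindep t s c
    have hDCT : Tendsto (fun u : ℝ => MgfW P Xn Yn u t) (nhdsWithin x (Set.Ici x))
        (nhds (MgfW P Xn Yn x t)) := by
      apply tendsto_lintegral_filter_of_dominated_convergence
        (fun ω => ENNReal.ofReal (Real.exp (|s| * (x+1))) * G ω)
      · filter_upwards with u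
        exact ((measurable_WW hXn hYn u).const_mul t).exp.ennreal_ofReal
      · have hev1 : ∀ᶠ u : ℝ in nhdsWithin x (Set.Ici x), u ∈ Set.Ici x :=
          eventually_mem_nhdsWithin
        have hev2 : ∀ᶠ u : ℝ in nhdsWithin x (Set.Ici x), u < x + 1 :=
          eventually_nhdsWithin_of_eventually_nhds
            (eventually_of_mem (Iio_mem_nhds (by linarith)) fun u hu => hu)
        filter_upwards [hev1, hev2] with u hu1 hu2
        filter_upwards [hsup'] with ω hgood
        have hux : 0 ≤ u := le_trans hx hu1
        calc ENNReal.ofReal (Real.exp (t * WW Xn Yn u ω))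
            ≤ ENNReal.ofReal (Real.exp (s * u)) *
              ((∏ i ∈ Finset.range (NN Xn u ω),
                  ENNReal.ofReal (Real.exp (t * Yn i ω - s * Xn i ω))) *
                ENNReal.ofReal (Real.exp (c * Xn (NN Xn u ω) ω))) :=
              pointwise_core t s c u hc0 hsc hux (hgood u)
          _ ≤ ENNReal.ofReal (Real.exp (|s| * (x+1))) * G ω := by
              apply mul_le_mul'
              · apply ENNReal.ofReal_le_ofReal
                apply Real.exp_le_exp.2
                calc s * u ≤ |s * u| := le_abs_self _
                  _ = |s| * |u| := abs_mul _ _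
                  _ ≤ |s| * (x + 1) := by
                      apply mul_le_mul_of_nonneg_left _ (abs_nonneg s)
                      rw [abs_of_nonneg hux]
                      linarith
              · exact ENNReal.le_tsum (NN Xn u ω)
      · rw [lintegral_const_mul _ hGmeas, hGint]
        apply ENNReal.mul_ne_top ENNReal.ofReal_ne_top
        apply ENNReal.mul_ne_top
        · rw [ENNReal.inv_ne_top]
          exact (tsub_pos_of_lt hρlt).ne'
        · exact hA.ne
      · filter_upwards [hsup'] with ω hgood
        obtain ⟨h1, h2⟩ := NN_spec hx (hgood x)
        set n := NN Xn x ω with hn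
        set δ := (∑ i ∈ Finset.range (n+1), Xn i ω) - x with hδdef
        have hδ : 0 < δ := by rw [hδdef]; linarith
        have hconst : ∀ᶠ u : ℝ in nhdsWithin x (Set.Ici x), WW Xn Yn u ω = WW Xn Yn x ω := by
          have hev1 : ∀ᶠ u : ℝ in nhdsWithin x (Set.Ici x), u ∈ Set.Ici x :=
            eventually_mem_nhdsWithin
          have hev2 : ∀ᶠ u : ℝ in nhdsWithin x (Set.Ici x), u < x + δ :=
            eventually_nhdsWithin_of_eventually_nhds
              (eventually_of_mem (Iio_mem_nhds (by linarith)) fun u hu => hu)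
          filter_upwards [hev1, hev2] with u hu1 hu2
          have hNNu : NN Xn u ω = n := by
            apply NN_eq_of_greatest
            · intro j hj
              exact le_trans (h1 j hj) hu1
            · push_neg
              rw [show (∑ i ∈ Finset.range (n+1), Xn i ω) = x + δ by rw [hδdef]; ring]
              exact hu2
          rw [WW, WW, hNNu, ← hn]
        apply Filter.Tendsto.congr' (hconst.mono fun u hu => by rw [hu])
        exact tendsto_const_nhds
    have hfin : MgfW P Xn Yn x t ≠ ∞ := by
      apply ne_top_of_le_ne_top _ (hbound_final s hs_gt hs_int x hx)
      exact ENNReal.ofReal_ne_top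
    exact (ENNReal.tendsto_toReal hfin).comp hDCT
  · -- exponential bound
    intro ε hε hmem
    set s := h + ε with hsdef
    have hs_gt : h < s := by rw [hsdef]; linarith
    set ρ := ∫⁻ ω, ENNReal.ofReal (Real.exp (t * Y ω - s * X ω)) ∂P with hρdef
    have hρlt : ρ < 1 := rho_lt_one hX hY hXnondeg hmem
    have hρne : ρ ≠ ∞ := ne_top_of_lt (lt_of_lt_of_le hρlt le_top)
    have hρt : ρ.toReal < 1 := by
      have := ENNReal.toReal_strict_mono (by simp) hρlt
      simpa using this
    -- identify real integrals
    have hreal_rho : ∫ ω, Real.exp (t * Y ω - s * X ω) ∂P = ρ.toReal := by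
      rw [hρdef, integral_eq_lintegral_of_nonneg_ae (ae_of_all _ fun ω => (Real.exp_pos _).le)
        (show AEStronglyMeasurable (fun ω => Real.exp (t * Y ω - s * X ω)) P from
          ((hY.const_mul t).sub (hX.const_mul s)).exp.aestronglyMeasurable)]
    have hreal_A : ∫ ω, Real.exp (c * X ω) ∂P = A.toReal := by
      rw [hAdef, integral_eq_lintegral_of_nonneg_ae (ae_of_all _ fun ω => (Real.exp_pos _).le)
        (show AEStronglyMeasurable (fun ω => Real.exp (c * X ω)) P from
          ((hX.const_mul c)).exp.aestronglyMeasurable)]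
    have hgoal : ∀ x > (0:ℝ), MgfW P Xn Yn x t ≤ ENNReal.ofReal
        ((((∫ ω, Real.exp (-(min 0 h) * X ω) ∂P) + 1) /
          (1 - ∫ ω, Real.exp (t * Y ω - s * X ω) ∂P)) * Real.exp (s * x)) := by
      intro x hxpos
      have := hbound_final s hs_gt hmem x hxpos.le
      rw [← hρdef] at this
      refine le_trans this (le_of_eq ?_)
      congr 1
      rw [hreal_rho]
      congr 2
      rw [hcneg, hreal_A]
    refine ⟨⟨(((∫ ω, Real.exp (-(min 0 h) * X ω) ∂P) + 1) /
        (1 - ∫ ω, Real.exp (t * Y ω - s * X ω) ∂P)), ?_, hgoal⟩, fun _ => hgoal⟩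
    -- positivity of the constant
    apply div_pos
    · have : 0 ≤ ∫ ω, Real.exp (-(min 0 h) * X ω) ∂P :=
        integral_nonneg fun ω => (Real.exp_pos _).le
      linarith
    · rw [hreal_rho]
      linarith
end
end
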